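/- arXiv:1501.04275 — 2 statements merged into one kernel-verified Lean document; each statement's English description precedes it below -/
import Mathlib

section
/- Let J = S \ {s_{i-1}, s_i} and u, v ∈ (S_n)^J with u ≤ v and u^{-1}(i) ≤ v^{-1}(i). With D̃(u,v) = v^{-1}([i-1]) \ u^{-1}([i-1]) and ã_j(u,v) = |{r ∈ u^{-1}([i-1]) : r < j}| − |{r ∈ v^{-1}([i-1]) : r < j}|, one has R^{J,q}_{u,v}(q) = (−1)^{ℓ(v)−ℓ(u)} (1 − q + c·q^{1 + ã_{v^{-1}(i)}(u,v)}) ∏_{j ∈ D̃(u,v)} (1 − q^{ã_j(u,v)}), where c = 1 if u^{-1}(i) = v^{-1}(i) and c = 0 otherwise. -/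
open Finset Polynomial

/-- The inversion number (Coxeter length) of a permutation of `ℕ`, counted on `{1, …, n}`. -/
def invNum (n : ℕ) (u : Equiv.Perm ℕ) : ℕ :=
  (((Finset.Icc 1 n) ×ˢ (Finset.Icc 1 n)).filter
    (fun p => p.1 < p.2 ∧ u p.2 < u p.1)).card

/-- `u` is a member of `S_n`: it fixes every point outside `{1, …, n}`. -/
def IsPermOn (n : ℕ) (u : Equiv.Perm ℕ) : Prop :=
  ∀ m, m ∉ Finset.Icc 1 n → u m = m

/-- The adjacent transposition `s_i`, interchanging `i` and `i + 1`. -/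
def sAdj (i : ℕ) : Equiv.Perm ℕ := Equiv.swap i (i + 1)

/-- The Bruhat order on `S_n`: `u ≤ v` iff `v` is obtained from `u` by successively
multiplying on the right by transpositions, increasing the length at each step. -/
def BruhatLE (n : ℕ) (u v : Equiv.Perm ℕ) : Prop :=
  Relation.ReflTransGen
    (fun a b => invNum n a < invNum n b ∧
      ∃ i j, 1 ≤ i ∧ i < j ∧ j ≤ n ∧ b = a * Equiv.swap i j) u v

/-- `(S_n)^J`, the minimal coset representatives, where `J = S \ {s_e : e ∈ E}`. -/
def MinReps (n : ℕ) (E : Set ℕ) (u : Equiv.Perm ℕ) : Prop :=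
  ∀ j, 1 ≤ j → j ≤ n - 1 → j ∉ E → invNum n u < invNum n (sAdj j * u)

/-- `|{r ∈ u⁻¹([m]) : r < j}|`, the number of positions `r < j` of `u` holding
an element of `{1, …, m}`. -/
def posLT (n m j : ℕ) (u : Equiv.Perm ℕ) : ℕ :=
  ((Finset.Icc 1 n).filter (fun r => r < j ∧ u r ∈ Finset.Icc 1 m)).card

/-- Deodhar's recursion with `x = q` for the parabolic `R`-polynomials of `S_n`,
for `J = S \ {s_e : e ∈ E}`. -/
def IsRFamilyQ (n : ℕ) (E : Set ℕ)
    (R : Equiv.Perm ℕ → Equiv.Perm ℕ → Polynomial ℤ) : Prop :=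
  (∀ u v, MinReps n E u → MinReps n E v → ¬ BruhatLE n u v → R u v = 0) ∧
  (∀ u, MinReps n E u → R u u = 1) ∧
  (∀ u v, MinReps n E u → MinReps n E v → BruhatLE n u v → u ≠ v →
    ∀ j, 1 ≤ j → j ≤ n - 1 → v (j + 1) < v j →
      ((u (j + 1) < u j → R u v = R (u * sAdj j) (v * sAdj j)) ∧
       (¬ u (j + 1) < u j → MinReps n E (u * sAdj j) →
          R u v = X * R (u * sAdj j) (v * sAdj j) + (X - 1) * R u (v * sAdj j)) ∧
       (¬ u (j + 1) < u j → ¬ MinReps n E (u * sAdj j) →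
          R u v = - R u (v * sAdj j))))


namespace Brenti

variable {n : ℕ}

lemma isPermOn_mem_iff {u : Equiv.Perm ℕ} (hu : IsPermOn n u) {x : ℕ} :
    u x ∈ Finset.Icc 1 n ↔ x ∈ Finset.Icc 1 n := by
  constructor
  · intro h
    by_contra hx
    rw [hu x hx] at h
    exact hx h
  · intro hx
    by_contra h
    have h2 : u (u x) = u x := hu (u x) h
    have h3 := u.injective h2
    rw [h3] at h
    exact h hx

lemma isPermOn_symm' {u : Equiv.Perm ℕ} (hu : IsPermOn n u) : IsPermOn n u.symm := by
  intro m hm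
  have h1 : u m = m := hu m hm
  conv_lhs => rw [← h1]
  exact u.symm_apply_apply m

lemma isPermOn_symm_mem_iff {u : Equiv.Perm ℕ} (hu : IsPermOn n u) {x : ℕ} :
    u.symm x ∈ Finset.Icc 1 n ↔ x ∈ Finset.Icc 1 n :=
  isPermOn_mem_iff (isPermOn_symm' hu)

lemma isPermOn_inv' {u : Equiv.Perm ℕ} (hu : IsPermOn n u) : IsPermOn n u⁻¹ := (isPermOn_symm' hu)

lemma isPermOn_mul' {u v : Equiv.Perm ℕ} (hu : IsPermOn n u) (hv : IsPermOn n v) :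
    IsPermOn n (u * v) := by
  intro m hm
  simp only [Equiv.Perm.mul_apply, hv m hm, hu m hm]

lemma isPermOn_swap {a b : ℕ} (ha : a ∈ Finset.Icc 1 n) (hb : b ∈ Finset.Icc 1 n) :
    IsPermOn n (Equiv.swap a b) := by
  intro m hm
  apply Equiv.swap_apply_of_ne_of_ne
  · rintro rfl; exact hm ha
  · rintro rfl; exact hm hb

lemma isPermOn_sAdj {j : ℕ} (h1 : 1 ≤ j) (h2 : j + 1 ≤ n) : IsPermOn n (sAdj j) :=
  isPermOn_swap (by simp; omega) (by simp; omega)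

/-- The inversion set. -/
def invSet (n : ℕ) (u : Equiv.Perm ℕ) : Finset (ℕ × ℕ) :=
  (((Finset.Icc 1 n) ×ˢ (Finset.Icc 1 n)).filter
    (fun p => p.1 < p.2 ∧ u p.2 < u p.1))

lemma invNum_eq (n : ℕ) (u : Equiv.Perm ℕ) : invNum n u = (invSet n u).card := rfl

lemma swap_succ_lt {k c d : ℕ} (h1 : ¬(c = k ∧ d = k+1)) (h2 : ¬(d = k ∧ c = k+1)) :
    ((Equiv.swap k (k+1)) c < (Equiv.swap k (k+1)) d ↔ c < d) := by
  simp only [Equiv.swap_apply_def]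
  split_ifs <;> omega

/-- Exact length increase for a left multiplication by an adjacent transposition. -/
lemma invNum_sAdj_mul {u : Equiv.Perm ℕ} (hu : IsPermOn n u) {k : ℕ}
    (hk1 : 1 ≤ k) (hk2 : k + 1 ≤ n) (h : u.symm k < u.symm (k+1)) :
    invNum n (sAdj k * u) = invNum n u + 1 := by
  set a := u.symm k with ha
  set b := u.symm (k+1) with hb
  have hua : u a = k := u.apply_symm_apply k
  have hub : u b = k + 1 := u.apply_symm_apply (k+1)
  have haI : a ∈ Finset.Icc 1 n := by
    rw [← isPermOn_mem_iff hu, hua]; simp; omega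
  have hbI : b ∈ Finset.Icc 1 n := by
    rw [← isPermOn_mem_iff hu, hub]; simp; omega
  have hnot : (a, b) ∉ invSet n u := by
    simp only [Finset.mem_coe, invSet.eq_1, mem_filter, mem_product, not_and]
    intro _ _
    omega
  have hset : invSet n (sAdj k * u) = insert (a,b) (invSet n u) := by
    ext ⟨x,y⟩
    simp only [Finset.mem_coe, invSet.eq_1, mem_insert, mem_filter, mem_product]
    simp only [Finset.mem_coe, invSet.eq_1, mem_insert, mem_filter, mem_product, Equiv.Perm.mul_apply,
      Prod.mk.injEq, sAdj]
    constructor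
    · rintro ⟨⟨hx, hy⟩, hxy, hlt⟩
      by_cases hc : x = a ∧ y = b
      · exact Or.inl hc
      · right
        refine ⟨⟨hx, hy⟩, hxy, ?_⟩
        rw [swap_succ_lt ?_ ?_] at hlt
        · exact hlt
        · rintro ⟨e1, e2⟩
          -- u y = k, u x = k+1 : y = a, x = b : contradiction with x < y and a < b
          have : y = a := by rw [ha, ← e1]; exact (u.symm_apply_apply y).symm
          have : x = b := by rw [hb, ← e2]; exact (u.symm_apply_apply x).symm
          omega
        · rintro ⟨e1, e2⟩
          have hya : x = a := by rw [ha, ← e1]; exact (u.symm_apply_apply x).symm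
          have hxb : y = b := by rw [hb, ← e2]; exact (u.symm_apply_apply y).symm
          exact hc ⟨hya, hxb⟩
    · rintro (⟨rfl, rfl⟩ | ⟨⟨hx, hy⟩, hxy, hlt⟩)
      · refine ⟨⟨haI, hbI⟩, h, ?_⟩
        rw [hua, hub]
        rw [Equiv.swap_apply_right, Equiv.swap_apply_left]
        omega
      · refine ⟨⟨hx, hy⟩, hxy, ?_⟩
        rw [swap_succ_lt ?_ ?_]
        · exact hlt
        · rintro ⟨e1, e2⟩
          have : y = a := by rw [ha, ← e1]; exact (u.symm_apply_apply y).symm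
          have : x = b := by rw [hb, ← e2]; exact (u.symm_apply_apply x).symm
          omega
        · rintro ⟨e1, e2⟩
          have hxa : x = a := by rw [ha, ← e1]; exact (u.symm_apply_apply x).symm
          have hyb : y = b := by rw [hb, ← e2]; exact (u.symm_apply_apply y).symm
          rw [hxa, hyb] at hlt
          omega
  rw [invNum_eq, invNum_eq, hset, Finset.card_insert_of_notMem hnot]

lemma invNum_sAdj_mul' {u : Equiv.Perm ℕ} (hu : IsPermOn n u) {k : ℕ}
    (hk1 : 1 ≤ k) (hk2 : k + 1 ≤ n) (h : u.symm (k+1) < u.symm k) :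
    invNum n (sAdj k * u) + 1 = invNum n u := by
  have hs : IsPermOn n (sAdj k * u) := isPermOn_mul' (isPermOn_sAdj hk1 hk2) hu
  have h1 : (sAdj k * u).symm k < (sAdj k * u).symm (k+1) := by
    have e1 : (sAdj k * u).symm k = u.symm (k+1) := by
      have h0 : (sAdj k * u).symm k = u.symm ((sAdj k).symm k) := rfl
      rw [h0]
      congr 1
      simp [sAdj, Equiv.symm_swap, Equiv.swap_apply_left]
    have e2 : (sAdj k * u).symm (k+1) = u.symm k := by
      have h0 : (sAdj k * u).symm (k+1) = u.symm ((sAdj k).symm (k+1)) := rfl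
      rw [h0]
      congr 1
      simp [sAdj, Equiv.symm_swap, Equiv.swap_apply_right]
    rw [e1, e2]; exact h
  have := invNum_sAdj_mul hs hk1 hk2 h1
  have e3 : sAdj k * (sAdj k * u) = u := by
    rw [← mul_assoc]
    simp [sAdj, Equiv.swap_mul_self]
  rw [e3] at this
  omega

lemma invNum_inv {u : Equiv.Perm ℕ} (hu : IsPermOn n u) :
    invNum n u⁻¹ = invNum n u := by
  rw [invNum_eq, invNum_eq]
  apply Finset.card_nbij' (fun p => (u.symm p.2, u.symm p.1)) (fun p => (u p.2, u p.1))
  · rintro ⟨x, y⟩ hm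
    simp only [Finset.mem_coe, invSet.eq_1, mem_filter, mem_product] at hm ⊢
    obtain ⟨⟨hx, hy⟩, hxy, hlt⟩ := hm
    have h1 : u⁻¹ y = u.symm y := rfl
    have h2 : u⁻¹ x = u.symm x := rfl
    rw [h1, h2] at hlt
    refine ⟨⟨(isPermOn_symm_mem_iff hu).2 hy, (isPermOn_symm_mem_iff hu).2 hx⟩, hlt, ?_⟩
    simp [hxy]
  · rintro ⟨x, y⟩ hm
    simp only [Finset.mem_coe, invSet.eq_1, mem_filter, mem_product] at hm ⊢
    obtain ⟨⟨hx, hy⟩, hxy, hlt⟩ := hm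
    refine ⟨⟨(isPermOn_mem_iff hu).2 hy, (isPermOn_mem_iff hu).2 hx⟩, hlt, ?_⟩
    show u⁻¹ (u x) < u⁻¹ (u y)
    simp [hxy]
  · rintro ⟨x, y⟩ _; simp
  · rintro ⟨x, y⟩ _; simp

lemma invNum_mul_sAdj {u : Equiv.Perm ℕ} (hu : IsPermOn n u) {j : ℕ}
    (hj1 : 1 ≤ j) (hj2 : j + 1 ≤ n) (h : u j < u (j+1)) :
    invNum n (u * sAdj j) = invNum n u + 1 := by
  have hs : IsPermOn n (u * sAdj j) := isPermOn_mul' hu (isPermOn_sAdj hj1 hj2)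
  have e1 : (u * sAdj j)⁻¹ = sAdj j * u⁻¹ := by
    rw [mul_inv_rev]
    congr 1
  have h2 : (u⁻¹ : Equiv.Perm ℕ).symm j < (u⁻¹ : Equiv.Perm ℕ).symm (j+1) := by
    simpa [Equiv.Perm.inv_def] using h
  have := invNum_sAdj_mul (isPermOn_inv' hu) hj1 hj2 h2
  rw [← e1] at this
  rw [invNum_inv hs] at this
  rw [this, invNum_inv hu]

lemma invNum_mul_sAdj' {u : Equiv.Perm ℕ} (hu : IsPermOn n u) {j : ℕ}
    (hj1 : 1 ≤ j) (hj2 : j + 1 ≤ n) (h : u (j+1) < u j) :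
    invNum n (u * sAdj j) + 1 = invNum n u := by
  have hs : IsPermOn n (u * sAdj j) := isPermOn_mul' hu (isPermOn_sAdj hj1 hj2)
  have h1 : (u * sAdj j) j < (u * sAdj j) (j+1) := by
    simp only [Equiv.Perm.mul_apply, sAdj, Equiv.swap_apply_left, Equiv.swap_apply_right]
    exact h
  have := invNum_mul_sAdj hs hj1 hj2 h1
  have e3 : (u * sAdj j) * sAdj j = u := by
    rw [mul_assoc]
    simp [sAdj, Equiv.swap_mul_self]
  rw [e3] at this
  omega

end Brenti
namespace Brenti

variable {n : ℕ}

lemma swap_flip_iff {x y c d : ℕ} (hxy : x < y) (hcd : c < d) :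
    ((Equiv.swap x y) d < (Equiv.swap x y) c ↔ ((c = x ∧ d ≤ y) ∨ (x < c ∧ d = y))) := by
  simp only [Equiv.swap_apply_def]
  split_ifs <;> omega

/-- The inversion set of the transposition `swap x y` itself. -/
lemma invSet_swap {x y : ℕ} (hx : 1 ≤ x) (hxy : x < y) (hy : y ≤ n) :
    invSet n (Equiv.swap x y) =
      ((Finset.Ioc x y).image fun z => (x, z)) ∪ ((Finset.Ioo x y).image fun z => (z, y)) := by
  ext ⟨c, d⟩
  simp only [Finset.mem_coe, invSet.eq_1, mem_filter, mem_product, mem_union, mem_image, mem_Ioc, mem_Ioo,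
    Prod.mk.injEq, Finset.mem_Icc]
  constructor
  · rintro ⟨⟨hc, hd⟩, hcd, hlt⟩
    rw [swap_flip_iff hxy hcd] at hlt
    rcases hlt with ⟨rfl, hdy⟩ | ⟨hxc, rfl⟩
    · exact Or.inl ⟨d, ⟨hcd, hdy⟩, rfl, rfl⟩
    · exact Or.inr ⟨c, ⟨hxc, hcd⟩, rfl, rfl⟩
  · rintro (⟨z, ⟨hz1, hz2⟩, rfl, rfl⟩ | ⟨z, ⟨hz1, hz2⟩, rfl, rfl⟩)
    · refine ⟨⟨⟨hx, by omega⟩, ⟨by omega, by omega⟩⟩, hz1, ?_⟩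
      rw [swap_flip_iff hxy hz1]
      exact Or.inl ⟨rfl, hz2⟩
    · refine ⟨⟨⟨by omega, by omega⟩, ⟨by omega, hy⟩⟩, hz2, ?_⟩
      rw [swap_flip_iff hxy hz2]
      exact Or.inr ⟨hz1, rfl⟩

lemma card_invSet_swap {x y : ℕ} (hx : 1 ≤ x) (hxy : x < y) (hy : y ≤ n) :
    (invSet n (Equiv.swap x y)).card = 2 * (y - x) - 1 := by
  rw [invSet_swap hx hxy hy]
  rw [Finset.card_union_of_disjoint]
  · rw [Finset.card_image_of_injective _ (by intro a b h; exact (Prod.mk.injEq _ _ _ _ ▸ h).2),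
      Finset.card_image_of_injective _ (by intro a b h; exact (Prod.mk.injEq _ _ _ _ ▸ h).1)]
    rw [Nat.card_Ioc, Nat.card_Ioo]
    omega
  · rw [Finset.disjoint_left]
    rintro ⟨c, d⟩ h1 h2
    simp only [mem_image, mem_Ioc, mem_Ioo, Prod.mk.injEq] at h1 h2
    obtain ⟨z, ⟨hz1, _⟩, hzc, _⟩ := h1
    obtain ⟨w, ⟨hw1, _⟩, hwc, _⟩ := h2
    omega

lemma hσσ_aux (t : Equiv.Perm ℕ) (htinv : ∀ z, t (t z) = z)
    (σ : ℕ × ℕ → ℕ × ℕ)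
    (hσ : σ = fun p => if t p.1 < t p.2 then (t p.1, t p.2) else (t p.2, t p.1))
    (c d : ℕ) (hcd : c < d) : σ (σ (c, d)) = (c, d) := by
  by_cases h1 : t c < t d
  · have e1 : σ (c, d) = (t c, t d) := by rw [hσ]; simp only; rw [if_pos h1]
    rw [e1, hσ]
    simp only
    rw [htinv, htinv, if_pos hcd]
  · have e1 : σ (c, d) = (t d, t c) := by rw [hσ]; simp only; rw [if_neg h1]
    rw [e1, hσ]
    simp only
    rw [htinv, htinv, if_neg (by omega)]

/-- Key length lemma: right multiplication by a transposition in "increasing position"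
strictly increases the inversion number. -/
lemma invNum_lt_mul_swap {u : Equiv.Perm ℕ} {x y : ℕ}
    (hx : 1 ≤ x) (hxy : x < y) (hy : y ≤ n) (h : u x < u y) :
    invNum n u < invNum n (u * Equiv.swap x y) := by
  set t := Equiv.swap x y with ht
  set S := invSet n u with hS
  set F := invSet n t with hF
  set S' := invSet n (u * t) with hS'
  have htinv : ∀ z, t (t z) = z := fun z => Equiv.swap_apply_self x y z
  have htI : ∀ {z}, z ∈ Finset.Icc 1 n → t z ∈ Finset.Icc 1 n := by
    intro z hz
    simp only [ht, Equiv.swap_apply_def]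
    split_ifs <;> simp_all <;> omega
  -- the reordering involution
  set σ : ℕ × ℕ → ℕ × ℕ := fun p => if t p.1 < t p.2 then (t p.1, t p.2) else (t p.2, t p.1)
    with hσ
  -- key cardinality identity
  have hcard : S'.card = (S \ F).card + (F \ S).card := by
    have hd : Disjoint (S \ F) (F \ S) := disjoint_sdiff_sdiff
    rw [← Finset.card_union_of_disjoint hd]
    apply Finset.card_nbij' σ σ
    · rintro ⟨c, d⟩ hm
      simp only [Finset.mem_coe, hS', invSet.eq_1, mem_filter, mem_product] at hm
      simp only [Finset.mem_coe, hS', invSet.eq_1, mem_filter, mem_product, Equiv.Perm.mul_apply] at hm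
      obtain ⟨⟨hc, hd⟩, hcd, hlt⟩ := hm
      simp only [Finset.mem_coe, mem_union, mem_sdiff, hσ]
      have hne : t c ≠ t d := fun e => by have := t.injective e; omega
      rcases lt_or_gt_of_ne hne with hor | hor
      case _ =>
        rw [if_pos hor]
        left
        constructor
        · simp only [Finset.mem_coe, hS, invSet.eq_1, mem_filter, mem_product]
          exact ⟨⟨htI hc, htI hd⟩, hor, hlt⟩
        · simp only [Finset.mem_coe, hF, invSet.eq_1, mem_filter, mem_product, not_and]
          intro _ _
          rw [htinv, htinv]
          omega
      case _ =>
        rw [if_neg (by omega)]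
        right
        constructor
        · simp only [Finset.mem_coe, hF, invSet.eq_1, mem_filter, mem_product]
          refine ⟨⟨htI hd, htI hc⟩, hor, ?_⟩
          rw [htinv, htinv]
          exact hcd
        · simp only [Finset.mem_coe, hS, invSet.eq_1, mem_filter, mem_product, not_and]
          intro _ _ _
          omega
    · rintro ⟨c, d⟩ hm
      simp only [Finset.mem_coe, mem_union, mem_sdiff, hS, hF, invSet.eq_1, mem_filter, mem_product] at hm
      simp only [Finset.mem_coe, hS', invSet.eq_1, mem_filter, mem_product, hσ]
      simp only [Finset.mem_coe, hS', invSet.eq_1, mem_filter, mem_product, Equiv.Perm.mul_apply, hσ]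
      rcases hm with ⟨⟨⟨hc, hd⟩, hcd, hlt⟩, hnF⟩ | ⟨⟨⟨hc, hd⟩, hcd, hlt⟩, hnS⟩
      · -- c < d, u d < u c, not flipped by t : t c < t d
        have hne : t c ≠ t d := fun e => by have := t.injective e; omega
        have hord : t c < t d := by
          rcases lt_or_gt_of_ne hne with h1 | h1
          · exact h1
          · exfalso
            exact hnF ⟨⟨hc, hd⟩, hcd, h1⟩
        rw [if_pos hord]
        refine ⟨⟨htI hc, htI hd⟩, hord, ?_⟩
        rw [htinv, htinv]
        exact hlt
      · -- c < d, t d < t c (flipped), and not an inversion of u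
        have hne : u c ≠ u d := fun e => by have := u.injective e; omega
        have hord : u c < u d := by
          rcases lt_or_gt_of_ne hne with h1 | h1
          · exact h1
          · exact absurd ⟨⟨hc, hd⟩, hcd, h1⟩ hnS
        rw [if_neg (by omega)]
        refine ⟨⟨htI hd, htI hc⟩, hlt, ?_⟩
        rw [htinv, htinv]
        exact hord
    · rintro ⟨c, d⟩ hm
      simp only [Finset.mem_coe, hS', invSet.eq_1, mem_filter, mem_product] at hm
      obtain ⟨⟨hc, hd⟩, hcd, _⟩ := hm
      exact hσσ_aux t htinv σ hσ c d hcd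
    · rintro ⟨c, d⟩ hm
      simp only [Finset.mem_coe, mem_union, mem_sdiff, hS, hF, invSet.eq_1, mem_filter, mem_product] at hm
      have hcd : c < d := by rcases hm with ⟨⟨_, h, _⟩, _⟩ | ⟨⟨_, h, _⟩, _⟩ <;> exact h
      exact hσσ_aux t htinv σ hσ c d hcd
  -- |S ∩ F| ≤ y - x - 1
  have hSF : (S ∩ F).card ≤ y - x - 1 := by
    have : (S ∩ F).card ≤ (Finset.Ioo x y).card := by
      apply Finset.card_le_card_of_injOn (fun q => if q.1 = x then q.2 else q.1)
      · rintro ⟨c, d⟩ hm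
        rw [Finset.mem_coe, mem_inter] at hm
        obtain ⟨hmS, hmF⟩ := hm
        rw [hF, invSet_swap hx hxy hy] at hmF
        simp only [Finset.mem_coe, mem_union, mem_image, mem_Ioc, mem_Ioo, Prod.mk.injEq] at hmF
        simp only [Finset.mem_coe, hS, invSet.eq_1, mem_filter, mem_product] at hmS
        obtain ⟨_, hcd, hlt⟩ := hmS
        rcases hmF with ⟨z, ⟨hz1, hz2⟩, he1, he2⟩ | ⟨z, ⟨hz1, hz2⟩, he1, he2⟩
        · subst he1; subst he2
          simp only [Finset.mem_coe, if_pos rfl, mem_Ioo]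
          -- (x, z) ∈ S : u z < u x; if z = y contradiction with u x < u y
          refine ⟨hz1, ?_⟩
          rcases Nat.lt_or_ge z y with h1 | h1
          · exact h1
          · exfalso
            have : z = y := by omega
            subst this
            omega
        · subst he1; subst he2
          simp only [Finset.mem_coe]; rw [if_neg (by omega)]
          simp only [mem_Ioo]
          exact ⟨hz1, hz2⟩
      · rintro ⟨c, d⟩ hm ⟨c', d'⟩ hm' he
        rw [mem_coe, mem_inter] at hm hm'
        obtain ⟨hmS, hmF⟩ := hm
        obtain ⟨hmS', hmF'⟩ := hm'
        rw [hF, invSet_swap hx hxy hy] at hmF hmF'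
        simp only [Finset.mem_coe, mem_union, mem_image, mem_Ioc, mem_Ioo, Prod.mk.injEq] at hmF hmF'
        simp only [Finset.mem_coe, hS, invSet.eq_1, mem_filter, mem_product] at hmS hmS'
        obtain ⟨_, hcd, hlt⟩ := hmS
        obtain ⟨_, hcd', hlt'⟩ := hmS'
        simp only at he
        rcases hmF with ⟨z, ⟨hz1, hz2⟩, he1, he2⟩ | ⟨z, ⟨hz1, hz2⟩, he1, he2⟩ <;>
          rcases hmF' with ⟨w, ⟨hw1, hw2⟩, hf1, hf2⟩ | ⟨w, ⟨hw1, hw2⟩, hf1, hf2⟩ <;>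
          subst he1 <;> subst he2 <;> subst hf1 <;> subst hf2
        · rw [if_pos rfl, if_pos rfl] at he
          rw [he]
        · rw [if_pos rfl, if_neg (by omega)] at he
          exfalso
          subst he
          omega
        · rw [if_neg (by omega), if_pos rfl] at he
          exfalso
          subst he
          omega
        · rw [if_neg (by omega), if_neg (by omega)] at he
          rw [he]
    rw [Nat.card_Ioo] at this
    omega
  have hF2 : F.card = 2 * (y - x) - 1 := card_invSet_swap hx hxy hy
  have e1 : (S \ F).card + (S ∩ F).card = S.card := Finset.card_sdiff_add_card_inter S F
  have e2 : (F \ S).card + (F ∩ S).card = F.card := Finset.card_sdiff_add_card_inter F S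
  rw [Finset.inter_comm] at e2
  rw [invNum_eq, invNum_eq, ← hS, ← hS', hcard]
  omega

end Brenti
namespace Brenti

variable {n : ℕ}

/-- The dominance counting matrix `N_w(k,l) = #{z ≤ l : w z ≥ k}` (on `{1,…,n}`). -/
def Nmat (n : ℕ) (w : Equiv.Perm ℕ) (k l : ℕ) : ℕ :=
  ((Finset.Icc 1 n).filter (fun z => z ≤ l ∧ k ≤ w z)).card

/-- Dominance order: the classical criterion for Bruhat order. -/
def Dom (n : ℕ) (u v : Equiv.Perm ℕ) : Prop := ∀ k l, Nmat n u k l ≤ Nmat n v k l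

lemma dom_refl (u : Equiv.Perm ℕ) : Dom n u u := fun _ _ => le_refl _

lemma card_filter_erase' {s : Finset ℕ} (P : ℕ → Prop) [DecidablePred P] {x : ℕ} (hx : x ∈ s) :
    (s.filter P).card = ((s.erase x).filter P).card + (if P x then 1 else 0) := by
  rw [Finset.filter_erase]
  by_cases h : P x
  · rw [if_pos h, Finset.card_erase_of_mem (Finset.mem_filter.2 ⟨hx, h⟩)]
    have : 0 < (s.filter P).card := Finset.card_pos.2 ⟨x, Finset.mem_filter.2 ⟨hx, h⟩⟩
    omega
  · rw [if_neg h, Finset.erase_eq_of_notMem (fun hmem => h (Finset.mem_filter.1 hmem).2)]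
    omega

lemma card_filter_two_point {s : Finset ℕ} (P Q : ℕ → Prop) [DecidablePred P] [DecidablePred Q]
    {x y : ℕ} (hx : x ∈ s) (hy : y ∈ s) (hxy : x ≠ y)
    (hagree : ∀ z ∈ s, z ≠ x → z ≠ y → (P z ↔ Q z)) :
    (s.filter P).card + (if Q x then 1 else 0) + (if Q y then 1 else 0)
      = (s.filter Q).card + (if P x then 1 else 0) + (if P y then 1 else 0) := by
  have hy' : y ∈ s.erase x := Finset.mem_erase.2 ⟨fun h => hxy h.symm, hy⟩
  rw [card_filter_erase' P hx, card_filter_erase' P hy',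
      card_filter_erase' Q hx, card_filter_erase' Q hy']
  have he : ((s.erase x).erase y).filter P = ((s.erase x).erase y).filter Q := by
    apply Finset.filter_congr
    intro z hz
    simp only [Finset.mem_erase] at hz
    try simp only [eq_iff_iff]
    exact hagree z hz.2.2 hz.2.1 hz.1
  rw [he]
  omega

/-- Reindexing `Nmat` of `u * t` for an involution `t` preserving `Icc 1 n`. -/
lemma Nmat_mul_swap (u : Equiv.Perm ℕ) {x y : ℕ} (hx : x ∈ Finset.Icc 1 n)
    (hy : y ∈ Finset.Icc 1 n) (k l : ℕ) :
    Nmat n (u * Equiv.swap x y) k l =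
      ((Finset.Icc 1 n).filter (fun z => Equiv.swap x y z ≤ l ∧ k ≤ u z)).card := by
  set t := Equiv.swap x y with ht
  have htinv : ∀ z, t (t z) = z := fun z => Equiv.swap_apply_self x y z
  have htI : ∀ {z}, z ∈ Finset.Icc 1 n → t z ∈ Finset.Icc 1 n := by
    intro z hz
    simp only [ht, Equiv.swap_apply_def]
    split_ifs with h1 h2
    · subst h1; exact hy
    · subst h2; exact hx
    · exact hz
  apply Finset.card_nbij' (fun z => t z) (fun z => t z)
  · intro z hz
    simp only [Finset.mem_coe, Finset.mem_filter] at hz ⊢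
    simp only [Finset.mem_coe, Finset.mem_filter, Equiv.Perm.mul_apply] at hz ⊢
    exact ⟨htI hz.1, by rw [htinv]; exact hz.2.1, hz.2.2⟩
  · intro z hz
    simp only [Finset.mem_coe, Finset.mem_filter] at hz ⊢
    simp only [Finset.mem_coe, Finset.mem_filter, Equiv.Perm.mul_apply] at hz ⊢
    exact ⟨htI hz.1, htinv z ▸ hz.2.1, by rw [htinv]; exact hz.2.2⟩
  · intro z _; exact htinv z
  · intro z _; exact htinv z

/-- The master two-point identity for `Nmat` of `u * swap x y`. -/
lemma Nmat_mul_swap_key (u : Equiv.Perm ℕ) {x y : ℕ} (hx : x ∈ Finset.Icc 1 n)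
    (hy : y ∈ Finset.Icc 1 n) (hxy : x ≠ y) (k l : ℕ) :
    Nmat n u k l + (if y ≤ l ∧ k ≤ u x then 1 else 0) + (if x ≤ l ∧ k ≤ u y then 1 else 0)
      = Nmat n (u * Equiv.swap x y) k l
        + (if x ≤ l ∧ k ≤ u x then 1 else 0) + (if y ≤ l ∧ k ≤ u y then 1 else 0) := by
  rw [Nmat_mul_swap u hx hy k l]
  have h2 := card_filter_two_point (s := Finset.Icc 1 n)
    (fun z => z ≤ l ∧ k ≤ u z) (fun z => Equiv.swap x y z ≤ l ∧ k ≤ u z)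
    hx hy hxy ?_
  · simp only [Equiv.swap_apply_left, Equiv.swap_apply_right] at h2
    unfold Nmat
    exact h2
  · intro z _ hzx hzy
    rw [Equiv.swap_apply_of_ne_of_ne hzx hzy]

/-- A `BruhatLE`-step increases every entry of the dominance matrix. -/
lemma dom_step {u : Equiv.Perm ℕ} {x y : ℕ}
    (hx : 1 ≤ x) (hxy : x < y) (hy : y ≤ n) (h : u x < u y) :
    Dom n u (u * Equiv.swap x y) := by
  intro k l
  have hxI : x ∈ Finset.Icc 1 n := by simp; omega
  have hyI : y ∈ Finset.Icc 1 n := by simp; omega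
  have := Nmat_mul_swap_key u hxI hyI (by omega) k l
  split_ifs at this <;> omega

lemma bruhatLE_invNum_le {u v : Equiv.Perm ℕ} (hb : BruhatLE n u v) :
    invNum n u ≤ invNum n v := by
  induction hb with
  | refl => exact le_refl _
  | tail _ hrel ih => exact le_trans ih (le_of_lt hrel.1)

lemma bruhatLE_invNum_lt {u v : Equiv.Perm ℕ} (hb : BruhatLE n u v) (hne : u ≠ v) :
    invNum n u < invNum n v := by
  rcases Relation.reflTransGen_iff_eq_or_transGen.1 hb with rfl | htg
  · exact absurd rfl hne
  · clear hb hne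
    induction htg with
    | single hrel => exact hrel.1
    | tail _ hrel ih => exact lt_trans ih hrel.1

lemma not_bruhatLE_of_invNum_lt {u v : Equiv.Perm ℕ} (h : invNum n u < invNum n v) :
    ¬ BruhatLE n v u := fun hb => absurd (bruhatLE_invNum_le hb) (by omega)

/-- Necessity: Bruhat order implies dominance. -/
lemma bruhatLE_dom {u v : Equiv.Perm ℕ} (hb : BruhatLE n u v) : Dom n u v := by
  induction hb with
  | refl => exact dom_refl u
  | @tail b c hab hrel ih =>
    intro k l
    refine le_trans (ih k l) ?_
    obtain ⟨hinv, x, y, hx, hxy, hy, rfl⟩ := hrel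
    have hbx : b x < b y := by
      have hne : b x ≠ b y := fun e => by have := b.injective e; omega
      rcases lt_or_gt_of_ne hne with h1 | h1
      · exact h1
      · exfalso
        have h2 : (b * Equiv.swap x y) x < (b * Equiv.swap x y) y := by
          simp only [Equiv.Perm.mul_apply, Equiv.swap_apply_left, Equiv.swap_apply_right]
          exact h1
        have h3 := invNum_lt_mul_swap (n := n) hx hxy hy h2
        have h4 : b * Equiv.swap x y * Equiv.swap x y = b := by
          rw [mul_assoc, Equiv.swap_mul_self, mul_one]
        rw [h4] at h3
        omega
    exact dom_step hx hxy hy hbx k l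

lemma Nmat_le_of_le {w : Equiv.Perm ℕ} {k l l' : ℕ} (h : l ≤ l') :
    Nmat n w k l ≤ Nmat n w k l' := by
  apply Finset.card_le_card
  intro z hz
  simp only [Finset.mem_coe, Finset.mem_filter] at hz ⊢
  exact ⟨hz.1, by omega, hz.2.2⟩

lemma Nmat_succ {w : Equiv.Perm ℕ} {k d : ℕ} (hd : d ∈ Finset.Icc 1 n) :
    Nmat n w k d = Nmat n w k (d-1) + (if k ≤ w d then 1 else 0) := by
  unfold Nmat
  rw [card_filter_erase' (fun z => z ≤ d ∧ k ≤ w z) hd,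
      card_filter_erase' (fun z => z ≤ d - 1 ∧ k ≤ w z) hd]
  simp only [Finset.mem_Icc] at hd
  have he : ((Finset.Icc 1 n).erase d).filter (fun z => z ≤ d ∧ k ≤ w z)
      = ((Finset.Icc 1 n).erase d).filter (fun z => z ≤ d - 1 ∧ k ≤ w z) := by
    apply Finset.filter_congr
    intro z hz
    simp only [Finset.mem_erase, Finset.mem_Icc] at hz
    try simp only [eq_iff_iff]
    constructor
    · rintro ⟨h1, h2⟩; exact ⟨by omega, h2⟩
    · rintro ⟨h1, h2⟩; exact ⟨by omega, h2⟩
  rw [he]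
  split_ifs <;> omega

/-- Split of `Nmat` at a value threshold `c` with `k ≤ c + 1`. -/
lemma Nmat_split {w : Equiv.Perm ℕ} {k c : ℕ} (l : ℕ) (hk : k ≤ c + 1) :
    Nmat n w k l = Nmat n w (c+1) l +
      ((Finset.Icc 1 n).filter (fun z => z ≤ l ∧ k ≤ w z ∧ w z ≤ c)).card := by
  unfold Nmat
  have h1 := Finset.card_filter_add_card_filter_not
    (s := (Finset.Icc 1 n).filter (fun z => z ≤ l ∧ k ≤ w z)) (p := fun z => c + 1 ≤ w z)
  rw [Finset.filter_filter, Finset.filter_filter] at h1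
  have e1 : (Finset.Icc 1 n).filter (fun z => (z ≤ l ∧ k ≤ w z) ∧ c + 1 ≤ w z)
      = (Finset.Icc 1 n).filter (fun z => z ≤ l ∧ c + 1 ≤ w z) := by
    apply Finset.filter_congr
    intro z _
    try simp only [eq_iff_iff]
    constructor
    · rintro ⟨⟨a1, _⟩, a3⟩; exact ⟨a1, a3⟩
    · rintro ⟨a1, a3⟩; exact ⟨⟨a1, by omega⟩, a3⟩
  have e2 : (Finset.Icc 1 n).filter (fun z => (z ≤ l ∧ k ≤ w z) ∧ ¬ (c + 1 ≤ w z))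
      = (Finset.Icc 1 n).filter (fun z => z ≤ l ∧ k ≤ w z ∧ w z ≤ c) := by
    apply Finset.filter_congr
    intro z _
    try simp only [eq_iff_iff]
    constructor
    · rintro ⟨⟨a1, a2⟩, a3⟩; exact ⟨a1, a2, by omega⟩
    · rintro ⟨a1, a2, a3⟩; exact ⟨⟨a1, a2⟩, by omega⟩
  rw [e1, e2] at h1
  omega

end Brenti
namespace Brenti

variable {n : ℕ}

lemma perm_eq_of_agree {u v : Equiv.Perm ℕ} (hu : IsPermOn n u) (hv : IsPermOn n v)
    (h : ∀ z ∈ Finset.Icc 1 n, u z = v z) : u = v := by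
  ext z
  by_cases hz : z ∈ Finset.Icc 1 n
  · exact h z hz
  · rw [hu z hz, hv z hz]

/-- Sufficiency: dominance implies Bruhat order (for permutations of `{1,…,n}`). -/
lemma dom_bruhatLE {u v : Equiv.Perm ℕ} (hu : IsPermOn n u) (hv : IsPermOn n v)
    (hdom : Dom n u v) : BruhatLE n u v := by
  generalize hM : (∑ p ∈ (Finset.Icc 1 n) ×ˢ (Finset.Icc 1 n),
      (Nmat n v p.1 p.2 - Nmat n u p.1 p.2)) = M
  induction M using Nat.strong_induction_on generalizing u with
  | _ M ih =>
  by_cases heq : u = v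
  · subst heq; exact Relation.ReflTransGen.refl
  -- the smallest position where u and v differ
  have hex : ((Finset.Icc 1 n).filter (fun x => u x ≠ v x)).Nonempty := by
    by_contra hne
    rw [Finset.not_nonempty_iff_eq_empty, Finset.filter_eq_empty_iff] at hne
    exact heq (perm_eq_of_agree hu hv (fun z hz => by
      have := hne hz
      simpa using this))
  set d := ((Finset.Icc 1 n).filter (fun x => u x ≠ v x)).min' hex with hdd
  have hdmem := Finset.min'_mem _ hex
  rw [← hdd, Finset.mem_filter] at hdmem
  obtain ⟨hdI, hdne⟩ := hdmem
  have hagree : ∀ z, z < d → u z = v z := by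
    intro z hz
    by_cases hzI : z ∈ Finset.Icc 1 n
    · by_contra hne
      have : d ≤ z := Finset.min'_le _ _ (Finset.mem_filter.2 ⟨hzI, hne⟩)
      omega
    · rw [hu z hzI, hv z hzI]
  have hpre : ∀ k l, l < d → Nmat n u k l = Nmat n v k l := by
    intro k l hl
    unfold Nmat
    congr 1
    apply Finset.filter_congr
    intro z hzI
    try simp only [eq_iff_iff]
    constructor
    · rintro ⟨h1, h2⟩; exact ⟨h1, by rw [← hagree z (by omega)]; exact h2⟩
    · rintro ⟨h1, h2⟩; exact ⟨h1, by rw [hagree z (by omega)]; exact h2⟩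
  -- u d < v d
  have hdlt : u d < v d := by
    by_contra hge
    have hvd : v d < u d := by omega
    have h1 : Nmat n u (u d) d = Nmat n u (u d) (d-1) + 1 := by
      rw [Nmat_succ hdI, if_pos (le_refl _)]
    have h2 : Nmat n v (u d) d = Nmat n v (u d) (d-1) := by
      rw [Nmat_succ hdI, if_neg (by omega)]
      omega
    have h3 := hpre (u d) (d-1) (by simp at hdI; omega)
    have h4 := hdom (u d) d
    omega
  -- the witness set S
  have hvdI : v d ∈ Finset.Icc 1 n := (isPermOn_mem_iff hv).2 hdI
  have hSne : ((Finset.Icc 1 n).filter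
      (fun z => d < z ∧ u d < u z ∧ u z ≤ v d)).Nonempty := by
    refine ⟨u.symm (v d), Finset.mem_filter.2 ⟨(isPermOn_symm_mem_iff hu).2 hvdI, ?_, ?_, ?_⟩⟩
    · -- d < u.symm (v d)
      set b0 := u.symm (v d) with hb0
      have hub0 : u b0 = v d := u.apply_symm_apply _
      have hne : b0 ≠ d := fun e => by rw [e] at hub0; omega
      rcases Nat.lt_or_ge d b0 with h1 | h1
      · exact h1
      · exfalso
        have hb0d : b0 < d := by omega
        have := hagree b0 hb0d
        rw [this] at hub0
        have := v.injective hub0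
        omega
    · rw [u.apply_symm_apply]; exact hdlt
    · rw [u.apply_symm_apply]
  set b := ((Finset.Icc 1 n).filter (fun z => d < z ∧ u d < u z ∧ u z ≤ v d)).min' hSne
    with hbb
  have hbmem := Finset.min'_mem _ hSne
  rw [← hbb, Finset.mem_filter] at hbmem
  obtain ⟨hbI, hdb, hub1, hub2⟩ := hbmem
  have hbminS : ∀ z ∈ Finset.Icc 1 n, d < z → u d < u z → u z ≤ v d → b ≤ z := by
    intro z hz h1 h2 h3
    have hmem : z ∈ (Finset.Icc 1 n).filter (fun z => d < z ∧ u d < u z ∧ u z ≤ v d) :=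
      Finset.mem_filter.2 ⟨hz, h1, h2, h3⟩
    have h4 := Finset.min'_le _ z hmem
    rw [← hbb] at h4
    exact h4
  simp only [Finset.mem_Icc] at hdI hbI hvdI
  -- the new permutation
  set u' := u * Equiv.swap d b with hu'
  have hstep : invNum n u < invNum n u' := invNum_lt_mul_swap (by omega) hdb (by omega) hub1
  have hu'On : IsPermOn n u' := isPermOn_mul' hu
    (isPermOn_swap (by simp; omega) (by simp; omega))
  have hkey : ∀ k l : ℕ,
      Nmat n u k l + (if b ≤ l ∧ k ≤ u d then 1 else 0) + (if d ≤ l ∧ k ≤ u b then 1 else 0)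
      = Nmat n u' k l + (if d ≤ l ∧ k ≤ u d then 1 else 0)
        + (if b ≤ l ∧ k ≤ u b then 1 else 0) := by
    intro k l
    rw [hu']
    exact Nmat_mul_swap_key u (by simp; omega) (by simp; omega) (by omega) k l
  -- u' still dominated by v
  have hdom' : Dom n u' v := by
    intro k l
    by_cases hrect : d ≤ l ∧ l < b ∧ u d < k ∧ k ≤ u b
    · -- rectangle: Nmat u' = Nmat u + 1 ≤ Nmat v
      obtain ⟨hr1, hr2, hr3, hr4⟩ := hrect
      have hN' : Nmat n u' k l = Nmat n u k l + 1 := by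
        have hthis := hkey k l
        split_ifs at hthis <;> omega
      -- counting argument
      have hkvd : k ≤ v d + 1 := by omega
      have hsplitu := Nmat_split (n := n) (w := u) (k := k) (c := v d) l hkvd
      have hsplitv := Nmat_split (n := n) (w := v) (k := k) (c := v d) l hkvd
      have hCu : ((Finset.Icc 1 n).filter (fun z => z ≤ l ∧ k ≤ u z ∧ u z ≤ v d))
          = ((Finset.Icc 1 n).filter (fun z => z < d ∧ k ≤ v z ∧ v z ≤ v d)) := by
        ext z
        simp only [Finset.mem_coe, Finset.mem_filter]
        constructor
        · rintro ⟨hzI, hzl, hzk, hzv⟩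
          have hzd : z < d := by
            rcases Nat.lt_trichotomy z d with h1 | h1 | h1
            · exact h1
            · exfalso; subst h1; omega
            · exfalso
              have := hbminS z hzI h1 (by omega) hzv
              omega
          refine ⟨hzI, hzd, ?_, ?_⟩
          · rw [← hagree z hzd]; exact hzk
          · rw [← hagree z hzd]; exact hzv
        · rintro ⟨hzI, hzd, hzk, hzv⟩
          rw [← hagree z hzd] at hzk hzv
          exact ⟨hzI, by omega, hzk, hzv⟩
      have hsub : insert d ((Finset.Icc 1 n).filter (fun z => z < d ∧ k ≤ v z ∧ v z ≤ v d))
          ⊆ ((Finset.Icc 1 n).filter (fun z => z ≤ l ∧ k ≤ v z ∧ v z ≤ v d)) := by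
        intro z hz
        rcases Finset.mem_insert.1 hz with rfl | hz2
        · exact Finset.mem_filter.2 ⟨by simp; omega, by omega, by omega, le_refl _⟩
        · rw [Finset.mem_filter] at hz2 ⊢
          exact ⟨hz2.1, by omega, hz2.2.2⟩
      have hdnot : d ∉ ((Finset.Icc 1 n).filter (fun z => z < d ∧ k ≤ v z ∧ v z ≤ v d)) := by
        simp only [Finset.mem_coe, Finset.mem_filter]
        rintro ⟨_, h1, _⟩
        omega
      have hcard := Finset.card_le_card hsub
      rw [Finset.card_insert_of_notMem hdnot] at hcard
      have hdomv := hdom (v d + 1) l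
      rw [hCu] at hsplitu
      omega
    · -- outside the rectangle : Nmat u' ≤ Nmat u
      have hN' : Nmat n u' k l ≤ Nmat n u k l := by
        have hthis := hkey k l
        split_ifs at hthis <;> omega
      exact le_trans hN' (hdom k l)
  -- the measure strictly decreases
  have hmono : ∀ k l, Nmat n u k l ≤ Nmat n u' k l := by
    intro k l
    have hthis := hkey k l
    split_ifs at hthis <;> omega
  have hstrict : Nmat n u (u b) d < Nmat n u' (u b) d := by
    have hthis := hkey (u b) d
    have hubI : 1 ≤ u b ∧ u b ≤ n := by
      have h9 := (isPermOn_mem_iff hu (x := b)).2 (by simp; omega)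
      simpa using h9
    split_ifs at hthis <;> omega
  have hsum : (∑ p ∈ (Finset.Icc 1 n) ×ˢ (Finset.Icc 1 n),
      (Nmat n v p.1 p.2 - Nmat n u' p.1 p.2)) < M := by
    rw [← hM]
    apply Finset.sum_lt_sum
    · rintro ⟨k, l⟩ _
      dsimp only
      have h1 := hmono k l
      have h2 := hdom' k l
      omega
    · refine ⟨(u b, d), ?_, ?_⟩
      · simp only [Finset.mem_product]
        constructor
        · rw [isPermOn_mem_iff hu]
          simp; omega
        · simp; omega
      · dsimp only
        have h1 := hstrict
        have h2 := hdom' (u b) d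
        omega
  have hch := ih _ hsum hu'On hdom' rfl
  exact Relation.ReflTransGen.head ⟨hstep, d, b, by omega, hdb, by omega, rfl⟩ hch

end Brenti
namespace Brenti

variable {n i : ℕ}

/-- Positions of the values `1,…,i-1`. -/
def Aset (n i : ℕ) (w : Equiv.Perm ℕ) : Finset ℕ :=
  (Finset.Icc 1 n).filter (fun r => w r ∈ Finset.Icc 1 (i-1))

lemma not_mem_E {k : ℕ} (h1 : k ≠ i - 1) (h2 : k ≠ i) : k ∉ ({i - 1, i} : Set ℕ) := by
  simp [h1, h2]

lemma minrep_symm_succ_lt {w : Equiv.Perm ℕ} (hw : MinReps n {i-1, i} w)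
    (hwOn : IsPermOn n w) {k : ℕ} (hk1 : 1 ≤ k) (hk2 : k + 1 ≤ n)
    (hkE1 : k ≠ i - 1) (hkE2 : k ≠ i) : w.symm k < w.symm (k+1) := by
  by_contra hge
  have hne : w.symm k ≠ w.symm (k+1) := fun e => by
    have := w.symm.injective e; omega
  have hlt : w.symm (k+1) < w.symm k := by omega
  have := invNum_sAdj_mul' hwOn hk1 hk2 hlt
  have h2 := hw k hk1 (by omega) (not_mem_E hkE1 hkE2)
  omega

lemma minrep_symm_mono_small {w : Equiv.Perm ℕ} (hw : MinReps n {i-1, i} w)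
    (hwOn : IsPermOn n w) (hi1 : 2 ≤ i) (hi2 : i ≤ n - 1) {k k' : ℕ}
    (h1 : 1 ≤ k) (hkk : k < k') (h2 : k' ≤ i - 1) : w.symm k < w.symm k' := by
  induction k' with
  | zero => omega
  | succ c ihc =>
    rcases Nat.lt_or_ge k c with h3 | h3
    · have := ihc h3 (by omega)
      have h4 : w.symm c < w.symm (c+1) :=
        minrep_symm_succ_lt hw hwOn (by omega) (by omega) (by omega) (by omega)
      omega
    · have hkc : k = c := by omega
      subst hkc
      exact minrep_symm_succ_lt hw hwOn (by omega) (by omega) (by omega) (by omega)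

lemma minrep_symm_mono_big {w : Equiv.Perm ℕ} (hw : MinReps n {i-1, i} w)
    (hwOn : IsPermOn n w) (hi1 : 2 ≤ i) {k k' : ℕ}
    (h1 : i + 1 ≤ k) (hkk : k < k') (h2 : k' ≤ n) : w.symm k < w.symm k' := by
  induction k' with
  | zero => omega
  | succ c ihc =>
    rcases Nat.lt_or_ge k c with h3 | h3
    · have := ihc h3 (by omega)
      have h4 : w.symm c < w.symm (c+1) :=
        minrep_symm_succ_lt hw hwOn (by omega) (by omega) (by omega) (by omega)
      omega
    · have hkc : k = c := by omega
      subst hkc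
      exact minrep_symm_succ_lt hw hwOn (by omega) (by omega) (by omega) (by omega)

lemma aset_eq_image {w : Equiv.Perm ℕ} (hwOn : IsPermOn n w) (hi2 : i ≤ n - 1) :
    Aset n i w = (Finset.Icc 1 (i-1)).image w.symm := by
  ext r
  simp only [Finset.mem_coe, Aset, Finset.mem_filter, Finset.mem_image, Finset.mem_Icc]
  constructor
  · rintro ⟨hr, h1, h2⟩
    exact ⟨w r, ⟨h1, h2⟩, w.symm_apply_apply r⟩
  · rintro ⟨k, ⟨hk1, hk2⟩, rfl⟩
    have hkI : k ∈ Finset.Icc 1 n := by simp; omega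
    have := (isPermOn_symm_mem_iff hwOn).2 hkI
    simp only [Finset.mem_Icc] at this
    refine ⟨this, ?_, ?_⟩ <;> rw [w.apply_symm_apply] <;> omega

lemma card_aset {w : Equiv.Perm ℕ} (hwOn : IsPermOn n w) (hi2 : i ≤ n - 1) :
    (Aset n i w).card = i - 1 := by
  rw [aset_eq_image hwOn hi2, Finset.card_image_of_injective _ w.symm.injective]
  simp

lemma mem_aset_iff {w : Equiv.Perm ℕ} {r : ℕ} :
    r ∈ Aset n i w ↔ r ∈ Finset.Icc 1 n ∧ 1 ≤ w r ∧ w r ≤ i - 1 := by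
  simp [Aset]

lemma symm_i_not_mem_aset {w : Equiv.Perm ℕ} (hi1 : 2 ≤ i) :
    w.symm i ∉ Aset n i w := by
  rw [mem_aset_iff]
  rintro ⟨_, _, h⟩
  rw [w.apply_symm_apply] at h
  omega

lemma symm_i_mem_Icc {w : Equiv.Perm ℕ} (hwOn : IsPermOn n w) (hi1 : 2 ≤ i)
    (hi2 : i ≤ n - 1) : w.symm i ∈ Finset.Icc 1 n :=
  (isPermOn_symm_mem_iff hwOn).2 (by simp; omega)

/-- The rank formula for positions of small values. -/
lemma minrep_rank_small {w : Equiv.Perm ℕ} (hw : MinReps n {i-1, i} w)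
    (hwOn : IsPermOn n w) (hi1 : 2 ≤ i) (hi2 : i ≤ n - 1) {r : ℕ} (hr : r ∈ Aset n i w) :
    w r = ((Aset n i w).filter (fun z => z ≤ r)).card := by
  rw [mem_aset_iff] at hr
  obtain ⟨hrI, h1, h2⟩ := hr
  have hset : (Aset n i w).filter (fun z => z ≤ r) = (Finset.Icc 1 (w r)).image w.symm := by
    ext z
    simp only [Finset.mem_coe, Finset.mem_filter, Finset.mem_image, Finset.mem_Icc]
    constructor
    · rintro ⟨hzA, hzr⟩
      rw [mem_aset_iff] at hzA
      obtain ⟨hzI, hz1, hz2⟩ := hzA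
      refine ⟨w z, ⟨hz1, ?_⟩, w.symm_apply_apply z⟩
      -- w z ≤ w r from z ≤ r and monotonicity
      by_contra hgt
      have h3 : w r < w z := by omega
      have h4 : w.symm (w r) < w.symm (w z) :=
        minrep_symm_mono_small hw hwOn hi1 hi2 (by omega) h3 (by omega)
      rw [w.symm_apply_apply, w.symm_apply_apply] at h4
      omega
    · rintro ⟨k, ⟨hk1, hk2⟩, rfl⟩
      have hkI : k ∈ Finset.Icc 1 n := by simp; omega
      have hzI := (isPermOn_symm_mem_iff hwOn).2 hkI
      constructor
      · rw [mem_aset_iff]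
        refine ⟨hzI, ?_, ?_⟩ <;> rw [w.apply_symm_apply] <;> omega
      · rcases Nat.lt_or_ge k (w r) with h3 | h3
        · have h4 : w.symm k < w.symm (w r) :=
            minrep_symm_mono_small hw hwOn hi1 hi2 hk1 h3 (by omega)
          rw [w.symm_apply_apply] at h4
          omega
        · have : k = w r := by omega
          subst this
          rw [w.symm_apply_apply]
  rw [hset, Finset.card_image_of_injective _ w.symm.injective]
  simp

/-- The set of positions of the values `i+1, …, n`. -/
def Rest (n i : ℕ) (w : Equiv.Perm ℕ) : Finset ℕ :=
  (Finset.Icc 1 n).filter (fun r => i + 1 ≤ w r)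

lemma mem_rest_iff {w : Equiv.Perm ℕ} (hwOn : IsPermOn n w) {r : ℕ} (hrI : r ∈ Finset.Icc 1 n) :
    r ∈ Rest n i w ↔ r ∉ Aset n i w ∧ r ≠ w.symm i := by
  have hwr : w r ∈ Finset.Icc 1 n := (isPermOn_mem_iff hwOn).2 hrI
  simp only [Finset.mem_Icc] at hwr
  simp only [Finset.mem_coe, Rest, Finset.mem_filter, mem_aset_iff, hrI, true_and]
  constructor
  · intro h
    constructor
    · intro hc
      omega
    · intro he
      rw [he, w.apply_symm_apply] at h
      omega
  · rintro ⟨h1, h2⟩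
    have h3 : w r ≠ i := fun he => h2 (by rw [← he, w.symm_apply_apply])
    push_neg at h1
    have := h1 (by omega)
    omega

lemma minrep_trichotomy {w : Equiv.Perm ℕ} (hwOn : IsPermOn n w) {r : ℕ}
    (hrI : r ∈ Finset.Icc 1 n) :
    r ∈ Aset n i w ∨ r = w.symm i ∨ r ∈ Rest n i w := by
  by_cases h1 : r ∈ Aset n i w
  · exact Or.inl h1
  by_cases h2 : r = w.symm i
  · exact Or.inr (Or.inl h2)
  · exact Or.inr (Or.inr ((mem_rest_iff hwOn hrI).2 ⟨h1, h2⟩))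

lemma rest_eq_image {w : Equiv.Perm ℕ} (hwOn : IsPermOn n w) :
    Rest n i w = (Finset.Icc (i+1) n).image w.symm := by
  ext r
  simp only [Finset.mem_coe, Rest, Finset.mem_filter, Finset.mem_image, Finset.mem_Icc]
  constructor
  · rintro ⟨⟨hr1, hr2⟩, h⟩
    have hwr : w r ∈ Finset.Icc 1 n := (isPermOn_mem_iff hwOn).2 (by simp; omega)
    simp only [Finset.mem_Icc] at hwr
    exact ⟨w r, ⟨h, hwr.2⟩, w.symm_apply_apply r⟩
  · rintro ⟨k, ⟨hk1, hk2⟩, rfl⟩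
    have hkI : k ∈ Finset.Icc 1 n := by simp; omega
    have hzI := (isPermOn_symm_mem_iff hwOn).2 hkI
    simp only [Finset.mem_Icc] at hzI
    exact ⟨⟨hzI.1, hzI.2⟩, by rw [w.apply_symm_apply]; omega⟩

/-- The rank formula for positions of large values. -/
lemma minrep_rank_big {w : Equiv.Perm ℕ} (hw : MinReps n {i-1, i} w)
    (hwOn : IsPermOn n w) (hi1 : 2 ≤ i) {r : ℕ} (hr : r ∈ Rest n i w) :
    w r = i + ((Rest n i w).filter (fun z => z ≤ r)).card := by
  have hr' := hr
  simp only [Finset.mem_coe, Rest, Finset.mem_filter, Finset.mem_Icc] at hr'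
  obtain ⟨⟨hr1, hr2⟩, h1⟩ := hr'
  have hwr : w r ∈ Finset.Icc 1 n := (isPermOn_mem_iff hwOn).2 (by simp; omega)
  simp only [Finset.mem_Icc] at hwr
  have hset : (Rest n i w).filter (fun z => z ≤ r)
      = (Finset.Icc (i+1) (w r)).image w.symm := by
    ext z
    simp only [Finset.mem_coe, Finset.mem_filter, Finset.mem_image, Finset.mem_Icc]
    constructor
    · rintro ⟨hzA, hzr⟩
      simp only [Finset.mem_coe, Rest, Finset.mem_filter, Finset.mem_Icc] at hzA
      obtain ⟨⟨hz1, hz2⟩, hz3⟩ := hzA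
      refine ⟨w z, ⟨hz3, ?_⟩, w.symm_apply_apply z⟩
      by_contra hgt
      have h3 : w r < w z := by omega
      have hwz : w z ∈ Finset.Icc 1 n := (isPermOn_mem_iff hwOn).2 (by simp; omega)
      simp only [Finset.mem_Icc] at hwz
      have h4 : w.symm (w r) < w.symm (w z) :=
        minrep_symm_mono_big hw hwOn hi1 (by omega) h3 (by omega)
      rw [w.symm_apply_apply, w.symm_apply_apply] at h4
      omega
    · rintro ⟨k, ⟨hk1, hk2⟩, rfl⟩
      have hkI : k ∈ Finset.Icc 1 n := by simp; omega
      have hzI := (isPermOn_symm_mem_iff hwOn).2 hkI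
      simp only [Finset.mem_Icc] at hzI
      constructor
      · simp only [Finset.mem_coe, Rest, Finset.mem_filter, Finset.mem_Icc]
        exact ⟨⟨hzI.1, hzI.2⟩, by rw [w.apply_symm_apply]; omega⟩
      · rcases Nat.lt_or_ge k (w r) with h3 | h3
        · have h4 : w.symm k < w.symm (w r) :=
            minrep_symm_mono_big hw hwOn hi1 hk1 h3 (by omega)
          rw [w.symm_apply_apply] at h4
          omega
        · have : k = w r := by omega
          subst this
          rw [w.symm_apply_apply]
  rw [hset, Finset.card_image_of_injective _ w.symm.injective]
  rw [Nat.card_Icc]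
  omega

end Brenti
namespace Brenti

variable {n i : ℕ}

/-- Positions of values `1,…,i`. -/
def Apset (n i : ℕ) (w : Equiv.Perm ℕ) : Finset ℕ :=
  (Finset.Icc 1 n).filter (fun r => w r ∈ Finset.Icc 1 i)

lemma apset_eq_insert {w : Equiv.Perm ℕ} (hwOn : IsPermOn n w) (hi1 : 2 ≤ i)
    (hi2 : i ≤ n - 1) : Apset n i w = insert (w.symm i) (Aset n i w) := by
  ext r
  simp only [Finset.mem_coe, Apset, Finset.mem_filter, Finset.mem_insert, mem_aset_iff, Finset.mem_Icc]
  constructor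
  · rintro ⟨hrI, h1, h2⟩
    by_cases he : w r = i
    · exact Or.inl (by rw [← he, w.symm_apply_apply])
    · exact Or.inr ⟨hrI, h1, by omega⟩
  · rintro (rfl | ⟨hrI, h1, h2⟩)
    · have h9 := symm_i_mem_Icc (w := w) hwOn hi1 hi2
      simp only [Finset.mem_Icc] at h9
      refine ⟨h9, ?_, ?_⟩ <;> rw [w.apply_symm_apply] <;> omega
    · exact ⟨hrI, h1, by omega⟩

lemma apset_filter_card {w : Equiv.Perm ℕ} (hwOn : IsPermOn n w) (hi1 : 2 ≤ i)
    (hi2 : i ≤ n - 1) (l : ℕ) :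
    ((Apset n i w).filter (fun z => z ≤ l)).card
      = ((Aset n i w).filter (fun z => z ≤ l)).card + (if w.symm i ≤ l then 1 else 0) := by
  rw [apset_eq_insert hwOn hi1 hi2, Finset.filter_insert]
  split_ifs with h
  · rw [Finset.card_insert_of_notMem]
    intro hmem
    exact symm_i_not_mem_aset hi1 (Finset.mem_filter.1 hmem).1
  · rfl

/-- Determination: a minimal representative is determined by its data. -/
lemma minrep_determined {u v : Equiv.Perm ℕ} (hu : MinReps n {i-1, i} u)
    (hv : MinReps n {i-1, i} v) (huOn : IsPermOn n u) (hvOn : IsPermOn n v)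
    (hi1 : 2 ≤ i) (hi2 : i ≤ n - 1)
    (hA : Aset n i u = Aset n i v) (hp : u.symm i = v.symm i) : u = v := by
  have hrest : Rest n i u = Rest n i v := by
    ext r
    by_cases hrI : r ∈ Finset.Icc 1 n
    · rw [mem_rest_iff huOn hrI, mem_rest_iff hvOn hrI, hA, hp]
    · constructor <;> intro h <;> exfalso <;> simp only [Finset.mem_coe, Rest, Finset.mem_filter] at h <;>
        exact hrI h.1
  apply perm_eq_of_agree huOn hvOn
  intro z hz
  rcases minrep_trichotomy (i := i) huOn hz with h1 | h1 | h1
  · rw [minrep_rank_small hu huOn hi1 hi2 h1, minrep_rank_small hv hvOn hi1 hi2 (hA ▸ h1), hA]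
  · rw [h1, u.apply_symm_apply, hp, v.apply_symm_apply]
  · rw [minrep_rank_big hu huOn hi1 h1, minrep_rank_big hv hvOn hi1 (hrest ▸ h1), hrest]

/-- A downward-closed finite set of naturals `> a` is an interval. -/
lemma dc_eq_Icc {a : ℕ} {S : Finset ℕ} (hlb : ∀ x ∈ S, a + 1 ≤ x)
    (hdc : ∀ x y, a + 1 ≤ x → x ≤ y → y ∈ S → x ∈ S) :
    S = Finset.Icc (a+1) (a + S.card) := by
  have hsub2 : ∀ z ∈ S, z ≤ a + S.card := by
    intro z hz
    have hsub : Finset.Icc (a+1) z ⊆ S := by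
      intro t ht
      simp only [Finset.mem_Icc] at ht
      exact hdc t z ht.1 ht.2 hz
    have := Finset.card_le_card hsub
    rw [Nat.card_Icc] at this
    have hz1 := hlb z hz
    omega
  apply Finset.Subset.antisymm
  · intro z hz
    simp only [Finset.mem_Icc]
    exact ⟨hlb z hz, hsub2 z hz⟩
  · intro t ht
    simp only [Finset.mem_Icc] at ht
    by_contra htS
    have hsub : S ⊆ Finset.Icc (a+1) (t-1) := by
      intro z hz
      simp only [Finset.mem_Icc]
      refine ⟨hlb z hz, ?_⟩
      by_contra hzt
      exact htS (hdc t z ht.1 (by omega) hz)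
    have := Finset.card_le_card hsub
    rw [Nat.card_Icc] at this
    omega

/-- Count of positions `≤ l` holding a value `≤ c`. -/
def cnt (n : ℕ) (w : Equiv.Perm ℕ) (c l : ℕ) : ℕ :=
  ((Finset.Icc 1 n).filter (fun z => z ≤ l ∧ w z ∈ Finset.Icc 1 c)).card

def Wl (n l : ℕ) : ℕ := ((Finset.Icc 1 n).filter (fun z => z ≤ l)).card

lemma Nmat_add_cnt {w : Equiv.Perm ℕ} (hwOn : IsPermOn n w) {k : ℕ} (l : ℕ) (hk : 1 ≤ k) :
    Nmat n w k l + cnt n w (k-1) l = Wl n l := by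
  have h1 := Finset.card_filter_add_card_filter_not
    (s := (Finset.Icc 1 n).filter (fun z => z ≤ l)) (p := fun z => k ≤ w z)
  rw [Finset.filter_filter, Finset.filter_filter] at h1
  have e1 : (Finset.Icc 1 n).filter (fun z => z ≤ l ∧ k ≤ w z)
      = (Finset.Icc 1 n).filter (fun z => z ≤ l ∧ k ≤ w z) := rfl
  have e2 : (Finset.Icc 1 n).filter (fun z => z ≤ l ∧ ¬ (k ≤ w z))
      = (Finset.Icc 1 n).filter (fun z => z ≤ l ∧ w z ∈ Finset.Icc 1 (k-1)) := by
    apply Finset.filter_congr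
    intro z hz
    have hwz := (isPermOn_mem_iff hwOn).2 hz
    simp only [Finset.mem_Icc] at hwz ⊢
    constructor
    · rintro ⟨a1, a2⟩; exact ⟨a1, by omega, by omega⟩
    · rintro ⟨a1, a2, a3⟩; exact ⟨a1, by omega⟩
  rw [e2] at h1
  unfold Nmat cnt Wl
  omega

lemma aset_filter_eq_image {w : Equiv.Perm ℕ} (hwOn : IsPermOn n w) (hi2 : i ≤ n - 1)
    (l : ℕ) : (Aset n i w).filter (fun z => z ≤ l)
      = ((Finset.Icc 1 (i-1)).filter (fun k' => w.symm k' ≤ l)).image w.symm := by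
  rw [aset_eq_image hwOn hi2]
  ext z
  constructor
  · intro hz
    rw [Finset.mem_filter] at hz
    obtain ⟨hzi, hzl⟩ := hz
    obtain ⟨k', hk', rfl⟩ := Finset.mem_image.1 hzi
    exact Finset.mem_image.2 ⟨k', Finset.mem_filter.2 ⟨hk', hzl⟩, rfl⟩
  · intro hz
    obtain ⟨k', hk', rfl⟩ := Finset.mem_image.1 hz
    rw [Finset.mem_filter] at hk'
    exact Finset.mem_filter.2 ⟨Finset.mem_image.2 ⟨k', hk'.1, rfl⟩, hk'.2⟩

lemma cnt_small {w : Equiv.Perm ℕ} (hw : MinReps n {i-1, i} w) (hwOn : IsPermOn n w)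
    (hi1 : 2 ≤ i) (hi2 : i ≤ n - 1) {c : ℕ} (hc : c ≤ i - 1) (l : ℕ) :
    cnt n w c l = min c ((Aset n i w).filter (fun z => z ≤ l)).card := by
  set S := (Finset.Icc 1 (i-1)).filter (fun k' => w.symm k' ≤ l) with hSdef
  have hS : S = Finset.Icc 1 S.card := by
    have := dc_eq_Icc (a := 0) (S := S) ?_ ?_
    · simpa using this
    · intro x hx
      rw [hSdef, Finset.mem_filter, Finset.mem_Icc] at hx
      omega
    · intro x y hx hxy hy
      rw [hSdef, Finset.mem_filter, Finset.mem_Icc] at hy ⊢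
      refine ⟨⟨by omega, by omega⟩, ?_⟩
      rcases Nat.lt_or_ge x y with h1 | h1
      · have := minrep_symm_mono_small hw hwOn hi1 hi2 (by omega) h1 (by omega)
        omega
      · have : x = y := by omega
        subst this
        exact hy.2
  have hA : ((Aset n i w).filter (fun z => z ≤ l)).card = S.card := by
    rw [aset_filter_eq_image hwOn hi2, Finset.card_image_of_injective _ w.symm.injective]
  have hcnt : (Finset.Icc 1 n).filter (fun z => z ≤ l ∧ w z ∈ Finset.Icc 1 c)
      = (S ∩ Finset.Icc 1 c).image w.symm := by
    ext z
    constructor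
    · intro hz
      rw [Finset.mem_filter] at hz
      obtain ⟨hzI, hzl, hzv⟩ := hz
      rw [Finset.mem_Icc] at hzv
      apply Finset.mem_image.2
      refine ⟨w z, ?_, w.symm_apply_apply z⟩
      rw [Finset.mem_inter, hSdef, Finset.mem_filter, Finset.mem_Icc, Finset.mem_Icc]
      refine ⟨⟨⟨by omega, by omega⟩, ?_⟩, by omega, by omega⟩
      rw [w.symm_apply_apply]
      exact hzl
    · intro hz
      obtain ⟨k', hk', rfl⟩ := Finset.mem_image.1 hz
      rw [Finset.mem_inter, hSdef, Finset.mem_filter, Finset.mem_Icc, Finset.mem_Icc] at hk'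
      obtain ⟨⟨⟨hk1, hk2⟩, hk3⟩, hk4, hk5⟩ := hk'
      rw [Finset.mem_filter]
      have hkI : k' ∈ Finset.Icc 1 n := by simp; omega
      refine ⟨(isPermOn_symm_mem_iff hwOn).2 hkI, hk3, ?_⟩
      rw [Finset.mem_Icc, w.apply_symm_apply]
      omega
  unfold cnt
  rw [hcnt, Finset.card_image_of_injective _ w.symm.injective, hS, hA]
  have hint : Finset.Icc 1 S.card ∩ Finset.Icc 1 c = Finset.Icc 1 (min S.card c) := by
    ext t
    simp only [Finset.mem_coe, Finset.mem_inter, Finset.mem_Icc]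
    omega
  rw [hint, Nat.card_Icc]
  omega

lemma rest_filter_eq_image {w : Equiv.Perm ℕ} (hwOn : IsPermOn n w) (l : ℕ) :
    (Rest n i w).filter (fun z => z ≤ l)
      = ((Finset.Icc (i+1) n).filter (fun k' => w.symm k' ≤ l)).image w.symm := by
  rw [rest_eq_image hwOn]
  ext z
  constructor
  · intro hz
    rw [Finset.mem_filter] at hz
    obtain ⟨hzi, hzl⟩ := hz
    obtain ⟨k', hk', rfl⟩ := Finset.mem_image.1 hzi
    exact Finset.mem_image.2 ⟨k', Finset.mem_filter.2 ⟨hk', hzl⟩, rfl⟩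
  · intro hz
    obtain ⟨k', hk', rfl⟩ := Finset.mem_image.1 hz
    rw [Finset.mem_filter] at hk'
    exact Finset.mem_filter.2 ⟨Finset.mem_image.2 ⟨k', hk'.1, rfl⟩, hk'.2⟩

lemma Wl_partition {w : Equiv.Perm ℕ} (hwOn : IsPermOn n w) (hi1 : 2 ≤ i) (l : ℕ) :
    Wl n l = ((Apset n i w).filter (fun z => z ≤ l)).card
      + ((Rest n i w).filter (fun z => z ≤ l)).card := by
  have h1 := Finset.card_filter_add_card_filter_not
    (s := (Finset.Icc 1 n).filter (fun z => z ≤ l)) (p := fun z => w z ≤ i)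
  rw [Finset.filter_filter, Finset.filter_filter] at h1
  have e1 : (Finset.Icc 1 n).filter (fun z => z ≤ l ∧ w z ≤ i)
      = (Apset n i w).filter (fun z => z ≤ l) := by
    rw [Apset, Finset.filter_filter]
    apply Finset.filter_congr
    intro z hz
    have hwz := (isPermOn_mem_iff hwOn).2 hz
    simp only [Finset.mem_Icc] at hwz ⊢
    constructor
    · rintro ⟨a1, a2⟩; exact ⟨⟨by omega, a2⟩, a1⟩
    · rintro ⟨⟨a1, a2⟩, a3⟩; exact ⟨a3, a2⟩
  have e2 : (Finset.Icc 1 n).filter (fun z => z ≤ l ∧ ¬ (w z ≤ i))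
      = (Rest n i w).filter (fun z => z ≤ l) := by
    rw [Rest, Finset.filter_filter]
    apply Finset.filter_congr
    intro z hz
    constructor
    · rintro ⟨a1, a2⟩; exact ⟨by omega, a1⟩
    · rintro ⟨a1, a2⟩; exact ⟨a2, by omega⟩
  rw [e1, e2] at h1
  unfold Wl
  omega

lemma cnt_big {w : Equiv.Perm ℕ} (hw : MinReps n {i-1, i} w) (hwOn : IsPermOn n w)
    (hi1 : 2 ≤ i) (hi2 : i ≤ n - 1) {c : ℕ} (hc : i ≤ c) (l : ℕ) :
    cnt n w c l = ((Apset n i w).filter (fun z => z ≤ l)).card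
      + min (c - i) (Wl n l - ((Apset n i w).filter (fun z => z ≤ l)).card) := by
  set S := (Finset.Icc (i+1) n).filter (fun k' => w.symm k' ≤ l) with hSdef
  have hS : S = Finset.Icc (i+1) (i + S.card) := by
    apply dc_eq_Icc (a := i) (S := S)
    · intro x hx
      rw [hSdef, Finset.mem_filter, Finset.mem_Icc] at hx
      omega
    · intro x y hx hxy hy
      rw [hSdef, Finset.mem_filter, Finset.mem_Icc] at hy ⊢
      refine ⟨⟨by omega, by omega⟩, ?_⟩
      rcases Nat.lt_or_ge x y with h1 | h1
      · have := minrep_symm_mono_big hw hwOn hi1 (by omega) h1 (by omega)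
        omega
      · have : x = y := by omega
        subst this
        exact hy.2
  have hRl : ((Rest n i w).filter (fun z => z ≤ l)).card = S.card := by
    rw [rest_filter_eq_image hwOn, Finset.card_image_of_injective _ w.symm.injective]
  -- split the count into the ≤ i part and the rest part
  have h1 := Finset.card_filter_add_card_filter_not
    (s := (Finset.Icc 1 n).filter (fun z => z ≤ l ∧ w z ∈ Finset.Icc 1 c)) (p := fun z => w z ≤ i)
  rw [Finset.filter_filter, Finset.filter_filter] at h1
  have e1 : (Finset.Icc 1 n).filter (fun z => (z ≤ l ∧ w z ∈ Finset.Icc 1 c) ∧ w z ≤ i)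
      = (Apset n i w).filter (fun z => z ≤ l) := by
    rw [Apset, Finset.filter_filter]
    apply Finset.filter_congr
    intro z hz
    have hwz := (isPermOn_mem_iff hwOn).2 hz
    simp only [Finset.mem_Icc] at hwz ⊢
    constructor
    · rintro ⟨⟨a1, _⟩, a3⟩; exact ⟨⟨by omega, a3⟩, a1⟩
    · rintro ⟨⟨a1, a2⟩, a3⟩; exact ⟨⟨a3, by omega, by omega⟩, a2⟩
  have e2 : (Finset.Icc 1 n).filter (fun z => (z ≤ l ∧ w z ∈ Finset.Icc 1 c) ∧ ¬ (w z ≤ i))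
      = (S ∩ Finset.Icc (i+1) c).image w.symm := by
    ext z
    constructor
    · intro hz
      rw [Finset.mem_filter] at hz
      obtain ⟨hzI, ⟨hzl, hzv⟩, hz3⟩ := hz
      rw [Finset.mem_Icc] at hzv
      have hwzn : w z ∈ Finset.Icc 1 n := (isPermOn_mem_iff hwOn).2 hzI
      rw [Finset.mem_Icc] at hwzn
      apply Finset.mem_image.2
      refine ⟨w z, ?_, w.symm_apply_apply z⟩
      rw [Finset.mem_inter, hSdef, Finset.mem_filter, Finset.mem_Icc, Finset.mem_Icc]
      refine ⟨⟨⟨by omega, by omega⟩, ?_⟩, by omega, by omega⟩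
      rw [w.symm_apply_apply]
      exact hzl
    · intro hz
      obtain ⟨k', hk', rfl⟩ := Finset.mem_image.1 hz
      rw [Finset.mem_inter, hSdef, Finset.mem_filter, Finset.mem_Icc, Finset.mem_Icc] at hk'
      obtain ⟨⟨⟨hk1, hk2⟩, hk3⟩, hk4, hk5⟩ := hk'
      rw [Finset.mem_filter]
      have hkI : k' ∈ Finset.Icc 1 n := by simp; omega
      refine ⟨(isPermOn_symm_mem_iff hwOn).2 hkI, ⟨hk3, ?_⟩, ?_⟩
      · rw [Finset.mem_Icc, w.apply_symm_apply]
        omega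
      · rw [w.apply_symm_apply]
        omega
  rw [e1, e2] at h1
  have hcard2 : ((S ∩ Finset.Icc (i+1) c).image w.symm).card = min (c - i) S.card := by
    rw [Finset.card_image_of_injective _ w.symm.injective, hS]
    have hint : Finset.Icc (i+1) (i + S.card) ∩ Finset.Icc (i+1) c
        = Finset.Icc (i+1) (min (i + S.card) c) := by
      ext t
      simp only [Finset.mem_coe, Finset.mem_inter, Finset.mem_Icc]
      omega
    rw [hint, Nat.card_Icc, Nat.card_Icc]
    omega
  rw [hcard2] at h1
  have hWl := Wl_partition hwOn (w := w) hi1 l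
  rw [hRl] at hWl
  unfold cnt
  omega

/-- Dominance from the data inequalities D1 and D2. -/
lemma dom_of_data {u v : Equiv.Perm ℕ} (hu : MinReps n {i-1, i} u) (hv : MinReps n {i-1, i} v)
    (huOn : IsPermOn n u) (hvOn : IsPermOn n v) (hi1 : 2 ≤ i) (hi2 : i ≤ n - 1)
    (hD1 : ∀ l, ((Aset n i v).filter (fun z => z ≤ l)).card
      ≤ ((Aset n i u).filter (fun z => z ≤ l)).card)
    (hD2 : ∀ l, ((Apset n i v).filter (fun z => z ≤ l)).card
      ≤ ((Apset n i u).filter (fun z => z ≤ l)).card) :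
    Dom n u v := by
  intro k l
  rcases Nat.eq_zero_or_pos k with rfl | hk
  · have e : ∀ w : Equiv.Perm ℕ, Nmat n w 0 l = Wl n l := by
      intro w
      unfold Nmat Wl
      congr 1
      apply Finset.filter_congr
      intro z _
      constructor
      · rintro ⟨a, _⟩; exact a
      · intro a; exact ⟨a, by omega⟩
    rw [e u, e v]
  · have hu1 := Nmat_add_cnt huOn (w := u) l hk
    have hv1 := Nmat_add_cnt hvOn (w := v) l hk
    rcases Nat.lt_or_ge (k-1) i with hc | hc
    · have hcu := cnt_small hu huOn hi1 hi2 (c := k-1) (by omega) l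
      have hcv := cnt_small hv hvOn hi1 hi2 (c := k-1) (by omega) l
      have := hD1 l
      omega
    · have hcu := cnt_big hu huOn hi1 hi2 (c := k-1) hc l
      have hcv := cnt_big hv hvOn hi1 hi2 (c := k-1) hc l
      have := hD2 l
      omega

end Brenti
namespace Brenti

variable {n i : ℕ}

lemma minrep_consec_small {w : Equiv.Perm ℕ} (hw : MinReps n {i-1, i} w)
    (hwOn : IsPermOn n w) (hi1 : 2 ≤ i) (hi2 : i ≤ n - 1) {j : ℕ}
    (hj : j ∈ Aset n i w) (hj1 : j + 1 ∈ Aset n i w) : w (j+1) = w j + 1 := by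
  have e1 := minrep_rank_small hw hwOn hi1 hi2 hj
  have e2 := minrep_rank_small hw hwOn hi1 hi2 hj1
  have hsub : insert (j+1) ((Aset n i w).filter (fun z => z ≤ j))
      ⊆ (Aset n i w).filter (fun z => z ≤ j + 1) := by
    intro z hz
    rcases Finset.mem_insert.1 hz with rfl | hz2
    · exact Finset.mem_filter.2 ⟨hj1, le_refl _⟩
    · rw [Finset.mem_filter] at hz2 ⊢
      exact ⟨hz2.1, by omega⟩
  have hsub2 : (Aset n i w).filter (fun z => z ≤ j + 1)
      ⊆ insert (j+1) ((Aset n i w).filter (fun z => z ≤ j)) := by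
    intro z hz
    rw [Finset.mem_filter] at hz
    rcases Nat.lt_or_ge z (j+1) with h1 | h1
    · exact Finset.mem_insert.2 (Or.inr (Finset.mem_filter.2 ⟨hz.1, by omega⟩))
    · have : z = j + 1 := by omega
      subst this
      exact Finset.mem_insert_self _ _
  have heq : (Aset n i w).filter (fun z => z ≤ j + 1)
      = insert (j+1) ((Aset n i w).filter (fun z => z ≤ j)) :=
    Finset.Subset.antisymm hsub2 hsub
  rw [heq, Finset.card_insert_of_notMem (by
    rw [Finset.mem_filter]; rintro ⟨_, h⟩; omega)] at e2
  omega

lemma minrep_consec_big {w : Equiv.Perm ℕ} (hw : MinReps n {i-1, i} w)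
    (hwOn : IsPermOn n w) (hi1 : 2 ≤ i) {j : ℕ}
    (hj : j ∈ Rest n i w) (hj1 : j + 1 ∈ Rest n i w) : w (j+1) = w j + 1 := by
  have e1 := minrep_rank_big hw hwOn hi1 hj
  have e2 := minrep_rank_big hw hwOn hi1 hj1
  have heq : (Rest n i w).filter (fun z => z ≤ j + 1)
      = insert (j+1) ((Rest n i w).filter (fun z => z ≤ j)) := by
    apply Finset.Subset.antisymm
    · intro z hz
      rw [Finset.mem_filter] at hz
      rcases Nat.lt_or_ge z (j+1) with h1 | h1
      · exact Finset.mem_insert.2 (Or.inr (Finset.mem_filter.2 ⟨hz.1, by omega⟩))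
      · have : z = j + 1 := by omega
        subst this
        exact Finset.mem_insert_self _ _
    · intro z hz
      rcases Finset.mem_insert.1 hz with rfl | hz2
      · exact Finset.mem_filter.2 ⟨hj1, le_refl _⟩
      · rw [Finset.mem_filter] at hz2 ⊢
        exact ⟨hz2.1, by omega⟩
  rw [heq, Finset.card_insert_of_notMem (by
    rw [Finset.mem_filter]; rintro ⟨_, h⟩; omega)] at e2
  omega

lemma mul_sAdj_symm {w : Equiv.Perm ℕ} {j k : ℕ} :
    (w * sAdj j).symm k = sAdj j (w.symm k) := by
  have : (w * sAdj j)⁻¹ = (sAdj j)⁻¹ * w⁻¹ := mul_inv_rev w (sAdj j)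
  have h2 : (sAdj j)⁻¹ = sAdj j := by
    simp [sAdj]
  calc (w * sAdj j).symm k = ((w * sAdj j)⁻¹ : Equiv.Perm ℕ) k := rfl
    _ = ((sAdj j)⁻¹ * w⁻¹ : Equiv.Perm ℕ) k := by rw [this]
    _ = sAdj j (w.symm k) := by rw [h2]; rfl

/-- Characterization of when `w * sAdj j` is again a minimal representative. -/
lemma minrep_mul_sAdj_iff {w : Equiv.Perm ℕ} (hw : MinReps n {i-1, i} w)
    (hwOn : IsPermOn n w) {j : ℕ} (hj1 : 1 ≤ j) (hj2 : j + 1 ≤ n)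
    (hjI : j ∈ Finset.Icc 1 n) :
    MinReps n {i-1, i} (w * sAdj j) ↔ ¬(w (j+1) = w j + 1 ∧ w j ≠ i - 1 ∧ w j ≠ i) := by
  have hwsOn : IsPermOn n (w * sAdj j) := isPermOn_mul' hwOn (isPermOn_sAdj hj1 hj2)
  constructor
  · intro hm
    rintro ⟨hcons, hE1, hE2⟩
    have hwjI : w j ∈ Finset.Icc 1 n := (isPermOn_mem_iff hwOn).2 hjI
    have hwj1I : w (j+1) ∈ Finset.Icc 1 n := (isPermOn_mem_iff hwOn).2 (by simp; omega)
    simp only [Finset.mem_Icc] at hwjI hwj1I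
    have h1 : (w * sAdj j).symm (w j) = j + 1 := by
      rw [mul_sAdj_symm, w.symm_apply_apply, sAdj, Equiv.swap_apply_left]
    have h2 : (w * sAdj j).symm (w j + 1) = j := by
      rw [mul_sAdj_symm, ← hcons, w.symm_apply_apply, sAdj, Equiv.swap_apply_right]
    have h3 : (w * sAdj j).symm (w j + 1) < (w * sAdj j).symm (w j) := by
      rw [h1, h2]; omega
    have h4 := invNum_sAdj_mul' hwsOn (k := w j) (by omega) (by omega) h3
    have h5 := hm (w j) (by omega) (by omega) (not_mem_E hE1 hE2)
    omega
  · intro hnc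
    intro k hk1 hk2 hkE
    have hkE1 : k ≠ i - 1 := fun e => hkE (by rw [e]; left; rfl)
    have hkE2 : k ≠ i := fun e => hkE (by rw [e]; right; rfl)
    have hbase := minrep_symm_succ_lt hw hwOn hk1 (by omega) hkE1 hkE2
    have hlt : (w * sAdj j).symm k < (w * sAdj j).symm (k+1) := by
      rw [mul_sAdj_symm, mul_sAdj_symm]
      rw [sAdj, swap_succ_lt]
      · exact hbase
      · rintro ⟨e1, e2⟩
        apply hnc
        have hwj : w j = k := by rw [← e1, w.apply_symm_apply]
        have hwj1 : w (j+1) = k + 1 := by rw [← e2, w.apply_symm_apply]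
        exact ⟨by omega, by omega, by omega⟩
      · rintro ⟨e1, e2⟩
        omega
    have := invNum_sAdj_mul hwsOn hk1 (by omega) hlt
    omega

/-- `Aset` of `w * sAdj j` is obtained by swapping `j` and `j+1`. -/
lemma mem_aset_mul_sAdj {w : Equiv.Perm ℕ} {j r : ℕ} (hj1 : 1 ≤ j) (hj2 : j + 1 ≤ n) :
    r ∈ Aset n i (w * sAdj j) ↔ sAdj j r ∈ Aset n i w := by
  have hsOn : IsPermOn n (sAdj j) := isPermOn_sAdj hj1 hj2
  simp only [mem_aset_iff, Equiv.Perm.mul_apply]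
  constructor
  · rintro ⟨h1, h2, h3⟩
    exact ⟨(isPermOn_mem_iff hsOn).2 h1, h2, h3⟩
  · rintro ⟨h1, h2, h3⟩
    exact ⟨(isPermOn_mem_iff hsOn).1 h1, h2, h3⟩

lemma posLT_eq_card {m' j : ℕ} {w : Equiv.Perm ℕ} :
    posLT n m' j w = ((Finset.Icc 1 n).filter (fun r => r < j ∧ w r ∈ Finset.Icc 1 m')).card :=
  rfl

/-- `posLT` in terms of `Aset`. -/
lemma posLT_eq_aset {j : ℕ} {w : Equiv.Perm ℕ} :
    posLT n (i-1) j w = ((Aset n i w).filter (fun z => z < j)).card := by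
  rw [posLT_eq_card]
  congr 1
  rw [Aset, Finset.filter_filter]
  apply Finset.filter_congr
  intro z _
  try simp only [eq_iff_iff]
  constructor
  · rintro ⟨h1, h2⟩; exact ⟨h2, h1⟩
  · rintro ⟨h1, h2⟩; exact ⟨h2, h1⟩

lemma posLT_succ {m' j : ℕ} {w : Equiv.Perm ℕ} (hjI : j ∈ Finset.Icc 1 n) :
    posLT n m' (j+1) w = posLT n m' j w + (if w j ∈ Finset.Icc 1 m' then 1 else 0) := by
  rw [posLT_eq_card, posLT_eq_card]
  rw [card_filter_erase' (fun r => r < j + 1 ∧ w r ∈ Finset.Icc 1 m') hjI,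
      card_filter_erase' (fun r => r < j ∧ w r ∈ Finset.Icc 1 m') hjI]
  have he : ((Finset.Icc 1 n).erase j).filter (fun r => r < j + 1 ∧ w r ∈ Finset.Icc 1 m')
      = ((Finset.Icc 1 n).erase j).filter (fun r => r < j ∧ w r ∈ Finset.Icc 1 m') := by
    apply Finset.filter_congr
    intro z hz
    simp only [Finset.mem_erase] at hz
    try simp only [eq_iff_iff]
    constructor
    · rintro ⟨h1, h2⟩; exact ⟨by omega, h2⟩
    · rintro ⟨h1, h2⟩; exact ⟨by omega, h2⟩
  rw [he]
  split_ifs with h1 h2 h2 <;> simp_all <;> omega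

/-- `posLT` is unchanged by `sAdj j` at indices `≤ j`. -/
lemma posLT_mul_sAdj_le {m' j r : ℕ} {w : Equiv.Perm ℕ} (hj1 : 1 ≤ j) (hr : r ≤ j) :
    posLT n m' r (w * sAdj j) = posLT n m' r w := by
  rw [posLT_eq_card, posLT_eq_card]
  congr 1
  apply Finset.filter_congr
  intro z _
  try simp only [eq_iff_iff]
  have hz : ∀ (h : z < r), (w * sAdj j) z = w z := by
    intro h
    simp only [Equiv.Perm.mul_apply, sAdj]
    rw [Equiv.swap_apply_of_ne_of_ne (by omega) (by omega)]
  constructor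
  · rintro ⟨h1, h2⟩; rw [hz h1] at h2; exact ⟨h1, h2⟩
  · rintro ⟨h1, h2⟩; rw [← hz h1] at h2; exact ⟨h1, h2⟩

/-- `posLT` is unchanged by `sAdj j` at indices `≥ j+2`. -/
lemma posLT_mul_sAdj_ge {m' j r : ℕ} {w : Equiv.Perm ℕ} (hj1 : 1 ≤ j) (hj2 : j + 1 ≤ n)
    (hr : j + 2 ≤ r) : posLT n m' r (w * sAdj j) = posLT n m' r w := by
  rw [posLT_eq_card, posLT_eq_card]
  have hsOn : IsPermOn n (sAdj j) := isPermOn_sAdj hj1 hj2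
  have hss : ∀ z, sAdj j (sAdj j z) = z := fun z => Equiv.swap_apply_self _ _ _
  have hlt : ∀ z, z < r → sAdj j z < r := by
    intro z hz
    simp only [sAdj, Equiv.swap_apply_def]
    split_ifs <;> omega
  apply Finset.card_nbij' (fun z => sAdj j z) (fun z => sAdj j z)
  · intro z hz
    simp only [Finset.mem_coe, Finset.mem_filter] at hz ⊢
    simp only [Finset.mem_coe, Finset.mem_filter, Equiv.Perm.mul_apply] at hz ⊢
    exact ⟨(isPermOn_mem_iff hsOn).2 hz.1, hlt z hz.2.1, hz.2.2⟩
  · intro z hz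
    simp only [Finset.mem_coe, Finset.mem_filter] at hz ⊢
    simp only [Finset.mem_coe, Finset.mem_filter, Equiv.Perm.mul_apply] at hz ⊢
    exact ⟨(isPermOn_mem_iff hsOn).2 hz.1, hlt z hz.2.1, by rw [hss]; exact hz.2.2⟩
  · intro z _
    exact hss z
  · intro z _
    exact hss z

end Brenti
namespace Brenti

variable {n i : ℕ}

lemma posLT_zero {m' : ℕ} {w : Equiv.Perm ℕ} : posLT n m' 0 w = 0 := by
  rw [posLT_eq_card]
  rw [Finset.card_eq_zero, Finset.filter_eq_empty_iff]
  intro z _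
  rintro ⟨h, _⟩
  omega

lemma posLT_one {m' : ℕ} {w : Equiv.Perm ℕ} : posLT n m' 1 w = 0 := by
  rw [posLT_eq_card]
  rw [Finset.card_eq_zero, Finset.filter_eq_empty_iff]
  intro z hz
  simp only [Finset.mem_Icc] at hz
  rintro ⟨h, _⟩
  omega

lemma posLT_succ_out {m' j : ℕ} {w : Equiv.Perm ℕ} (hj : n < j) :
    posLT n m' (j+1) w = posLT n m' j w := by
  rw [posLT_eq_card, posLT_eq_card]
  congr 1
  apply Finset.filter_congr
  intro z hz
  simp only [Finset.mem_Icc] at hz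
  constructor
  · rintro ⟨h1, h2⟩; exact ⟨by omega, h2⟩
  · rintro ⟨h1, h2⟩; exact ⟨by omega, h2⟩

lemma filter_le_card_eq {s : Finset ℕ} {r : ℕ} :
    (s.filter (fun z => z ≤ r)).card
      = (s.filter (fun z => z < r)).card + (if r ∈ s then 1 else 0) := by
  by_cases hr : r ∈ s
  · rw [if_pos hr, card_filter_erase' (fun z => z ≤ r) hr]
    have he : (s.erase r).filter (fun z => z ≤ r) = (s.erase r).filter (fun z => z < r) := by
      apply Finset.filter_congr
      intro z hz
      simp only [Finset.mem_erase] at hz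
      constructor
      · intro h; omega
      · intro h; omega
    rw [he, if_pos (le_refl _), Finset.filter_erase]
    rw [Finset.erase_eq_of_notMem (by
      rw [Finset.mem_filter]
      rintro ⟨_, h⟩
      omega)]
  · rw [if_neg hr]
    have he : s.filter (fun z => z ≤ r) = s.filter (fun z => z < r) := by
      apply Finset.filter_congr
      intro z hz
      constructor
      · intro h
        rcases Nat.lt_or_ge z r with h1 | h1
        · exact h1
        · exfalso; have : z = r := by omega
          subst this; exact hr hz
      · intro h; omega
    rw [he]
    omega

lemma posLT_eq_filter_le {w : Equiv.Perm ℕ} {l : ℕ} :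
    posLT n (i-1) (l+1) w = ((Aset n i w).filter (fun z => z ≤ l)).card := by
  rw [posLT_eq_aset]
  congr 1
  apply Finset.filter_congr
  intro z _
  constructor
  · intro h; omega
  · intro h; omega

lemma cnt_aset {w : Equiv.Perm ℕ} (l : ℕ) :
    cnt n w (i-1) l = ((Aset n i w).filter (fun z => z ≤ l)).card := by
  unfold cnt
  rw [Aset, Finset.filter_filter]
  congr 1
  apply Finset.filter_congr
  intro z _
  constructor
  · rintro ⟨h1, h2⟩; exact ⟨h2, h1⟩
  · rintro ⟨h1, h2⟩; exact ⟨h2, h1⟩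

/-- Dominance yields D1 (all the posLT inequalities). -/
lemma dom_D1 {u v : Equiv.Perm ℕ} (huOn : IsPermOn n u) (hvOn : IsPermOn n v)
    (hi1 : 2 ≤ i) (hdom : Dom n u v) (r : ℕ) :
    posLT n (i-1) r v ≤ posLT n (i-1) r u := by
  rcases r with _ | l
  · rw [posLT_zero, posLT_zero]
  · rw [posLT_eq_filter_le, posLT_eq_filter_le]
    have hu1 := Nmat_add_cnt huOn (w := u) (k := i) l (by omega)
    have hv1 := Nmat_add_cnt hvOn (w := v) (k := i) l (by omega)
    rw [cnt_aset] at hu1 hv1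
    have := hdom i l
    omega

/-- Dominance yields strict inequalities on `D̃ = Aset v \ Aset u`. -/
lemma dom_D1_strict {u v : Equiv.Perm ℕ} (huOn : IsPermOn n u) (hvOn : IsPermOn n v)
    (hi1 : 2 ≤ i) (hdom : Dom n u v) {r : ℕ} (hrv : r ∈ Aset n i v) (hru : r ∉ Aset n i u) :
    posLT n (i-1) r v < posLT n (i-1) r u := by
  have h1 : posLT n (i-1) (r+1) v ≤ posLT n (i-1) (r+1) u := dom_D1 huOn hvOn hi1 hdom (r+1)
  rw [posLT_eq_filter_le, posLT_eq_filter_le, filter_le_card_eq, filter_le_card_eq] at h1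
  rw [if_pos hrv, if_neg hru] at h1
  rw [posLT_eq_aset, posLT_eq_aset]
  omega

/-- Sufficiency of D1-exponents for dominance (with `u⁻¹(i) ≤ v⁻¹(i)`). -/
lemma dom_of_exponents {u v : Equiv.Perm ℕ} (hu : MinReps n {i-1, i} u)
    (hv : MinReps n {i-1, i} v) (huOn : IsPermOn n u) (hvOn : IsPermOn n v)
    (hi1 : 2 ≤ i) (hi2 : i ≤ n - 1) (hple : u.symm i ≤ v.symm i)
    (hexp : ∀ r, r ∈ Aset n i v → r ∉ Aset n i u →
      posLT n (i-1) r v < posLT n (i-1) r u) :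
    Dom n u v := by
  -- first establish D1 by a first-failure induction
  have hD1 : ∀ r, posLT n (i-1) r v ≤ posLT n (i-1) r u := by
    intro r
    induction r with
    | zero => rw [posLT_zero, posLT_zero]
    | succ l ihl =>
      by_cases hlI : l ∈ Finset.Icc 1 n
      · rw [posLT_succ hlI, posLT_succ hlI]
        by_cases hlv : v l ∈ Finset.Icc 1 (i-1)
        · rw [if_pos hlv]
          have hlBv : l ∈ Aset n i v := by
            rw [mem_aset_iff]
            simp only [Finset.mem_Icc] at hlv
            exact ⟨hlI, hlv.1, hlv.2⟩
          by_cases hlu : u l ∈ Finset.Icc 1 (i-1)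
          · rw [if_pos hlu]
            omega
          · rw [if_neg hlu]
            have hlAu : l ∉ Aset n i u := by
              rw [mem_aset_iff]
              rintro ⟨_, h1, h2⟩
              exact hlu (by simp; omega)
            have := hexp l hlBv hlAu
            rw [posLT_eq_aset, posLT_eq_aset] at this ⊢
            omega
        · rw [if_neg hlv]
          split_ifs <;> omega
      · rcases Nat.eq_zero_or_pos l with rfl | hl
        · rw [posLT_one, posLT_one]
        · have hln : n < l := by
            simp only [Finset.mem_Icc] at hlI
            omega
          rw [posLT_succ_out hln, posLT_succ_out hln]
          exact ihl
  -- now conclude dominance via the D1/D2 counting criterion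
  apply dom_of_data hu hv huOn hvOn hi1 hi2
  · intro l
    have := hD1 (l+1)
    rw [posLT_eq_filter_le, posLT_eq_filter_le] at this
    exact this
  · intro l
    rw [apset_filter_card huOn hi1 hi2, apset_filter_card hvOn hi1 hi2]
    have h1 := hD1 (l+1)
    rw [posLT_eq_filter_le, posLT_eq_filter_le] at h1
    split_ifs <;> omega

end Brenti
namespace Brenti

variable {n i : ℕ}

open Polynomial

/-- The c-part of Brenti's formula. -/
noncomputable def cpart (n i : ℕ) (u v : Equiv.Perm ℕ) : Polynomial ℤ :=
  1 - X + (if u.symm i = v.symm i then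
      X ^ (1 + ((posLT n (i - 1) (v.symm i) u : ℤ) - posLT n (i - 1) (v.symm i) v).toNat)
    else 0)

def Dset (n i : ℕ) (u v : Equiv.Perm ℕ) : Finset ℕ := Aset n i v \ Aset n i u

/-- The exponent in the product part. -/
def eExp (n i : ℕ) (u v : Equiv.Perm ℕ) (r : ℕ) : ℕ :=
  ((posLT n (i - 1) r u : ℤ) - posLT n (i - 1) r v).toNat

noncomputable def prodpart (n i : ℕ) (u v : Equiv.Perm ℕ) : Polynomial ℤ :=
  ∏ j ∈ Dset n i u v, (1 - X ^ eExp n i u v j)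

/-- Brenti's formula. -/
noncomputable def FF (n i : ℕ) (u v : Equiv.Perm ℕ) : Polynomial ℤ :=
  (-1) ^ (invNum n v - invNum n u) * cpart n i u v * prodpart n i u v

lemma FF_spec (n i : ℕ) (u v : Equiv.Perm ℕ) :
    FF n i u v = (-1) ^ (invNum n v - invNum n u) *
      (1 - X + (if u.symm i = v.symm i then
          X ^ (1 + ((posLT n (i - 1) (v.symm i) u : ℤ) -
            posLT n (i - 1) (v.symm i) v).toNat)
        else 0)) *
      ∏ j ∈ ((Finset.Icc 1 n).filter (fun r => v r ∈ Finset.Icc 1 (i - 1))) \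
             ((Finset.Icc 1 n).filter (fun r => u r ∈ Finset.Icc 1 (i - 1))),
        (1 - X ^ ((posLT n (i - 1) j u : ℤ) - posLT n (i - 1) j v).toNat) := rfl

lemma cpart_ne_zero (u v : Equiv.Perm ℕ) : cpart n i u v ≠ 0 := by
  intro h
  have hc := congrArg (fun p => Polynomial.coeff p 0) h
  simp only [cpart] at hc
  rw [Polynomial.coeff_add, Polynomial.coeff_sub] at hc
  rw [Polynomial.coeff_one, Polynomial.coeff_X_zero] at hc
  have h2 : (if u.symm i = v.symm i then
      (X : Polynomial ℤ) ^ (1 + ((posLT n (i - 1) (v.symm i) u : ℤ) -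
        posLT n (i - 1) (v.symm i) v).toNat) else 0).coeff 0 = 0 := by
    split_ifs with h3
    · rw [Polynomial.coeff_X_pow]
      simp only [if_neg (by omega : ¬ (0 : ℕ) = 1 + ((posLT n (i - 1) ((Equiv.symm v) i) u : ℤ) - posLT n (i - 1) ((Equiv.symm v) i) v).toNat)]
    · simp
  rw [h2] at hc
  simp at hc

lemma FF_self (u : Equiv.Perm ℕ) : FF n i u u = 1 := by
  unfold FF cpart prodpart Dset
  rw [Finset.sdiff_self, Finset.prod_empty]
  rw [if_pos rfl]
  have h1 : ((posLT n (i - 1) (u.symm i) u : ℤ) - posLT n (i - 1) (u.symm i) u).toNat = 0 := by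
    omega
  rw [h1, Nat.sub_self]
  ring

/-- If the formula is nonzero then dominance holds. -/
lemma dom_of_FF_ne_zero {u v : Equiv.Perm ℕ} (hu : MinReps n {i-1, i} u)
    (hv : MinReps n {i-1, i} v) (huOn : IsPermOn n u) (hvOn : IsPermOn n v)
    (hi1 : 2 ≤ i) (hi2 : i ≤ n - 1) (hple : u.symm i ≤ v.symm i)
    (hFF : FF n i u v ≠ 0) : Dom n u v := by
  apply dom_of_exponents hu hv huOn hvOn hi1 hi2 hple
  intro r hrv hru
  by_contra hge
  apply hFF
  have hr : r ∈ Dset n i u v := Finset.mem_sdiff.2 ⟨hrv, hru⟩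
  have he : eExp n i u v r = 0 := by
    unfold eExp
    omega
  unfold FF
  rw [mul_eq_zero]
  right
  unfold prodpart
  apply Finset.prod_eq_zero hr
  rw [he]
  simp

/-- The swap `sAdj j` preserves `≤` provided the larger point is not `j+1`. -/
lemma swap_ple {j pu P : ℕ} (hP : P ≠ j + 1) (h : pu ≤ P) : sAdj j pu ≤ sAdj j P := by
  simp only [sAdj, Equiv.swap_apply_def]
  split_ifs <;> omega

lemma posLT_mul_sAdj_ne {m' j r : ℕ} {w : Equiv.Perm ℕ} (hj1 : 1 ≤ j) (hj2 : j + 1 ≤ n)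
    (hr : r ≠ j + 1) : posLT n m' r (w * sAdj j) = posLT n m' r w := by
  rcases le_or_gt r j with h1 | h1
  · exact posLT_mul_sAdj_le hj1 h1
  · exact posLT_mul_sAdj_ge hj1 hj2 (by omega)

lemma mul_sAdj_apply_left {w : Equiv.Perm ℕ} {j : ℕ} : (w * sAdj j) j = w (j+1) := by
  simp [sAdj, Equiv.Perm.mul_apply, Equiv.swap_apply_left]

lemma mul_sAdj_apply_right {w : Equiv.Perm ℕ} {j : ℕ} : (w * sAdj j) (j+1) = w j := by
  simp [sAdj, Equiv.Perm.mul_apply, Equiv.swap_apply_right]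

lemma posLT_mul_sAdj_succ {m' j : ℕ} {w : Equiv.Perm ℕ} (hj1 : 1 ≤ j) (hj2 : j + 1 ≤ n) :
    posLT n m' (j+1) (w * sAdj j) + (if w j ∈ Finset.Icc 1 m' then 1 else 0)
      = posLT n m' (j+1) w + (if w (j+1) ∈ Finset.Icc 1 m' then 1 else 0) := by
  have hjI : j ∈ Finset.Icc 1 n := by simp; omega
  rw [posLT_succ (w := w * sAdj j) hjI, posLT_succ (w := w) hjI]
  rw [posLT_mul_sAdj_le hj1 (le_refl j), mul_sAdj_apply_left]
  omega

-- sign lemmas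
lemma sign_sub_one {a b : ℕ} (h : b < a) :
    ((-1 : Polynomial ℤ)) ^ ((a - 1) - b) = -((-1) ^ (a - b)) := by
  have he : a - b = ((a - 1) - b) + 1 := by omega
  rw [he, pow_succ]
  ring

lemma sign_sub_both {a b : ℕ} (hb : 1 ≤ b) (h : b ≤ a) :
    ((-1 : Polynomial ℤ)) ^ ((a - 1) - (b - 1)) = (-1) ^ (a - b) := by
  congr 1
  omega

lemma sign_sub_two {a b : ℕ} (h : b + 2 ≤ a) :
    ((-1 : Polynomial ℤ)) ^ ((a - 1) - (b + 1)) = (-1) ^ (a - b) := by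
  have he : a - b = ((a - 1) - (b + 1)) + 2 := by omega
  rw [he, pow_add]
  ring

/-- The polynomial identity for branch 2 in configurations G2/G4. -/
lemma poly_branch2_main {M P0 : Polynomial ℤ} {e a b : ℕ} (hab : b < a)
    (hcase : b + 2 ≤ a ∨ (1 - X ^ e) * P0 = 0) :
    (-1) ^ (a - b) * M * ((1 - X ^ (e + 1)) * P0)
      = X * ((-1) ^ ((a - 1) - (b + 1)) * M * ((1 - X ^ e) * P0))
        + (X - 1) * ((-1) ^ ((a - 1) - b) * M * P0) := by
  rw [sign_sub_one hab]
  rcases hcase with h | h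
  · rw [sign_sub_two h, pow_succ]
    ring
  · have he : (1 - X ^ (e + 1)) * P0 = (1 - X) * P0 + X * ((1 - X ^ e) * P0) := by
      rw [pow_succ]
      ring
    rw [he, h]
    ring

/-- The polynomial identity for branch 2 in configuration G6 with `c = 1`. -/
lemma poly_branch2_c1 {P0 : Polynomial ℤ} {e a b : ℕ} (hab : b < a) (he : 1 ≤ e)
    (hcase : b + 2 ≤ a ∨ (1 - X ^ e) * P0 = 0) :
    (-1) ^ (a - b) * (1 - X + X ^ (1 + e)) * ((1 - X ^ e) * P0)
      = X * ((-1) ^ ((a - 1) - (b + 1)) * (1 - X + X ^ e) * ((1 - X ^ e) * P0))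
        + (X - 1) * ((-1) ^ ((a - 1) - b) * (1 - X) * ((1 - X ^ e) * P0)) := by
  rw [sign_sub_one hab]
  rcases hcase with h | h
  · rw [sign_sub_two h]
    have h1 : (1 : ℕ) + e = e + 1 := by omega
    rw [h1, pow_succ]
    ring
  · rw [h]
    ring

/-- The polynomial identity for branch 2 in configuration G6 with `c = 0`. -/
lemma poly_branch2_c0 {M Q : Polynomial ℤ} {a b : ℕ} (hab : b < a)
    (hcase : b + 2 ≤ a ∨ Q = 0) :
    (-1) ^ (a - b) * M * Q
      = X * ((-1) ^ ((a - 1) - (b + 1)) * M * Q)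
        + (X - 1) * ((-1) ^ ((a - 1) - b) * M * Q) := by
  rw [sign_sub_one hab]
  rcases hcase with h | h
  · rw [sign_sub_two h]
    ring
  · rw [h]
    ring

/-- The polynomial identity for branch 3. -/
lemma poly_branch3 {M Q : Polynomial ℤ} {a b : ℕ} (hab : b < a) :
    (-1) ^ (a - b) * M * Q = -((-1) ^ ((a - 1) - b) * M * Q) := by
  rw [sign_sub_one hab]
  ring

/-- Reindexing a product when one index moves from `j+1` to `j` with equal factor. -/
lemma prod_reindex {D : Finset ℕ} {j : ℕ} (f g : ℕ → Polynomial ℤ)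
    (hj1 : j + 1 ∈ D) (hj : j ∉ D) (hfg : g j = f (j+1))
    (hagree : ∀ r ∈ D.erase (j+1), g r = f r) :
    ∏ r ∈ insert j (D.erase (j+1)), g r = ∏ r ∈ D, f r := by
  rw [Finset.prod_insert (by
    rw [Finset.mem_erase]
    rintro ⟨_, h⟩
    exact hj h)]
  rw [Finset.prod_congr rfl hagree, hfg]
  exact Finset.mul_prod_erase D f hj1

end Brenti
namespace Brenti

variable {n i : ℕ}

lemma aset_mem_def {w : Equiv.Perm ℕ} {r : ℕ} :
    r ∈ Aset n i w ↔ r ∈ Finset.Icc 1 n ∧ w r ∈ Finset.Icc 1 (i-1) := Finset.mem_filter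

lemma mem_Dset {u v : Equiv.Perm ℕ} {r : ℕ} :
    r ∈ Dset n i u v ↔ r ∈ Aset n i v ∧ r ∉ Aset n i u := Finset.mem_sdiff

lemma ple_smul {j pu P : ℕ} (hP : P ≠ j + 1) (h : pu ≤ P) : pu ≤ sAdj j P := by
  simp only [sAdj, Equiv.swap_apply_def]
  split_ifs <;> omega

end Brenti
namespace Brenti

variable {n i : ℕ}

open Polynomial

def IH (n i : ℕ) (R : Equiv.Perm ℕ → Equiv.Perm ℕ → Polynomial ℤ) (N : ℕ) : Prop :=
  ∀ v u : Equiv.Perm ℕ, invNum n v < N →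
    IsPermOn n u → IsPermOn n v → MinReps n {i-1, i} u → MinReps n {i-1, i} v →
    Dom n u v → u.symm i ≤ v.symm i → R u v = FF n i u v

lemma R_eq_FF_sub (hi1 : 2 ≤ i) (hi2 : i ≤ n - 1)
    {R : Equiv.Perm ℕ → Equiv.Perm ℕ → Polynomial ℤ} (hR : IsRFamilyQ n {i-1, i} R)
    {N : ℕ} (hIH : IH n i R N) {u' v' : Equiv.Perm ℕ} (hN : invNum n v' < N)
    (hu'On : IsPermOn n u') (hv'On : IsPermOn n v') (hu' : MinReps n {i-1, i} u')
    (hv' : MinReps n {i-1, i} v') (hple : u'.symm i ≤ v'.symm i) :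
    R u' v' = FF n i u' v' := by
  by_cases hd : Dom n u' v'
  · exact hIH v' u' hN hu'On hv'On hu' hv' hd hple
  · have hnb : ¬ BruhatLE n u' v' := fun hb => hd (bruhatLE_dom hb)
    rw [hR.1 u' v' hu' hv' hnb]
    by_cases hFF : FF n i u' v' = 0
    · rw [hFF]
    · exact absurd (dom_of_FF_ne_zero hu' hv' hu'On hv'On hi1 hi2 hple hFF) hd

lemma sAdj_left {j : ℕ} : sAdj j j = j + 1 := Equiv.swap_apply_left _ _
lemma sAdj_right {j : ℕ} : sAdj j (j+1) = j := Equiv.swap_apply_right _ _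
lemma sAdj_other {j r : ℕ} (h1 : r ≠ j) (h2 : r ≠ j + 1) : sAdj j r = r :=
  Equiv.swap_apply_of_ne_of_ne h1 h2

/-- Extract `Q = 0` or the length gap from the dominance case split (branch 2). -/
lemma branch2_case_split (hi1 : 2 ≤ i) (hi2 : i ≤ n - 1)
    {us vs : Equiv.Perm ℕ} (husOn : IsPermOn n us) (hvsOn : IsPermOn n vs)
    (hus' : MinReps n {i-1, i} us) (hvs' : MinReps n {i-1, i} vs)
    (hple : us.symm i ≤ vs.symm i) {a b : ℕ}
    (hus : invNum n us = b + 1) (hvs : invNum n vs = a - 1) (hab : b < a)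
    {Q : Polynomial ℤ} (hFFQ : ∀ M : Polynomial ℤ, M ≠ 0 →
      FF n i us vs = (-1) ^ (invNum n vs - invNum n us) * M * Q → (¬ Dom n us vs → Q = 0)) 
    {M : Polynomial ℤ} (hM : M ≠ 0)
    (hFF : FF n i us vs = (-1) ^ (invNum n vs - invNum n us) * M * Q) :
    b + 2 ≤ a ∨ Q = 0 := by
  by_cases hd : Dom n us vs
  · left
    have h1 := bruhatLE_invNum_le (dom_bruhatLE husOn hvsOn hd)
    omega
  · right
    exact hFFQ M hM hFF hd

lemma Q_zero_of_FF_zero {k : ℕ} {M Q : Polynomial ℤ} (hM : M ≠ 0)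
    (h : (-1 : Polynomial ℤ) ^ k * M * Q = 0) : Q = 0 := by
  rcases mul_eq_zero.1 h with h1 | h1
  · rcases mul_eq_zero.1 h1 with h2 | h2
    · exfalso
      have : ((-1 : Polynomial ℤ)) ^ k ≠ 0 := by
        apply pow_ne_zero
        intro hc
        have := congrArg (fun p => Polynomial.coeff p 0) hc
        simp at this
      exact this h2
    · exact absurd h2 hM
  · exact h1

set_option maxHeartbeats 1000000 in
/-- The main induction. -/
lemma main_lemma (hi1 : 2 ≤ i) (hi2 : i ≤ n - 1)
    {R : Equiv.Perm ℕ → Equiv.Perm ℕ → Polynomial ℤ} (hR : IsRFamilyQ n {i-1, i} R) :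
    ∀ N : ℕ, IH n i R N := by
  intro N
  induction N using Nat.strong_induction_on with
  | _ N ihN =>
  intro v u hN huOn hvOn hu' hv' hdom hple
  have hIH : IH n i R (invNum n v) := ihN (invNum n v) hN
  by_cases heq : u = v
  · subst heq
    rw [hR.2.1 u hu', FF_self]
  have hbr : BruhatLE n u v := dom_bruhatLE huOn hvOn hdom
  have hlt : invNum n u < invNum n v := bruhatLE_invNum_lt hbr heq
  have hD1 : ∀ r, posLT n (i-1) r v ≤ posLT n (i-1) r u := dom_D1 huOn hvOn hi1 hdom
  by_cases hC : ∃ j, 1 ≤ j ∧ j ∉ Aset n i v ∧ j + 1 ∈ Aset n i v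
  · obtain ⟨j, hj1, hjB, hj1B⟩ := hC
    -- common facts
    have hj1I : j + 1 ∈ Finset.Icc 1 n := (mem_aset_iff.1 hj1B).1
    have hjn : j + 1 ≤ n := by simp only [Finset.mem_Icc] at hj1I; omega
    have hjI : j ∈ Finset.Icc 1 n := by simp; omega
    have hvj1 := (mem_aset_iff.1 hj1B).2
    have hvjI := (isPermOn_mem_iff hvOn).2 hjI
    have hvj : i ≤ v j := by
      simp only [Finset.mem_Icc] at hvjI
      by_contra hc
      exact hjB (mem_aset_iff.2 ⟨hjI, by omega, by omega⟩)
    have hvdesc : v (j + 1) < v j := by omega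
    have hvsOn : IsPermOn n (v * sAdj j) := isPermOn_mul' hvOn (isPermOn_sAdj hj1 hjn)
    have hvs' : MinReps n {i-1, i} (v * sAdj j) := by
      rw [minrep_mul_sAdj_iff hv' hvOn hj1 hjn hjI]
      rintro ⟨hc, _⟩
      omega
    have hlvs : invNum n (v * sAdj j) + 1 = invNum n v := invNum_mul_sAdj' hvOn hj1 hjn hvdesc
    have hPB : v.symm i ∉ Aset n i v := symm_i_not_mem_aset hi1
    have hPj1 : v.symm i ≠ j + 1 := fun he => hPB (he ▸ hj1B)
    have hvssymm : (v * sAdj j).symm i = sAdj j (v.symm i) := mul_sAdj_symm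
    have hpuA : u.symm i ∉ Aset n i u := symm_i_not_mem_aset hi1
    have hBvs : ∀ r, r ∈ Aset n i (v * sAdj j) ↔ sAdj j r ∈ Aset n i v :=
      fun r => mem_aset_mul_sAdj hj1 hjn
    have hjBvs : j ∈ Aset n i (v * sAdj j) := (hBvs j).2 (by rw [sAdj_left]; exact hj1B)
    have hj1Bvs : j + 1 ∉ Aset n i (v * sAdj j) := fun hc => by
      rw [hBvs (j+1), sAdj_right] at hc
      exact hjB hc
    have hBvs_ne : ∀ r, r ≠ j → r ≠ j + 1 →
        (r ∈ Aset n i (v * sAdj j) ↔ r ∈ Aset n i v) := by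
      intro r h1 h2
      rw [hBvs r, sAdj_other h1 h2]
    -- more common facts
    have hpvs_ne : ∀ r, r ≠ j + 1 → posLT n (i-1) r (v * sAdj j) = posLT n (i-1) r v :=
      fun r hr => posLT_mul_sAdj_ne hj1 hjn hr
    have hvjns : v j ∉ Finset.Icc 1 (i-1) := by
      simp only [Finset.mem_Icc]
      omega
    have hvj1s : v (j+1) ∈ Finset.Icc 1 (i-1) := by
      simp only [Finset.mem_Icc]
      omega
    have hpvsucc : posLT n (i-1) (j+1) v = posLT n (i-1) j v := by
      have h0 := posLT_succ (w := v) (m' := i-1) hjI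
      rw [if_neg hvjns] at h0
      omega
    have hpvs_j1 : posLT n (i-1) (j+1) (v * sAdj j) = posLT n (i-1) j v + 1 := by
      have h0 := posLT_mul_sAdj_succ (w := v) (m' := i-1) hj1 hjn
      rw [if_neg hvjns, if_pos hvj1s] at h0
      omega
    have hAus : ∀ r, r ∈ Aset n i (u * sAdj j) ↔ sAdj j r ∈ Aset n i u :=
      fun r => mem_aset_mul_sAdj hj1 hjn
    have hAus_ne : ∀ r, r ≠ j → r ≠ j + 1 →
        (r ∈ Aset n i (u * sAdj j) ↔ r ∈ Aset n i u) := by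
      intro r h1 h2
      rw [hAus r, sAdj_other h1 h2]
    have hAus_j : j ∈ Aset n i (u * sAdj j) ↔ j + 1 ∈ Aset n i u := by
      rw [hAus j, sAdj_left]
    have hAus_j1 : j + 1 ∈ Aset n i (u * sAdj j) ↔ j ∈ Aset n i u := by
      rw [hAus (j+1), sAdj_right]
    have hpus_ne : ∀ r, r ≠ j + 1 → posLT n (i-1) r (u * sAdj j) = posLT n (i-1) r u :=
      fun r hr => posLT_mul_sAdj_ne hj1 hjn hr
    have hussymm : (u * sAdj j).symm i = sAdj j (u.symm i) := mul_sAdj_symm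
    have hujI := (isPermOn_mem_iff huOn).2 hjI
    have huj1I' := (isPermOn_mem_iff huOn).2 hj1I
    -- u-side case analysis
    by_cases hj1A : j + 1 ∈ Aset n i u
    · have hpuj1 : u.symm i ≠ j + 1 := fun he => hpuA (he ▸ hj1A)
      have huj1s : u (j+1) ∈ Finset.Icc 1 (i-1) := (aset_mem_def.1 hj1A).2
      have huj1v := (mem_aset_iff.1 hj1A).2
      by_cases hjA : j ∈ Aset n i u
      · -- G1 : j, j+1 ∈ Aset u : branch 3
        have hpuj : u.symm i ≠ j := fun he => hpuA (he ▸ hjA)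
        have hcons : u (j+1) = u j + 1 := minrep_consec_small hu' huOn hi1 hi2 hjA hj1A
        have hujv := (mem_aset_iff.1 hjA).2
        have huasc : ¬ (u (j+1) < u j) := by omega
        have husNot : ¬ MinReps n {i-1, i} (u * sAdj j) := by
          rw [minrep_mul_sAdj_iff hu' huOn hj1 hjn hjI]
          intro hcc
          exact hcc ⟨hcons, by omega, by omega⟩
        obtain ⟨_, _, hb3⟩ := hR.2.2 u v hu' hv' hbr heq j hj1 (by omega) hvdesc
        rw [hb3 huasc husNot]
        have hRsub : R u (v * sAdj j) = FF n i u (v * sAdj j) := by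
          apply R_eq_FF_sub hi1 hi2 hR hIH (by omega) huOn hvsOn hu' hvs'
          rw [hvssymm]
          exact ple_smul hPj1 hple
        rw [hRsub]
        have hcp : cpart n i u (v * sAdj j) = cpart n i u v := by
          unfold cpart
          rw [hvssymm]
          by_cases hc : u.symm i = v.symm i
          · have hPj : v.symm i ≠ j := fun he => hpuj (hc.trans he)
            rw [sAdj_other hPj hPj1, if_pos hc, hpvs_ne _ hPj1]
            rw [if_pos hc]
          · rw [if_neg hc]
            rw [if_neg (fun he => ?_)]
            by_cases hPj : v.symm i = j
            · rw [hPj, sAdj_left] at he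
              exact hpuj1 he
            · rw [sAdj_other hPj hPj1] at he
              exact hc he
        have hDeq : Dset n i u (v * sAdj j) = Dset n i u v := by
          ext r
          rw [mem_Dset, mem_Dset]
          by_cases h1 : r = j
          · subst h1
            constructor
            · rintro ⟨_, h3⟩
              exact absurd hjA h3
            · rintro ⟨h2, _⟩
              exact absurd hjA (by tauto)
          · by_cases h2 : r = j + 1
            · subst h2
              constructor
              · rintro ⟨h3, _⟩
                exact absurd h3 hj1Bvs
              · rintro ⟨_, h3⟩
                exact absurd hj1A h3
            · rw [hBvs_ne r h1 h2]
        have hpp : prodpart n i u (v * sAdj j) = prodpart n i u v := by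
          unfold prodpart
          rw [hDeq]
          apply Finset.prod_congr rfl
          intro r hr
          have hr2 : r ≠ j + 1 := by
            intro he
            subst he
            exact (mem_Dset.1 hr).2 hj1A
          unfold eExp
          rw [hpvs_ne r hr2]
        unfold FF
        rw [hcp, hpp]
        rw [show invNum n (v * sAdj j) = invNum n v - 1 from by omega]
        rw [sign_sub_one hlt]
        ring
      · -- H12 : j ∉ Aset u, j+1 ∈ Aset u : branch 1
        have huj : i ≤ u j := by
          simp only [Finset.mem_Icc] at hujI
          by_contra hc
          exact hjA (mem_aset_iff.2 ⟨hjI, by omega, by omega⟩)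
        have hujns : u j ∉ Finset.Icc 1 (i-1) := by
          simp only [Finset.mem_Icc]
          omega
        have hdesc : u (j+1) < u j := by omega
        have husOn : IsPermOn n (u * sAdj j) := isPermOn_mul' huOn (isPermOn_sAdj hj1 hjn)
        have hus' : MinReps n {i-1, i} (u * sAdj j) := by
          rw [minrep_mul_sAdj_iff hu' huOn hj1 hjn hjI]
          rintro ⟨hc, _⟩
          omega
        have hlus : invNum n (u * sAdj j) + 1 = invNum n u :=
          invNum_mul_sAdj' huOn hj1 hjn hdesc
        obtain ⟨hb1, _, _⟩ := hR.2.2 u v hu' hv' hbr heq j hj1 (by omega) hvdesc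
        rw [hb1 hdesc]
        have hRsub : R (u * sAdj j) (v * sAdj j) = FF n i (u * sAdj j) (v * sAdj j) := by
          apply R_eq_FF_sub hi1 hi2 hR hIH (by omega) husOn hvsOn hus' hvs'
          rw [hussymm, hvssymm]
          exact swap_ple hPj1 hple
        rw [hRsub]
        -- FF us vs = FF u v
        have hpussucc : posLT n (i-1) (j+1) u = posLT n (i-1) j u := by
          have h0 := posLT_succ (w := u) (m' := i-1) hjI
          rw [if_neg hujns] at h0
          omega
        have hpus_j1 : posLT n (i-1) (j+1) (u * sAdj j) = posLT n (i-1) j u + 1 := by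
          have h0 := posLT_mul_sAdj_succ (w := u) (m' := i-1) hj1 hjn
          rw [if_neg hujns, if_pos huj1s] at h0
          omega
        have hcp : cpart n i (u * sAdj j) (v * sAdj j) = cpart n i u v := by
          unfold cpart
          rw [hussymm, hvssymm]
          by_cases hc : u.symm i = v.symm i
          · rw [if_pos (by rw [hc]), if_pos hc]
            by_cases hPj : v.symm i = j
            · rw [hPj, sAdj_left]
              have hexpeq : ((posLT n (i-1) (j+1) (u * sAdj j) : ℤ)
                  - posLT n (i-1) (j+1) (v * sAdj j)).toNat
                  = ((posLT n (i-1) j u : ℤ) - posLT n (i-1) j v).toNat := by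
                have e1 := hpus_j1
                have e2 := hpvs_j1
                omega
              rw [hexpeq]
            · rw [sAdj_other hPj hPj1]
              congr 1
              rw [hpus_ne _ hPj1, hpvs_ne _ hPj1]
          · rw [if_neg (fun he => hc ((sAdj j).injective he)), if_neg hc]
        have hDeq : Dset n i (u * sAdj j) (v * sAdj j) = Dset n i u v := by
          ext r
          rw [mem_Dset, mem_Dset]
          by_cases h1 : r = j
          · subst h1
            constructor
            · rintro ⟨_, h3⟩
              exact absurd (hAus_j.2 hj1A) h3
            · rintro ⟨h2, _⟩
              exact absurd h2 hjB
          · by_cases h2 : r = j + 1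
            · subst h2
              constructor
              · rintro ⟨h3, _⟩
                exact absurd h3 hj1Bvs
              · rintro ⟨_, h3⟩
                exact absurd hj1A h3
            · rw [hBvs_ne r h1 h2, hAus_ne r h1 h2]
        have hpp : prodpart n i (u * sAdj j) (v * sAdj j) = prodpart n i u v := by
          unfold prodpart
          rw [hDeq]
          apply Finset.prod_congr rfl
          intro r hr
          have hr2 : r ≠ j + 1 := by
            intro he
            subst he
            exact (mem_Dset.1 hr).2 hj1A
          unfold eExp
          rw [hpvs_ne r hr2, hpus_ne r hr2]
        unfold FF
        rw [hcp, hpp]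
        rw [show invNum n (v * sAdj j) - invNum n (u * sAdj j)
            = invNum n v - invNum n u from by omega]
    · -- j + 1 ∉ Aset u
      have huj1 : i ≤ u (j+1) := by
        simp only [Finset.mem_Icc] at huj1I'
        by_contra hc
        exact hj1A (mem_aset_iff.2 ⟨hj1I, by omega, by omega⟩)
      have huj1ns : u (j+1) ∉ Finset.Icc 1 (i-1) := by
        simp only [Finset.mem_Icc]
        omega
      have hj1D : j + 1 ∈ Dset n i u v := mem_Dset.2 ⟨hj1B, hj1A⟩
      have hstrict : posLT n (i-1) (j+1) v < posLT n (i-1) (j+1) u :=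
        dom_D1_strict huOn hvOn hi1 hdom hj1B hj1A
      by_cases hjA : j ∈ Aset n i u
      · -- B2a (G2/G4) : j ∈ Aset u, j+1 ∉ Aset u : branch 2
        have hpuj : u.symm i ≠ j := fun he => hpuA (he ▸ hjA)
        have hjD : j ∉ Dset n i u v := fun hc => (mem_Dset.1 hc).2 hjA
        have hujv := (mem_aset_iff.1 hjA).2
        have hujs : u j ∈ Finset.Icc 1 (i-1) := (aset_mem_def.1 hjA).2
        have huasc : ¬ (u (j+1) < u j) := by omega
        have husOn : IsPermOn n (u * sAdj j) := isPermOn_mul' huOn (isPermOn_sAdj hj1 hjn)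
        have hus' : MinReps n {i-1, i} (u * sAdj j) := by
          rw [minrep_mul_sAdj_iff hu' huOn hj1 hjn hjI]
          rintro ⟨hc, hE1, _⟩
          exact hE1 (by omega)
        have hlus : invNum n (u * sAdj j) = invNum n u + 1 :=
          invNum_mul_sAdj huOn hj1 hjn (by omega)
        obtain ⟨_, hb2, _⟩ := hR.2.2 u v hu' hv' hbr heq j hj1 (by omega) hvdesc
        rw [hb2 huasc hus']
        have hRsub1 : R (u * sAdj j) (v * sAdj j) = FF n i (u * sAdj j) (v * sAdj j) := by
          apply R_eq_FF_sub hi1 hi2 hR hIH (by omega) husOn hvsOn hus' hvs'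
          rw [hussymm, hvssymm]
          exact swap_ple hPj1 hple
        have hRsub2 : R u (v * sAdj j) = FF n i u (v * sAdj j) := by
          apply R_eq_FF_sub hi1 hi2 hR hIH (by omega) huOn hvsOn hu' hvs'
          rw [hvssymm]
          exact ple_smul hPj1 hple
        rw [hRsub1, hRsub2]
        -- normal forms
        have hpussucc : posLT n (i-1) (j+1) u = posLT n (i-1) j u + 1 := by
          have h0 := posLT_succ (w := u) (m' := i-1) hjI
          rw [if_pos hujs] at h0
          omega
        have hpus_j1 : posLT n (i-1) (j+1) (u * sAdj j) = posLT n (i-1) j u := by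
          have h0 := posLT_mul_sAdj_succ (w := u) (m' := i-1) hj1 hjn
          rw [if_pos hujs, if_neg huj1ns] at h0
          omega
        set E := eExp n i (u * sAdj j) (v * sAdj j) j with hEdef
        have hE : (eExp n i u v (j+1)) = E + 1 := by
          unfold eExp at hEdef ⊢
          rw [hEdef]
          have e5 := hpus_ne j (by omega)
          have e6 := hpvs_ne j (by omega)
          have e7 := hD1 j
          omega
        set P0 := ∏ r ∈ (Dset n i u v).erase (j+1), (1 - (X : Polynomial ℤ) ^ eExp n i u v r)
          with hP0def
        have hDus : Dset n i (u * sAdj j) (v * sAdj j) = insert j ((Dset n i u v).erase (j+1)) := by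
          ext r
          rw [mem_Dset]
          by_cases h1 : r = j
          · subst h1
            simp only [Finset.mem_insert, true_or, iff_true]
            exact ⟨hjBvs, fun hc => hj1A (hAus_j.1 hc)⟩
          · by_cases h2 : r = j + 1
            · subst h2
              constructor
              · rintro ⟨h3, _⟩
                exact absurd h3 hj1Bvs
              · intro hc
                rcases Finset.mem_insert.1 hc with he | he
                · omega
                · exact absurd (Finset.mem_erase.1 he).1 (by simp)
            · rw [hBvs_ne r h1 h2, hAus_ne r h1 h2]
              rw [Finset.mem_insert, Finset.mem_erase]
              constructor
              · intro hc
                exact Or.inr ⟨h2, mem_Dset.2 hc⟩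
              · rintro (he | ⟨_, he⟩)
                · omega
                · exact mem_Dset.1 he
        have hppus : prodpart n i (u * sAdj j) (v * sAdj j) = (1 - X ^ E) * P0 := by
          unfold prodpart
          rw [hDus, Finset.prod_insert (by
            rw [Finset.mem_erase]
            rintro ⟨_, hc⟩
            exact hjD hc)]
          congr 1
          apply Finset.prod_congr rfl
          intro r hr
          rw [Finset.mem_erase] at hr
          have hr1 : r ≠ j + 1 := hr.1
          unfold eExp
          rw [hpvs_ne r hr1, hpus_ne r hr1]
        have hppuv : prodpart n i u v = (1 - X ^ (E + 1)) * P0 := by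
          unfold prodpart
          rw [← hE]
          exact (Finset.mul_prod_erase _ _ hj1D).symm
        have hDuvs : Dset n i u (v * sAdj j) = (Dset n i u v).erase (j+1) := by
          ext r
          rw [mem_Dset, Finset.mem_erase]
          by_cases h1 : r = j
          · subst h1
            constructor
            · rintro ⟨_, h3⟩
              exact absurd hjA h3
            · rintro ⟨_, he⟩
              exact absurd hjA (mem_Dset.1 he).2
          · by_cases h2 : r = j + 1
            · subst h2
              constructor
              · rintro ⟨h3, _⟩
                exact absurd h3 hj1Bvs
              · rintro ⟨he, _⟩
                omega
            · rw [hBvs_ne r h1 h2, ← mem_Dset]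
              constructor
              · intro hc
                exact ⟨h2, hc⟩
              · rintro ⟨_, hc⟩
                exact hc
        have hppuvs : prodpart n i u (v * sAdj j) = P0 := by
          unfold prodpart
          rw [hDuvs]
          apply Finset.prod_congr rfl
          intro r hr
          rw [Finset.mem_erase] at hr
          unfold eExp
          rw [hpvs_ne r hr.1]
        have hcpus : cpart n i (u * sAdj j) (v * sAdj j) = cpart n i u v := by
          unfold cpart
          rw [hussymm, hvssymm]
          by_cases hc : u.symm i = v.symm i
          · have hPj : v.symm i ≠ j := fun he => hpuj (hc.trans he)
            rw [if_pos (by rw [hc]), if_pos hc, sAdj_other hPj hPj1]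
            congr 1
            rw [hpus_ne _ hPj1, hpvs_ne _ hPj1]
          · rw [if_neg (fun he => hc ((sAdj j).injective he)), if_neg hc]
        have hcpuvs : cpart n i u (v * sAdj j) = cpart n i u v := by
          unfold cpart
          rw [hvssymm]
          by_cases hc : u.symm i = v.symm i
          · have hPj : v.symm i ≠ j := fun he => hpuj (hc.trans he)
            rw [sAdj_other hPj hPj1, if_pos hc, hpvs_ne _ hPj1]
            rw [if_pos hc]
          · rw [if_neg hc]
            rw [if_neg (fun he => ?_)]
            by_cases hPj : v.symm i = j
            · rw [hPj, sAdj_left] at he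
              omega
            · rw [sAdj_other hPj hPj1] at he
              exact hc he
        -- case split for the polynomial identity
        have hcase : invNum n u + 2 ≤ invNum n v ∨ (1 - (X : Polynomial ℤ) ^ E) * P0 = 0 := by
          by_cases hd : Dom n (u * sAdj j) (v * sAdj j)
          · left
            have h1 := bruhatLE_invNum_le (dom_bruhatLE husOn hvsOn hd)
            omega
          · right
            by_cases hFF : FF n i (u * sAdj j) (v * sAdj j) = 0
            · unfold FF at hFF
              rw [hcpus, hppus] at hFF
              exact Q_zero_of_FF_zero (cpart_ne_zero u v) hFF
            · exfalso
              apply hd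
              apply dom_of_FF_ne_zero hus' hvs' husOn hvsOn hi1 hi2 ?_ hFF
              rw [hussymm, hvssymm]
              exact swap_ple hPj1 hple
        unfold FF
        rw [hcpus, hcpuvs, hppus, hppuv, hppuvs]
        rw [show invNum n (v * sAdj j) = invNum n v - 1 from by omega, hlus]
        exact (poly_branch2_main hlt hcase).symm
      · -- j ∉ Aset u, j + 1 ∉ Aset u
        have huj : i ≤ u j := by
          simp only [Finset.mem_Icc] at hujI
          by_contra hc
          exact hjA (mem_aset_iff.2 ⟨hjI, by omega, by omega⟩)
        have hujns : u j ∉ Finset.Icc 1 (i-1) := by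
          simp only [Finset.mem_Icc]
          omega
        have hpussucc : posLT n (i-1) (j+1) u = posLT n (i-1) j u := by
          have h0 := posLT_succ (w := u) (m' := i-1) hjI
          rw [if_neg hujns] at h0
          omega
        have hpus_j1' : posLT n (i-1) (j+1) (u * sAdj j) = posLT n (i-1) j u := by
          have h0 := posLT_mul_sAdj_succ (w := u) (m' := i-1) hj1 hjn
          rw [if_neg hujns, if_neg huj1ns] at h0
          omega
        by_cases hj1p : j + 1 = u.symm i
        · -- H3 : j ∈ Rest u, j+1 = pu : branch 1
          have hupj1 : u (j+1) = i := by rw [hj1p, u.apply_symm_apply]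
          have hujne : u j ≠ i := by
            intro he
            have : (j : ℕ) = u.symm i := by rw [← he, u.symm_apply_apply]
            omega
          have hdesc : u (j+1) < u j := by omega
          have husOn : IsPermOn n (u * sAdj j) := isPermOn_mul' huOn (isPermOn_sAdj hj1 hjn)
          have hus' : MinReps n {i-1, i} (u * sAdj j) := by
            rw [minrep_mul_sAdj_iff hu' huOn hj1 hjn hjI]
            rintro ⟨hc, _⟩
            omega
          have hlus : invNum n (u * sAdj j) + 1 = invNum n u :=
            invNum_mul_sAdj' huOn hj1 hjn hdesc
          obtain ⟨hb1, _, _⟩ := hR.2.2 u v hu' hv' hbr heq j hj1 (by omega) hvdesc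
          rw [hb1 hdesc]
          have hRsub : R (u * sAdj j) (v * sAdj j) = FF n i (u * sAdj j) (v * sAdj j) := by
            apply R_eq_FF_sub hi1 hi2 hR hIH (by omega) husOn hvsOn hus' hvs'
            rw [hussymm, hvssymm]
            exact swap_ple hPj1 hple
          rw [hRsub]
          -- c = 0 on both sides : pu = j+1 ∈ Aset v, P ∉ Aset v
          have hpuP : u.symm i ≠ v.symm i := by
            intro he
            rw [← hj1p] at he
            exact hPB (he ▸ hj1B)
          have hcp : cpart n i (u * sAdj j) (v * sAdj j) = cpart n i u v := by
            unfold cpart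
            rw [hussymm, hvssymm]
            rw [if_neg (fun he => hpuP ((sAdj j).injective he)), if_neg hpuP]
          have hDeq : Dset n i (u * sAdj j) (v * sAdj j)
              = insert j ((Dset n i u v).erase (j+1)) := by
            ext r
            rw [mem_Dset]
            by_cases h1 : r = j
            · subst h1
              simp only [Finset.mem_insert, true_or, iff_true]
              exact ⟨hjBvs, fun hc => hj1A (hAus_j.1 hc)⟩
            · by_cases h2 : r = j + 1
              · subst h2
                constructor
                · rintro ⟨h3, _⟩
                  exact absurd h3 hj1Bvs
                · intro hc
                  rcases Finset.mem_insert.1 hc with he | he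
                  · omega
                  · exact absurd (Finset.mem_erase.1 he).1 (by simp)
              · rw [hBvs_ne r h1 h2, hAus_ne r h1 h2]
                rw [Finset.mem_insert, Finset.mem_erase]
                constructor
                · intro hc
                  exact Or.inr ⟨h2, mem_Dset.2 hc⟩
                · rintro (he | ⟨_, he⟩)
                  · omega
                  · exact mem_Dset.1 he
          have hjD : j ∉ Dset n i u v := fun hc => hjB (mem_Dset.1 hc).1
          have hpp : prodpart n i (u * sAdj j) (v * sAdj j) = prodpart n i u v := by
            unfold prodpart
            rw [hDeq]
            apply prod_reindex _ _ hj1D hjD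
            · have hexpeq : eExp n i (u * sAdj j) (v * sAdj j) j = eExp n i u v (j+1) := by
                unfold eExp
                have e5 := hpus_ne j (by omega)
                have e6 := hpvs_ne j (by omega)
                have e7 := hpussucc
                have e8 := hpvsucc
                omega
              rw [hexpeq]
            · intro r hr
              rw [Finset.mem_erase] at hr
              unfold eExp
              rw [hpvs_ne r hr.1, hpus_ne r hr.1]
          unfold FF
          rw [hcp, hpp]
          rw [show invNum n (v * sAdj j) - invNum n (u * sAdj j)
              = invNum n v - invNum n u from by omega]
        · by_cases hjp : j = u.symm i
          · -- G6 : j = pu, j+1 ∈ Rest u : branch 2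
            have hupj : u j = i := by rw [hjp, u.apply_symm_apply]
            have huj1ne : u (j+1) ≠ i := fun he => hj1p (by rw [← he, u.symm_apply_apply])
            have huasc : ¬ (u (j+1) < u j) := by omega
            have husOn : IsPermOn n (u * sAdj j) := isPermOn_mul' huOn (isPermOn_sAdj hj1 hjn)
            have hus' : MinReps n {i-1, i} (u * sAdj j) := by
              rw [minrep_mul_sAdj_iff hu' huOn hj1 hjn hjI]
              rintro ⟨_, _, hE2⟩
              exact hE2 hupj
            have hlus : invNum n (u * sAdj j) = invNum n u + 1 :=
              invNum_mul_sAdj huOn hj1 hjn (by omega)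
            obtain ⟨_, hb2, _⟩ := hR.2.2 u v hu' hv' hbr heq j hj1 (by omega) hvdesc
            rw [hb2 huasc hus']
            have hsymus : (u * sAdj j).symm i = j + 1 := by
              rw [hussymm, ← hjp, sAdj_left]
            have hPge : v.symm i = j ∨ j + 2 ≤ v.symm i := by
              have h1 : j ≤ v.symm i := by omega
              rcases Nat.lt_or_ge (v.symm i) (j+2) with h2 | h2
              · left; omega
              · right; omega
            have hRsub1 : R (u * sAdj j) (v * sAdj j) = FF n i (u * sAdj j) (v * sAdj j) := by
              apply R_eq_FF_sub hi1 hi2 hR hIH (by omega) husOn hvsOn hus' hvs'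
              rw [hsymus, hvssymm]
              rcases hPge with he | he
              · rw [he, sAdj_left]
              · rw [sAdj_other (by omega) (by omega)]
                omega
            have hRsub2 : R u (v * sAdj j) = FF n i u (v * sAdj j) := by
              apply R_eq_FF_sub hi1 hi2 hR hIH (by omega) huOn hvsOn hu' hvs'
              rw [hvssymm, ← hjp]
              rcases hPge with he | he
              · rw [he, sAdj_left]
                omega
              · rw [sAdj_other (by omega) (by omega)]
                omega
            rw [hRsub1, hRsub2]
            -- exponent e at j+1 equals the one at j, and is ≥ 1
            set e := eExp n i u v (j+1) with hedef
            have he1 : 1 ≤ e := by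
              unfold eExp at hedef
              omega
            have heje : eExp n i (u * sAdj j) (v * sAdj j) j = e ∧ eExp n i u (v * sAdj j) j = e := by
              constructor <;>
              · unfold eExp at hedef ⊢
                have e5 := hpus_ne j (by omega)
                have e6 := hpvs_ne j (by omega)
                have e7 := hpussucc
                have e8 := hpvsucc
                omega
            set P0 := ∏ r ∈ (Dset n i u v).erase (j+1), (1 - (X : Polynomial ℤ) ^ eExp n i u v r)
              with hP0def
            have hjD : j ∉ Dset n i u v := fun hc => hjB (mem_Dset.1 hc).1
            have hDins : ∀ w' : Equiv.Perm ℕ, (∀ r, r ∈ Aset n i w' ↔ sAdj j r ∈ Aset n i u) → True := fun _ _ => trivial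
            have hDus : Dset n i (u * sAdj j) (v * sAdj j)
                = insert j ((Dset n i u v).erase (j+1)) := by
              ext r
              rw [mem_Dset]
              by_cases h1 : r = j
              · subst h1
                simp only [Finset.mem_insert, true_or, iff_true]
                exact ⟨hjBvs, fun hc => hj1A (hAus_j.1 hc)⟩
              · by_cases h2 : r = j + 1
                · subst h2
                  constructor
                  · rintro ⟨h3, _⟩
                    exact absurd h3 hj1Bvs
                  · intro hc
                    rcases Finset.mem_insert.1 hc with he | he
                    · omega
                    · exact absurd (Finset.mem_erase.1 he).1 (by simp)
                · rw [hBvs_ne r h1 h2, hAus_ne r h1 h2]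
                  rw [Finset.mem_insert, Finset.mem_erase]
                  constructor
                  · intro hc
                    exact Or.inr ⟨h2, mem_Dset.2 hc⟩
                  · rintro (he | ⟨_, he⟩)
                    · omega
                    · exact mem_Dset.1 he
            have hDuvs : Dset n i u (v * sAdj j) = insert j ((Dset n i u v).erase (j+1)) := by
              ext r
              rw [mem_Dset]
              by_cases h1 : r = j
              · subst h1
                simp only [Finset.mem_insert, true_or, iff_true]
                refine ⟨hjBvs, fun hc => ?_⟩
                rw [← hjp] at hpuA
                exact hpuA hc
              · by_cases h2 : r = j + 1
                · subst h2
                  constructor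
                  · rintro ⟨h3, _⟩
                    exact absurd h3 hj1Bvs
                  · intro hc
                    rcases Finset.mem_insert.1 hc with he | he
                    · omega
                    · exact absurd (Finset.mem_erase.1 he).1 (by simp)
                · rw [hBvs_ne r h1 h2]
                  rw [Finset.mem_insert, Finset.mem_erase, ← mem_Dset]
                  constructor
                  · intro hc
                    exact Or.inr ⟨h2, hc⟩
                  · rintro (he | ⟨_, he⟩)
                    · omega
                    · exact he
            have hppus : prodpart n i (u * sAdj j) (v * sAdj j) = (1 - X ^ e) * P0 := by
              unfold prodpart
              rw [hDus, Finset.prod_insert (by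
                rw [Finset.mem_erase]
                rintro ⟨_, hc⟩
                exact hjD hc)]
              rw [heje.1]
              congr 1
              apply Finset.prod_congr rfl
              intro r hr
              rw [Finset.mem_erase] at hr
              unfold eExp
              rw [hpvs_ne r hr.1, hpus_ne r hr.1]
            have hppuvs : prodpart n i u (v * sAdj j) = (1 - X ^ e) * P0 := by
              unfold prodpart
              rw [hDuvs, Finset.prod_insert (by
                rw [Finset.mem_erase]
                rintro ⟨_, hc⟩
                exact hjD hc)]
              rw [heje.2]
              congr 1
              apply Finset.prod_congr rfl
              intro r hr
              rw [Finset.mem_erase] at hr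
              unfold eExp
              rw [hpvs_ne r hr.1]
            have hppuv : prodpart n i u v = (1 - X ^ e) * P0 := by
              unfold prodpart
              rw [hedef]
              exact (Finset.mul_prod_erase _ _ hj1D).symm
            -- case split data
            have hcase : invNum n u + 2 ≤ invNum n v ∨ (1 - (X : Polynomial ℤ) ^ e) * P0 = 0 := by
              by_cases hd : Dom n (u * sAdj j) (v * sAdj j)
              · left
                have h1 := bruhatLE_invNum_le (dom_bruhatLE husOn hvsOn hd)
                omega
              · right
                by_cases hFF : FF n i (u * sAdj j) (v * sAdj j) = 0
                · unfold FF at hFF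
                  rw [hppus] at hFF
                  exact Q_zero_of_FF_zero (cpart_ne_zero _ _) hFF
                · exfalso
                  apply hd
                  apply dom_of_FF_ne_zero hus' hvs' husOn hvsOn hi1 hi2 ?_ hFF
                  rw [hsymus, hvssymm]
                  rcases hPge with he | he
                  · rw [he, sAdj_left]
                  · rw [sAdj_other (by omega) (by omega)]
                    omega
            rcases hPge with hPj | hPge2
            · -- c = 1 case : P = j = pu
              have hc1 : u.symm i = v.symm i := by omega
              have hcpuv : cpart n i u v = 1 - X + X ^ (1 + e) := by
                unfold cpart
                rw [if_pos hc1, hPj]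
                congr 2
                unfold eExp at hedef
                have e7 := hpussucc
                have e8 := hpvsucc
                omega
              have hcpus : cpart n i (u * sAdj j) (v * sAdj j) = 1 - X + X ^ e := by
                unfold cpart
                rw [hsymus, hvssymm, hPj, sAdj_left, if_pos rfl]
                congr 2
                have e1 : posLT n (i-1) (j+1) (u * sAdj j) = posLT n (i-1) j u := hpus_j1'
                have e2 := hpvs_j1
                unfold eExp at hedef
                have e7 := hpussucc
                have e8 := hpvsucc
                omega
              have hcpuvs : cpart n i u (v * sAdj j) = 1 - X + 0 := by
                unfold cpart
                rw [hvssymm, hPj, sAdj_left, if_neg (by omega)]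
              unfold FF
              rw [hcpuv, hcpus, hcpuvs, hppus, hppuv, hppuvs]
              rw [show invNum n (v * sAdj j) = invNum n v - 1 from by omega, hlus]
              rw [add_zero]
              exact (poly_branch2_c1 hlt he1 hcase).symm
            · -- c = 0 case : pu = j < P
              have hc0 : u.symm i ≠ v.symm i := by omega
              have hcpuv : cpart n i u v = cpart n i u v := rfl
              have hcpus : cpart n i (u * sAdj j) (v * sAdj j) = cpart n i u v := by
                unfold cpart
                rw [hsymus, hvssymm, sAdj_other (by omega) (by omega)]
                rw [if_neg (by omega), if_neg hc0]
              have hcpuvs : cpart n i u (v * sAdj j) = cpart n i u v := by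
                unfold cpart
                rw [hvssymm, sAdj_other (by omega) (by omega)]
                rw [if_neg (by omega), if_neg hc0]
              unfold FF
              rw [hcpus, hcpuvs, hppus, hppuv, hppuvs]
              rw [show invNum n (v * sAdj j) = invNum n v - 1 from by omega, hlus]
              exact (poly_branch2_c0 hlt (by
                rcases hcase with h | h
                · exact Or.inl h
                · exact Or.inr h)).symm
          · -- G5 : j, j+1 ∈ Rest u : branch 3
            have hujR : j ∈ Rest n i u := by
              rw [mem_rest_iff huOn hjI]
              exact ⟨hjA, fun he => hjp he⟩
            have huj1R : j + 1 ∈ Rest n i u := by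
              rw [mem_rest_iff huOn hj1I]
              exact ⟨hj1A, fun he => hj1p (by omega)⟩
            have hcons : u (j+1) = u j + 1 := minrep_consec_big hu' huOn hi1 hujR huj1R
            have hujval : i + 1 ≤ u j := by
              simp only [Finset.mem_coe, Rest, Finset.mem_filter] at hujR
              exact hujR.2
            have huasc : ¬ (u (j+1) < u j) := by omega
            have husNot : ¬ MinReps n {i-1, i} (u * sAdj j) := by
              rw [minrep_mul_sAdj_iff hu' huOn hj1 hjn hjI]
              intro hcc
              exact hcc ⟨hcons, by omega, by omega⟩
            obtain ⟨_, _, hb3⟩ := hR.2.2 u v hu' hv' hbr heq j hj1 (by omega) hvdesc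
            rw [hb3 huasc husNot]
            have hRsub : R u (v * sAdj j) = FF n i u (v * sAdj j) := by
              apply R_eq_FF_sub hi1 hi2 hR hIH (by omega) huOn hvsOn hu' hvs'
              rw [hvssymm]
              exact ple_smul hPj1 hple
            rw [hRsub]
            have hpuj : u.symm i ≠ j := fun he => hjp he.symm
            have hpuj1 : u.symm i ≠ j + 1 := fun he => hj1p he.symm
            have hcp : cpart n i u (v * sAdj j) = cpart n i u v := by
              unfold cpart
              rw [hvssymm]
              by_cases hc : u.symm i = v.symm i
              · have hPj : v.symm i ≠ j := fun he => hpuj (hc.trans he)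
                rw [sAdj_other hPj hPj1, if_pos hc, hpvs_ne _ hPj1]
                rw [if_pos hc]
              · rw [if_neg hc]
                rw [if_neg (fun he => ?_)]
                by_cases hPj : v.symm i = j
                · rw [hPj, sAdj_left] at he
                  exact hpuj1 he
                · rw [sAdj_other hPj hPj1] at he
                  exact hc he
            have hjD : j ∉ Dset n i u v := fun hc => hjB (mem_Dset.1 hc).1
            have hDeq : Dset n i u (v * sAdj j) = insert j ((Dset n i u v).erase (j+1)) := by
              ext r
              rw [mem_Dset]
              by_cases h1 : r = j
              · subst h1
                simp only [Finset.mem_insert, true_or, iff_true]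
                exact ⟨hjBvs, hjA⟩
              · by_cases h2 : r = j + 1
                · subst h2
                  constructor
                  · rintro ⟨h3, _⟩
                    exact absurd h3 hj1Bvs
                  · intro hc
                    rcases Finset.mem_insert.1 hc with he | he
                    · omega
                    · exact absurd (Finset.mem_erase.1 he).1 (by simp)
                · rw [hBvs_ne r h1 h2]
                  rw [Finset.mem_insert, Finset.mem_erase, ← mem_Dset]
                  constructor
                  · intro hc
                    exact Or.inr ⟨h2, hc⟩
                  · rintro (he | ⟨_, he⟩)
                    · omega
                    · exact he
            have hpp : prodpart n i u (v * sAdj j) = prodpart n i u v := by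
              unfold prodpart
              rw [hDeq]
              apply prod_reindex _ _ hj1D hjD
              · have hexpeq : eExp n i u (v * sAdj j) j = eExp n i u v (j+1) := by
                  unfold eExp
                  have e6 := hpvs_ne j (by omega)
                  have e7 := hpussucc
                  have e8 := hpvsucc
                  omega
                rw [hexpeq]
              · intro r hr
                rw [Finset.mem_erase] at hr
                unfold eExp
                rw [hpvs_ne r hr.1]
            unfold FF
            rw [hcp, hpp]
            rw [show invNum n (v * sAdj j) = invNum n v - 1 from by omega]
            rw [sign_sub_one hlt]
            ring
  · -- C2 : Aset v = Icc 1 (i-1)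
    push_neg at hC
    have hBIcc : Aset n i v = Finset.Icc 1 (i-1) := by
      have hlb : ∀ x ∈ Aset n i v, 0 + 1 ≤ x := by
        intro x hx
        have := (mem_aset_iff.1 hx).1
        simp only [Finset.mem_Icc] at this
        omega
      have hdc : ∀ x y, 0 + 1 ≤ x → x ≤ y → y ∈ Aset n i v → x ∈ Aset n i v := by
        intro x y hx hxy hy
        -- downward closure by steps
        obtain ⟨d, hd⟩ : ∃ d, x + d = y := ⟨y - x, by omega⟩
        induction d generalizing y with
        | zero =>
          have : x = y := by omega
          subst this; exact hy
        | succ c ihc =>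
          have hy1 : y - 1 ∈ Aset n i v := by
            have h2 : 2 ≤ y := by omega
            by_contra hc2
            have h3 := hC (y-1) (by omega) hc2
            have h4 : y - 1 + 1 = y := by omega
            rw [h4] at h3
            exact h3 hy
          exact ihc (y-1) (by omega) hy1 (by omega)
      have h1 := dc_eq_Icc hlb hdc
      rw [card_aset hvOn hi2] at h1
      simpa using h1
    have hAIcc : Aset n i u = Finset.Icc 1 (i-1) := by
      have h1 := hD1 i
      rw [posLT_eq_aset, posLT_eq_aset, hBIcc] at h1
      have h2 : (Finset.Icc 1 (i-1)).filter (fun z => z < i) = Finset.Icc 1 (i-1) := by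
        apply Finset.filter_true_of_mem
        intro z hz
        simp only [Finset.mem_Icc] at hz
        omega
      rw [h2, Nat.card_Icc] at h1
      have hsub : Aset n i u ⊆ Finset.Icc 1 (i-1) := by
        have h3 : ((Aset n i u).filter (fun z => z < i)).card = (Aset n i u).card := by
          have h5 := card_aset huOn hi2 (w := u)
          have h6 := Finset.card_le_card (Finset.filter_subset (fun z => z < i) (Aset n i u))
          omega
        have h4 : (Aset n i u).filter (fun z => z < i) = Aset n i u :=
          Finset.eq_of_subset_of_card_le (Finset.filter_subset _ _) (by omega)
        intro z hz
        have hz2 : z < i := by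
          have : z ∈ (Aset n i u).filter (fun z => z < i) := h4.symm ▸ hz
          exact (Finset.mem_filter.1 this).2
        have := (mem_aset_iff.1 hz).1
        simp only [Finset.mem_Icc] at this ⊢
        omega
      apply Finset.eq_of_subset_of_card_le hsub
      rw [card_aset huOn hi2, Nat.card_Icc]
      omega
    have hpune : u.symm i ≠ v.symm i := by
      intro he
      exact heq (minrep_determined hu' hv' huOn hvOn hi1 hi2 (hAIcc.trans hBIcc.symm) he)
    have hpultP : u.symm i < v.symm i := by omega
    have hpui : i ≤ u.symm i := by
      have h1 := symm_i_mem_Icc huOn hi1 hi2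
      by_contra hc
      apply symm_i_not_mem_aset (w := u) hi1 (n := n)
      rw [hAIcc]
      simp only [Finset.mem_Icc] at h1 ⊢
      omega
    have hPi : i ≤ v.symm i := by omega
    have hPI := symm_i_mem_Icc hvOn hi1 hi2
    have hPn : v.symm i ≤ n := by simp only [Finset.mem_Icc] at hPI; omega
    -- j := P - 1
    set P := v.symm i with hPdef
    set j := P - 1 with hjdef
    have hj1 : 1 ≤ j := by omega
    have hjP : j + 1 = P := by omega
    have hjn : j + 1 ≤ n := by omega
    have hjI : j ∈ Finset.Icc 1 n := by simp; omega
    have hj1I : j + 1 ∈ Finset.Icc 1 n := by simp; omega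
    have hjB : j ∉ Aset n i v := by
      rw [hBIcc]
      simp only [Finset.mem_Icc]
      omega
    have hj1B : j + 1 ∉ Aset n i v := by
      rw [hBIcc]
      simp only [Finset.mem_Icc]
      omega
    have hvj1 : v (j+1) = i := by
      rw [hjP]
      exact v.apply_symm_apply i
    have hvjI := (isPermOn_mem_iff hvOn).2 hjI
    have hvj : i + 1 ≤ v j := by
      simp only [Finset.mem_Icc] at hvjI
      have h1 : v j ≠ i := by
        intro he
        have : (j : ℕ) = P := by
          rw [hPdef, ← he, v.symm_apply_apply]
        omega
      by_contra hc
      exact hjB (mem_aset_iff.2 ⟨hjI, by omega, by omega⟩)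
    have hvdesc : v (j + 1) < v j := by omega
    have hvsOn : IsPermOn n (v * sAdj j) := isPermOn_mul' hvOn (isPermOn_sAdj hj1 hjn)
    have hvs' : MinReps n {i-1, i} (v * sAdj j) := by
      rw [minrep_mul_sAdj_iff hv' hvOn hj1 hjn hjI]
      rintro ⟨hc, _⟩
      omega
    have hlvs : invNum n (v * sAdj j) + 1 = invNum n v := invNum_mul_sAdj' hvOn hj1 hjn hvdesc
    have hvssymm : (v * sAdj j).symm i = j := by
      rw [mul_sAdj_symm, ← hPdef, ← hjP, sAdj_right]
    have hBvs : Aset n i (v * sAdj j) = Finset.Icc 1 (i-1) := by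
      ext r
      rw [mem_aset_mul_sAdj hj1 hjn, hBIcc]
      by_cases h1 : r = j
      · rw [h1, sAdj_left]
        simp only [Finset.mem_Icc]
        omega
      · by_cases h2 : r = j + 1
        · rw [h2, sAdj_right]
          simp only [Finset.mem_Icc]
          omega
        · rw [sAdj_other h1 h2]
    -- the u side: trichotomy at j
    have huj1R : j + 1 ∈ Rest n i u := by
      rw [mem_rest_iff huOn hj1I, hAIcc]
      constructor
      · simp only [Finset.mem_Icc]; omega
      · omega
    by_cases hpuj : u.symm i = j
    · -- pu = P - 1 : direct computation, v = u * sAdj j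
      have husOn : IsPermOn n (u * sAdj j) := isPermOn_mul' huOn (isPermOn_sAdj hj1 hjn)
      have huasc : ¬ (u (j+1) < u j) := by
        have h1 : u j = i := by rw [← hpuj, u.apply_symm_apply]
        have h2 : i + 1 ≤ u (j+1) := by
          simp only [Finset.mem_coe, Rest, Finset.mem_filter] at huj1R
          exact huj1R.2
        omega
      have hus' : MinReps n {i-1, i} (u * sAdj j) := by
        rw [minrep_mul_sAdj_iff hu' huOn hj1 hjn hjI]
        rintro ⟨hc, hE1, hE2⟩
        have h1 : u j = i := by rw [← hpuj, u.apply_symm_apply]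
        exact hE2 h1
      have husv : u * sAdj j = v := by
        apply minrep_determined hus' hv' husOn hvOn hi1 hi2
        · rw [hBIcc]
          ext r
          rw [mem_aset_mul_sAdj hj1 hjn]
          by_cases h1 : r = j
          · subst h1
            rw [sAdj_left]
            constructor
            · intro hc
              exfalso
              rw [hAIcc] at hc
              simp only [Finset.mem_Icc] at hc
              omega
            · intro hc
              exfalso
              simp only [Finset.mem_Icc] at hc
              omega
          · by_cases h2 : r = j + 1
            · subst h2
              rw [sAdj_right]
              constructor
              · intro hc
                exfalso
                rw [hAIcc] at hc
                simp only [Finset.mem_Icc] at hc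
                omega
              · intro hc
                exfalso
                simp only [Finset.mem_Icc] at hc
                omega
            · rw [sAdj_other h1 h2, hAIcc]
        · rw [mul_sAdj_symm, hpuj, sAdj_left, hjP]
      have hinvv : invNum n v = invNum n u + 1 := by
        rw [← husv]
        apply invNum_mul_sAdj huOn hj1 hjn
        have h1 : u j = i := by rw [← hpuj, u.apply_symm_apply]
        have h2 : i + 1 ≤ u (j+1) := by
          simp only [Finset.mem_coe, Rest, Finset.mem_filter] at huj1R
          exact huj1R.2
        omega
      have hvsu : v * sAdj j = u := by
        rw [← husv, mul_assoc]
        have : sAdj j * sAdj j = 1 := by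
          simp [sAdj, Equiv.swap_mul_self]
        rw [this, mul_one]
      obtain ⟨_, hb2, _⟩ := hR.2.2 u v hu' hv' hbr heq j hj1 (by omega) hvdesc
      rw [hb2 huasc hus', husv, hvsu]
      rw [hR.1 v u hv' hu' (not_bruhatLE_of_invNum_lt hlt), hR.2.1 u hu']
      unfold FF cpart prodpart Dset
      rw [hAIcc, hBIcc, Finset.sdiff_self, Finset.prod_empty]
      rw [if_neg hpune, hinvv]
      have : invNum n u + 1 - invNum n u = 1 := by omega
      rw [this]
      ring
    · -- pu < P - 1 : branch 3
      have hpultj : u.symm i < j := by omega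
      have hujR : j ∈ Rest n i u := by
        rw [mem_rest_iff huOn hjI, hAIcc]
        constructor
        · simp only [Finset.mem_Icc]; omega
        · omega
      have hcons : u (j+1) = u j + 1 := minrep_consec_big hu' huOn hi1 hujR huj1R
      have hujE : i + 1 ≤ u j := by
        simp only [Finset.mem_coe, Rest, Finset.mem_filter] at hujR
        exact hujR.2
      have huasc : ¬ (u (j+1) < u j) := by omega
      have husNot : ¬ MinReps n {i-1, i} (u * sAdj j) := by
        rw [minrep_mul_sAdj_iff hu' huOn hj1 hjn hjI]
        intro hcc
        exact hcc ⟨hcons, by omega, by omega⟩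
      obtain ⟨_, _, hb3⟩ := hR.2.2 u v hu' hv' hbr heq j hj1 (by omega) hvdesc
      rw [hb3 huasc husNot]
      have hRvs : R u (v * sAdj j) = FF n i u (v * sAdj j) := by
        apply R_eq_FF_sub hi1 hi2 hR hIH (by omega) huOn hvsOn hu' hvs'
        rw [hvssymm]
        omega
      rw [hRvs]
      -- FF u vs = -(FF u v)
      unfold FF cpart prodpart Dset
      rw [hAIcc, hBIcc, hBvs, Finset.sdiff_self, Finset.prod_empty]
      rw [hvssymm, if_neg hpune, if_neg (by omega : ¬ u.symm i = j)]
      have h1 : invNum n (v * sAdj j) = invNum n v - 1 := by omega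
      rw [h1]
      rw [sign_sub_one hlt]
      ring

end Brenti

/-- Brenti's formula for `J = S \ {s_(i-1), s_i}` in the case `u⁻¹(i) ≤ v⁻¹(i)`. -/
theorem brenti_formula_two_le (n i : ℕ) (hi1 : 2 ≤ i) (hi2 : i ≤ n - 1)
    (u v : Equiv.Perm ℕ) (hu : IsPermOn n u) (hv : IsPermOn n v)
    (hu' : MinReps n {i - 1, i} u) (hv' : MinReps n {i - 1, i} v)
    (huv : BruhatLE n u v) (hpos : u.symm i ≤ v.symm i)
    (R : Equiv.Perm ℕ → Equiv.Perm ℕ → Polynomial ℤ)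
    (hR : IsRFamilyQ n {i - 1, i} R) :
    R u v = (-1) ^ (invNum n v - invNum n u) *
      (1 - X + (if u.symm i = v.symm i then
          X ^ (1 + ((posLT n (i - 1) (v.symm i) u : ℤ) -
            posLT n (i - 1) (v.symm i) v).toNat)
        else 0)) *
      ∏ j ∈ ((Finset.Icc 1 n).filter (fun r => v r ∈ Finset.Icc 1 (i - 1))) \
             ((Finset.Icc 1 n).filter (fun r => u r ∈ Finset.Icc 1 (i - 1))),
        (1 - X ^ ((posLT n (i - 1) j u : ℤ) - posLT n (i - 1) j v).toNat) := by
  have hdom := Brenti.bruhatLE_dom huv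
  have h := Brenti.main_lemma hi1 hi2 hR (invNum n v + 1) v u (by omega) hu hv hu' hv' hdom hpos
  rw [h]
  exact Brenti.FF_spec n i u v
end

section
/- Let J = S \ {s_{i-2}, s_{i-1}, s_i} and u, v ∈ (S_n)^J with u ≤ v. Let s_j be a right descent of v with v(j) > i and v(j+1) = i, and suppose s_j is not a right descent of u, u(j) = i, and u s_j ≰ v s_j in Bruhat order. Then b_{3,j+1}(u,v) = 1, where b_{3,k}(u,v) = |{r ∈ u^{-1}([i]) : r < k}| − |{r ∈ v^{-1}([i]) : r < k}|. -/
open Finset Polynomial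

-- ### auxiliary defs
def cnt (n : ℕ) (w : Equiv.Perm ℕ) (K m : ℕ) : ℕ :=
  ((Finset.Icc 1 n).filter (fun r => r ≤ K ∧ w r ≤ m)).card

def InvSet (n : ℕ) (w : Equiv.Perm ℕ) : Finset (ℕ × ℕ) :=
  (((Finset.Icc 1 n) ×ˢ (Finset.Icc 1 n)).filter
    (fun p => p.1 < p.2 ∧ w p.2 < w p.1))

lemma invNum_eq (n : ℕ) (w : Equiv.Perm ℕ) : invNum n w = (InvSet n w).card := rfl

@[simp] theorem Equiv.Perm.inv_apply_self (e : Equiv.Perm ℕ) (x : ℕ) : e⁻¹ (e x) = x :=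
  e.symm_apply_apply x

@[simp] theorem Equiv.Perm.apply_inv_self (e : Equiv.Perm ℕ) (x : ℕ) : e (e⁻¹ x) = x :=
  e.apply_symm_apply x

-- ### basic permOn lemmas
lemma permOn_apply_mem {n : ℕ} {w : Equiv.Perm ℕ} (hw : IsPermOn n w)
    {k : ℕ} (hk : k ∈ Finset.Icc 1 n) : w k ∈ Finset.Icc 1 n := by
  by_contra h
  have h2 := hw _ h
  have h3 : w k = k := w.injective h2
  rw [h3] at h
  exact h hk

lemma permOn_inv {n : ℕ} {w : Equiv.Perm ℕ} (hw : IsPermOn n w) : IsPermOn n w⁻¹ := by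
  intro m hm
  have := hw m hm
  calc w⁻¹ m = w⁻¹ (w m) := by rw [this]
  _ = m := w.inv_apply_self m

lemma permOn_mul {n : ℕ} {w₁ w₂ : Equiv.Perm ℕ} (h1 : IsPermOn n w₁) (h2 : IsPermOn n w₂) :
    IsPermOn n (w₁ * w₂) := by
  intro m hm
  have e2 := h2 m hm
  have e1 := h1 m hm
  simp [Equiv.Perm.mul_apply, e2, e1]

lemma permOn_swap {n k l : ℕ} (hk : k ∈ Finset.Icc 1 n) (hl : l ∈ Finset.Icc 1 n) :
    IsPermOn n (Equiv.swap k l) := by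
  intro m hm
  exact Equiv.swap_apply_of_ne_of_ne (by rintro rfl; exact hm hk) (by rintro rfl; exact hm hl)

lemma swap_mem_Icc {n k l r : ℕ} (hk : k ∈ Finset.Icc 1 n) (hl : l ∈ Finset.Icc 1 n)
    (hr : r ∈ Finset.Icc 1 n) : Equiv.swap k l r ∈ Finset.Icc 1 n := by
  rcases eq_or_ne r k with rfl|h1
  · rwa [Equiv.swap_apply_left]
  rcases eq_or_ne r l with rfl|h2
  · rwa [Equiv.swap_apply_right]
  · rwa [Equiv.swap_apply_of_ne_of_ne h1 h2]

-- ### Core inversion lemma: multiplying by an increasing swap increases invNum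
lemma invNum_lt_swap {n : ℕ} (w : Equiv.Perm ℕ) {p q : ℕ}
    (hp : 1 ≤ p) (hpq : p < q) (hq : q ≤ n) (hw : w p < w q) :
    invNum n w < invNum n (w * Equiv.swap p q) := by
  have hpmem : p ∈ Finset.Icc 1 n := Finset.mem_Icc.2 ⟨hp, le_trans (le_of_lt hpq) hq⟩
  have hqmem : q ∈ Finset.Icc 1 n := Finset.mem_Icc.2 ⟨le_trans hp (le_of_lt hpq), hq⟩
  have hss : ∀ x, Equiv.swap p q (Equiv.swap p q x) = x := fun x => Equiv.swap_apply_self p q x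
  set G : ℕ × ℕ → ℕ × ℕ :=
    fun x => if Equiv.swap p q x.1 < Equiv.swap p q x.2
      then (Equiv.swap p q x.1, Equiv.swap p q x.2) else x with hG
  have hGG : ∀ a : ℕ × ℕ, a.1 < a.2 → G (G a) = a := by
    intro a ha
    by_cases h : Equiv.swap p q a.1 < Equiv.swap p q a.2
    · simp [hG, hss, h, ha]
    · simp only [hG, if_neg h, if_neg h]
  have hpq_notmem : (p, q) ∉ InvSet n w := by
    intro h
    have := (Finset.mem_filter.1 h).2.2
    simp only at this
    omega
  have hmaps : ∀ a ∈ insert (p, q) (InvSet n w), G a ∈ InvSet n (w * Equiv.swap p q) := by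
    intro a ha
    rcases Finset.mem_insert.1 ha with rfl | ha
    · have h1 : Equiv.swap p q p = q := Equiv.swap_apply_left p q
      have h2 : Equiv.swap p q q = p := Equiv.swap_apply_right p q
      have hne : ¬ Equiv.swap p q p < Equiv.swap p q q := by rw [h1, h2]; omega
      simp only [hG, if_neg hne]
      refine Finset.mem_filter.2 ⟨Finset.mem_product.2 ⟨hpmem, hqmem⟩, hpq, ?_⟩
      simpa [Equiv.Perm.mul_apply, h1, h2] using hw
    · obtain ⟨hmem, hlt, hinv⟩ := Finset.mem_filter.1 ha
      obtain ⟨hx, hy⟩ := Finset.mem_product.1 hmem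
      obtain ⟨x, y⟩ := a
      simp only at hx hy hlt hinv ⊢
      by_cases h : Equiv.swap p q x < Equiv.swap p q y
      · simp only [hG, if_pos h]
        refine Finset.mem_filter.2 ⟨Finset.mem_product.2
          ⟨swap_mem_Icc hpmem hqmem hx, swap_mem_Icc hpmem hqmem hy⟩, h, ?_⟩
        simpa [Equiv.Perm.mul_apply, hss] using hinv
      · simp only [hG, if_neg h]
        refine Finset.mem_filter.2 ⟨Finset.mem_product.2 ⟨hx, hy⟩, hlt, ?_⟩
        simp only [Equiv.Perm.mul_apply]
        by_cases hxp : x = p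
        · subst hxp
          by_cases hyq : y = q
          · subst hyq; omega
          · have hyp : y ≠ x := by omega
            rw [Equiv.swap_apply_left, Equiv.swap_apply_of_ne_of_ne hyp hyq]
            omega
        · by_cases hyq : y = q
          · subst hyq
            have hxq : x ≠ y := by omega
            rw [Equiv.swap_apply_right, Equiv.swap_apply_of_ne_of_ne hxp hxq]
            omega
          · exfalso
            by_cases hxq : x = q
            · subst hxq
              have hyp : y ≠ p := by omega
              rw [Equiv.swap_apply_right, Equiv.swap_apply_of_ne_of_ne hyp hyq] at h
              omega
            · by_cases hyp : y = p
              · subst hyp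
                rw [Equiv.swap_apply_left, Equiv.swap_apply_of_ne_of_ne hxp hxq] at h
                omega
              · rw [Equiv.swap_apply_of_ne_of_ne hxp hxq,
                  Equiv.swap_apply_of_ne_of_ne hyp hyq] at h
                omega
  have hinj : Set.InjOn G (insert (p, q) (InvSet n w) : Finset (ℕ × ℕ)) := by
    intro a ha b hb hab
    have ha1 : a.1 < a.2 := by
      rcases Finset.mem_insert.1 (by exact_mod_cast ha) with h | h
      · rw [h]; exact hpq
      · exact (Finset.mem_filter.1 h).2.1
    have hb1 : b.1 < b.2 := by
      rcases Finset.mem_insert.1 (by exact_mod_cast hb) with h | h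
      · rw [h]; exact hpq
      · exact (Finset.mem_filter.1 h).2.1
    calc a = G (G a) := (hGG a ha1).symm
    _ = G (G b) := by rw [hab]
    _ = b := hGG b hb1
  have hcard := Finset.card_le_card_of_injOn G hmaps hinj
  rw [Finset.card_insert_of_notMem hpq_notmem] at hcard
  rw [invNum_eq, invNum_eq]
  omega

-- ### Left multiplication by sAdj decreases invNum when it's an inverse descent
lemma invNum_lmul_lt {n : ℕ} {w : Equiv.Perm ℕ} (hw : IsPermOn n w) {e : ℕ}
    (he1 : 1 ≤ e) (he2 : e + 1 ≤ n) (h : w⁻¹ (e + 1) < w⁻¹ e) :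
    invNum n (sAdj e * w) < invNum n w := by
  have hemem : e ∈ Finset.Icc 1 n := Finset.mem_Icc.2 ⟨he1, by omega⟩
  have he1mem : e + 1 ∈ Finset.Icc 1 n := Finset.mem_Icc.2 ⟨by omega, he2⟩
  have hmono : ∀ a b : ℕ, a < b → ¬(a = e ∧ b = e + 1) →
      Equiv.swap e (e + 1) a < Equiv.swap e (e + 1) b := by
    intro a b hab hne
    by_cases hae : a = e
    · have hb : b ≠ e + 1 := fun hbb => hne ⟨hae, hbb⟩
      have hb2 : b ≠ e := by omega
      rw [hae, Equiv.swap_apply_left, Equiv.swap_apply_of_ne_of_ne hb2 hb]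
      omega
    · by_cases hae1 : a = e + 1
      · have hb2 : b ≠ e := by omega
        have hb : b ≠ e + 1 := by omega
        rw [hae1, Equiv.swap_apply_right, Equiv.swap_apply_of_ne_of_ne hb2 hb]
        omega
      · rw [Equiv.swap_apply_of_ne_of_ne hae hae1]
        by_cases hbe : b = e
        · rw [hbe, Equiv.swap_apply_left]; omega
        · by_cases hbe1 : b = e + 1
          · rw [hbe1, Equiv.swap_apply_right]; omega
          · rw [Equiv.swap_apply_of_ne_of_ne hbe hbe1]; exact hab
  have hkey : (w⁻¹ (e + 1), w⁻¹ e) ∈ InvSet n w := by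
    refine Finset.mem_filter.2 ⟨Finset.mem_product.2
      ⟨permOn_apply_mem (permOn_inv hw) he1mem, permOn_apply_mem (permOn_inv hw) hemem⟩, h, ?_⟩
    simp only [Equiv.Perm.apply_inv_self]
    omega
  have hsub : InvSet n (sAdj e * w) ⊆ (InvSet n w).erase (w⁻¹ (e + 1), w⁻¹ e) := by
    intro a ha
    obtain ⟨hmem, hlt, hinv⟩ := Finset.mem_filter.1 ha
    simp only [sAdj, Equiv.Perm.mul_apply] at hinv
    refine Finset.mem_erase.2 ⟨?_, Finset.mem_filter.2 ⟨hmem, hlt, ?_⟩⟩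
    · rintro rfl
      simp only [Equiv.Perm.apply_inv_self, Equiv.swap_apply_left, Equiv.swap_apply_right] at hinv
      omega
    · -- from swap (w a.2) < swap (w a.1) deduce w a.2 < w a.1
      rcases lt_trichotomy (w a.2) (w a.1) with h1 | h1 | h1
      · exact h1
      · exfalso; rw [h1] at hinv; omega
      · exfalso
        by_cases hc : w a.1 = e ∧ w a.2 = e + 1
        · obtain ⟨hc1, hc2⟩ := hc
          have ha1 : a.1 = w⁻¹ e := by rw [← hc1]; simp
          have ha2 : a.2 = w⁻¹ (e + 1) := by rw [← hc2]; simp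
          rw [ha1, ha2] at hlt
          omega
        · exact absurd (hmono _ _ h1 hc) (by omega)
  have hc1 := Finset.card_le_card hsub
  rw [Finset.card_erase_of_mem hkey] at hc1
  have hpos : 0 < (InvSet n w).card := Finset.card_pos.2 ⟨_, hkey⟩
  rw [invNum_eq, invNum_eq]
  omega

-- ### cnt manipulation lemmas
lemma cnt_mul_swap_out {n : ℕ} (w : Equiv.Perm ℕ) {p q K : ℕ} (m : ℕ)
    (hp : 1 ≤ p) (hpq : p < q) (hq : q ≤ n) (h : K < p ∨ q ≤ K) :
    cnt n (w * Equiv.swap p q) K m = cnt n w K m := by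
  have hpmem : p ∈ Finset.Icc 1 n := Finset.mem_Icc.2 ⟨hp, by omega⟩
  have hqmem : q ∈ Finset.Icc 1 n := Finset.mem_Icc.2 ⟨by omega, hq⟩
  rcases h with h | h
  · unfold cnt
    congr 1
    apply Finset.filter_congr
    intro r _
    constructor
    · rintro ⟨h1, h2⟩
      refine ⟨h1, ?_⟩
      rwa [Equiv.Perm.mul_apply,
        Equiv.swap_apply_of_ne_of_ne (by omega) (by omega)] at h2
    · rintro ⟨h1, h2⟩
      refine ⟨h1, ?_⟩
      rwa [Equiv.Perm.mul_apply,
        Equiv.swap_apply_of_ne_of_ne (by omega) (by omega)]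
  · unfold cnt
    apply Finset.card_bij' (fun r _ => Equiv.swap p q r) (fun r _ => Equiv.swap p q r)
    · intro r hr
      obtain ⟨hr1, hr2, hr3⟩ := Finset.mem_filter.1 hr
      refine Finset.mem_filter.2 ⟨swap_mem_Icc hpmem hqmem hr1, ?_, ?_⟩
      · rcases eq_or_ne r p with rfl | h1
        · rw [Equiv.swap_apply_left]; omega
        rcases eq_or_ne r q with rfl | h2
        · rw [Equiv.swap_apply_right]; omega
        · rw [Equiv.swap_apply_of_ne_of_ne h1 h2]; exact hr2
      · rwa [Equiv.Perm.mul_apply] at hr3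
    · intro r hr
      obtain ⟨hr1, hr2, hr3⟩ := Finset.mem_filter.1 hr
      refine Finset.mem_filter.2 ⟨swap_mem_Icc hpmem hqmem hr1, ?_, ?_⟩
      · rcases eq_or_ne r p with rfl | h1
        · rw [Equiv.swap_apply_left]; omega
        rcases eq_or_ne r q with rfl | h2
        · rw [Equiv.swap_apply_right]; omega
        · rw [Equiv.swap_apply_of_ne_of_ne h1 h2]; exact hr2
      · rw [Equiv.Perm.mul_apply, Equiv.swap_apply_self]; exact hr3
    · intro r _; exact Equiv.swap_apply_self p q r
    · intro r _; exact Equiv.swap_apply_self p q r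

lemma cnt_mul_swap_mid {n : ℕ} (w : Equiv.Perm ℕ) {p q K : ℕ} (m : ℕ)
    (hp : 1 ≤ p) (hpq : p < q) (hq : q ≤ n) (hK1 : p ≤ K) (hK2 : K < q) :
    cnt n (w * Equiv.swap p q) K m + (if w p ≤ m then 1 else 0)
      = cnt n w K m + (if w q ≤ m then 1 else 0) := by
  have hpmem : p ∈ Finset.Icc 1 n := Finset.mem_Icc.2 ⟨hp, by omega⟩
  set T := (Finset.Icc 1 n).filter (fun r => r ≤ K ∧ ¬ r = p ∧ w r ≤ m) with hT
  have hpT : p ∉ T := by simp [hT]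
  have e1 : cnt n (w * Equiv.swap p q) K m = T.card + (if w q ≤ m then 1 else 0) := by
    unfold cnt
    split_ifs with hqm
    · rw [← Finset.card_insert_of_notMem hpT]
      congr 1
      ext r
      simp only [Finset.mem_insert, hT, Finset.mem_filter]
      constructor
      · rintro ⟨hr1, hr2, hr3⟩
        rcases eq_or_ne r p with rfl | hrp
        · left; rfl
        · right
          rw [Equiv.Perm.mul_apply, Equiv.swap_apply_of_ne_of_ne hrp (by omega)] at hr3
          exact ⟨hr1, hr2, hrp, hr3⟩
      · rintro (rfl | ⟨hr1, hr2, hrp, hr3⟩)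
        · refine ⟨hpmem, hK1, ?_⟩
          rw [Equiv.Perm.mul_apply, Equiv.swap_apply_left]; exact hqm
        · refine ⟨hr1, hr2, ?_⟩
          rw [Equiv.Perm.mul_apply, Equiv.swap_apply_of_ne_of_ne hrp (by omega)]; exact hr3
    · rw [Nat.add_zero]
      congr 1
      ext r
      simp only [hT, Finset.mem_filter]
      constructor
      · rintro ⟨hr1, hr2, hr3⟩
        rcases eq_or_ne r p with rfl | hrp
        · rw [Equiv.Perm.mul_apply, Equiv.swap_apply_left] at hr3
          exact absurd hr3 hqm
        · rw [Equiv.Perm.mul_apply, Equiv.swap_apply_of_ne_of_ne hrp (by omega)] at hr3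
          exact ⟨hr1, hr2, hrp, hr3⟩
      · rintro ⟨hr1, hr2, hrp, hr3⟩
        refine ⟨hr1, hr2, ?_⟩
        rw [Equiv.Perm.mul_apply, Equiv.swap_apply_of_ne_of_ne hrp (by omega)]; exact hr3
  have e2 : cnt n w K m = T.card + (if w p ≤ m then 1 else 0) := by
    unfold cnt
    split_ifs with hpm
    · rw [← Finset.card_insert_of_notMem hpT]
      congr 1
      ext r
      simp only [Finset.mem_insert, hT, Finset.mem_filter]
      constructor
      · rintro ⟨hr1, hr2, hr3⟩
        rcases eq_or_ne r p with rfl | hrp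
        · left; rfl
        · right; exact ⟨hr1, hr2, hrp, hr3⟩
      · rintro (rfl | ⟨hr1, hr2, hrp, hr3⟩)
        · exact ⟨hpmem, hK1, hpm⟩
        · exact ⟨hr1, hr2, hr3⟩
    · rw [Nat.add_zero]
      congr 1
      ext r
      simp only [hT, Finset.mem_filter]
      constructor
      · rintro ⟨hr1, hr2, hr3⟩
        rcases eq_or_ne r p with rfl | hrp
        · exact absurd hr3 hpm
        · exact ⟨hr1, hr2, hrp, hr3⟩
      · rintro ⟨hr1, hr2, hrp, hr3⟩
        exact ⟨hr1, hr2, hr3⟩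
  omega

lemma cnt_restrict {n : ℕ} (w : Equiv.Perm ℕ) {K : ℕ} (m : ℕ) (hK : K ≤ n) :
    cnt n w K m = ((Finset.Icc 1 K).filter (fun r => w r ≤ m)).card := by
  unfold cnt
  congr 1
  ext r
  simp only [Finset.mem_filter, Finset.mem_Icc]
  omega

lemma cnt_le {n : ℕ} (w : Equiv.Perm ℕ) {K : ℕ} (m : ℕ) (hK : K ≤ n) :
    cnt n w K m ≤ K := by
  rw [cnt_restrict w m hK]
  calc ((Finset.Icc 1 K).filter (fun r => w r ≤ m)).card
      ≤ (Finset.Icc 1 K).card := Finset.card_filter_le _ _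
  _ = K := by rw [Nat.card_Icc]; omega

lemma cnt_succ {n : ℕ} (w : Equiv.Perm ℕ) {K : ℕ} (m : ℕ) (hK : K + 1 ≤ n) :
    cnt n w (K + 1) m = cnt n w K m + (if w (K + 1) ≤ m then 1 else 0) := by
  rw [cnt_restrict w m hK, cnt_restrict w m (by omega)]
  have : Finset.Icc 1 (K + 1) = insert (K + 1) (Finset.Icc 1 K) := by
    ext r; simp only [Finset.mem_insert, Finset.mem_Icc]; omega
  rw [this, Finset.filter_insert]
  split_ifs with h
  · rw [Finset.card_insert_of_notMem (by simp)]
  · rw [Nat.add_zero]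

-- ### easy direction: Bruhat ⟹ dominance of counts
lemma swap_lt_of_invNum_lt {n : ℕ} {a : Equiv.Perm ℕ} {p q : ℕ}
    (hp : 1 ≤ p) (hpq : p < q) (hq : q ≤ n)
    (h : invNum n a < invNum n (a * Equiv.swap p q)) : a p < a q := by
  rcases lt_trichotomy (a p) (a q) with h1 | h1 | h1
  · exact h1
  · exact absurd (a.injective h1) (by omega)
  · exfalso
    have h2 : (a * Equiv.swap p q) p < (a * Equiv.swap p q) q := by
      simp only [Equiv.Perm.mul_apply, Equiv.swap_apply_left, Equiv.swap_apply_right]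
      exact h1
    have h3 := invNum_lt_swap (a * Equiv.swap p q) hp hpq hq h2
    rw [mul_assoc, Equiv.swap_mul_self, mul_one] at h3
    omega

lemma dominance_of_bruhat {n : ℕ} {u v : Equiv.Perm ℕ} (h : BruhatLE n u v) :
    ∀ K m, cnt n v K m ≤ cnt n u K m := by
  induction h with
  | refl => intro K m; exact le_refl _
  | tail _ hstep ih =>
    intro K m
    obtain ⟨hinv, p, q, hp, hpq, hq, rfl⟩ := hstep
    refine le_trans ?_ (ih K m)
    rename_i b _
    have hb : b p < b q := swap_lt_of_invNum_lt hp hpq hq hinv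
    rcases lt_or_ge K p with h1 | h1
    · rw [cnt_mul_swap_out b m hp hpq hq (Or.inl h1)]
    · rcases lt_or_ge K q with h2 | h2
      · have e1 := cnt_mul_swap_mid b m hp hpq hq h1 h2
        have hle : (if b q ≤ m then 1 else 0) ≤ (if b p ≤ m then 1 else 0) := by
          split_ifs with hx hy
          · omega
          · exact absurd (le_trans (le_of_lt hb) hx) hy
          · omega
          · omega
        omega
      · rw [cnt_mul_swap_out b m hp hpq hq (Or.inr h2)]

-- ### hard direction: dominance ⟹ Bruhat
lemma invNum_le_sq (n : ℕ) (w : Equiv.Perm ℕ) : invNum n w ≤ n * n := by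
  calc invNum n w ≤ ((Finset.Icc 1 n) ×ˢ (Finset.Icc 1 n)).card := Finset.card_filter_le _ _
  _ = n * n := by rw [Finset.card_product, Nat.card_Icc, Nat.add_sub_cancel]

lemma exists_step {n : ℕ} {u v : Equiv.Perm ℕ} (hu : IsPermOn n u) (hv : IsPermOn n v)
    (hdom : ∀ K m, cnt n v K m ≤ cnt n u K m) (hne : u ≠ v) :
    ∃ k l, 1 ≤ k ∧ k < l ∧ l ≤ n ∧ invNum n u < invNum n (u * Equiv.swap k l) ∧
      IsPermOn n (u * Equiv.swap k l) ∧
      (∀ K m, cnt n v K m ≤ cnt n (u * Equiv.swap k l) K m) := by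
  classical
  set D := (Finset.Icc 1 n).filter (fun r => u r ≠ v r) with hD
  have hDne : D.Nonempty := by
    rw [Finset.filter_nonempty_iff]
    by_contra hcon
    push_neg at hcon
    apply hne
    ext x
    by_cases hx : x ∈ Finset.Icc 1 n
    · exact hcon x hx
    · rw [hu x hx, hv x hx]
  set k := D.min' hDne with hk
  have hkD : k ∈ D := Finset.min'_mem _ _
  obtain ⟨hkmem, hkne⟩ := Finset.mem_filter.1 hkD
  have hk1 : 1 ≤ k := (Finset.mem_Icc.1 hkmem).1
  have hkn : k ≤ n := (Finset.mem_Icc.1 hkmem).2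
  have hprefix : ∀ r, r ∈ Finset.Icc 1 n → r < k → u r = v r := by
    intro r hr hrk
    by_contra hcon
    have : k ≤ r := Finset.min'_le _ _ (Finset.mem_filter.2 ⟨hr, hcon⟩)
    omega
  -- u k < v k
  have hab : u k < v k := by
    rcases lt_trichotomy (u k) (v k) with h1 | h1 | h1
    · exact h1
    · exact absurd h1 hkne
    · exfalso
      have hcard : cnt n u k (v k) < cnt n v k (v k) := by
        apply Finset.card_lt_card
        constructor
        · intro r hr
          obtain ⟨hr1, hr2, hr3⟩ := Finset.mem_filter.1 hr
          have hrk : r < k := by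
            rcases lt_or_eq_of_le hr2 with h | h
            · exact h
            · exfalso; rw [h] at hr3; omega
          exact Finset.mem_filter.2 ⟨hr1, hr2, by rw [← hprefix r hr1 hrk]; exact hr3⟩
        · intro hsub
          have hkmem2 : k ∈ (Finset.Icc 1 n).filter (fun r => r ≤ k ∧ v r ≤ v k) :=
            Finset.mem_filter.2 ⟨hkmem, le_refl _, le_refl _⟩
          have := Finset.mem_filter.1 (hsub hkmem2)
          omega
      exact absurd (hdom k (v k)) (by omega)
  -- the minimal exchange position l
  set S := (Finset.Icc 1 n).filter (fun r => k < r ∧ u k < u r ∧ u r ≤ v k) with hS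
  have hSne : S.Nonempty := by
    refine ⟨u⁻¹ (v k), Finset.mem_filter.2 ⟨?_, ?_, ?_, ?_⟩⟩
    · exact permOn_apply_mem (permOn_inv hu) (permOn_apply_mem hv hkmem)
    · -- k < u⁻¹ (v k)
      have h1 : u (u⁻¹ (v k)) = v k := u.apply_inv_self _
      rcases lt_trichotomy (u⁻¹ (v k)) k with h2 | h2 | h2
      · exfalso
        have h3 := hprefix _ (permOn_apply_mem (permOn_inv hu) (permOn_apply_mem hv hkmem)) h2
        rw [h1] at h3
        have := v.injective h3.symm
        omega
      · exfalso; rw [h2] at h1; omega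
      · exact h2
    · rw [u.apply_inv_self]; exact hab
    · rw [u.apply_inv_self]
  set l := S.min' hSne with hl
  have hlS : l ∈ S := Finset.min'_mem _ _
  obtain ⟨hlmem, hkl, hul1, hul2⟩ := Finset.mem_filter.1 hlS
  have hln : l ≤ n := (Finset.mem_Icc.1 hlmem).2
  have hmid : ∀ r, r ∈ Finset.Icc 1 n → k < r → r < l → ¬(u k < u r ∧ u r ≤ v k) := by
    intro r hr h1 h2 hcon
    have : l ≤ r := Finset.min'_le _ _ (Finset.mem_filter.2 ⟨hr, h1, hcon⟩)
    omega
  refine ⟨k, l, hk1, hkl, hln, invNum_lt_swap u hk1 hkl hln hul1,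
    permOn_mul hu (permOn_swap hkmem hlmem), ?_⟩
  intro K m
  rcases lt_or_ge K k with hKk | hKk
  · rw [cnt_mul_swap_out u m hk1 hkl hln (Or.inl hKk)]
    exact hdom K m
  rcases le_or_gt l K with hKl | hKl
  · rw [cnt_mul_swap_out u m hk1 hkl hln (Or.inr hKl)]
    exact hdom K m
  -- middle case k ≤ K < l
  have e1 := cnt_mul_swap_mid u m hk1 hkl hln hKk hKl
  by_cases hm1 : m < u k
  · have c1 : ¬ (u k ≤ m) := by omega
    have c2 : ¬ (u l ≤ m) := by omega
    rw [if_neg c1, if_neg c2] at e1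
    have := hdom K m
    omega
  by_cases hm2 : u l ≤ m
  · have c1 : u k ≤ m := by omega
    rw [if_pos c1, if_pos hm2] at e1
    have := hdom K m
    omega
  -- u k ≤ m < u l : need strict inequality cnt v K m < cnt u K m
  rw [if_pos (by omega : u k ≤ m), if_neg hm2] at e1
  have hstrict : cnt n v K m < cnt n u K m := by
    by_contra hge
    push_neg at hge
    have heq : cnt n u K m = cnt n v K m := le_antisymm hge (hdom K m)
    set P := (Finset.Icc 1 n).filter (fun r => r < k ∧ m < u r ∧ u r ≤ v k) with hP
    have hmb : m < v k := by omega
    -- decomposition for u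
    have hCu : cnt n u K (v k) = cnt n u K m + P.card := by
      have hsplit : (Finset.Icc 1 n).filter (fun r => r ≤ K ∧ u r ≤ v k) =
          (Finset.Icc 1 n).filter (fun r => r ≤ K ∧ u r ≤ m) ∪
          (Finset.Icc 1 n).filter (fun r => r ≤ K ∧ m < u r ∧ u r ≤ v k) := by
        ext r
        simp only [Finset.mem_union, Finset.mem_filter]
        constructor
        · rintro ⟨h1, h2, h3⟩
          rcases le_or_gt (u r) m with h4 | h4
          · exact Or.inl ⟨h1, h2, h4⟩
          · exact Or.inr ⟨h1, h2, h4, h3⟩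
        · rintro (⟨h1, h2, h3⟩ | ⟨h1, h2, h3, h4⟩)
          · exact ⟨h1, h2, by omega⟩
          · exact ⟨h1, h2, h4⟩
      have hdisj : Disjoint ((Finset.Icc 1 n).filter (fun r => r ≤ K ∧ u r ≤ m))
          ((Finset.Icc 1 n).filter (fun r => r ≤ K ∧ m < u r ∧ u r ≤ v k)) := by
        rw [Finset.disjoint_left]
        intro r h1 h2
        have := (Finset.mem_filter.1 h1).2.2
        have := (Finset.mem_filter.1 h2).2.2.1
        omega
      have hPeq : (Finset.Icc 1 n).filter (fun r => r ≤ K ∧ m < u r ∧ u r ≤ v k) = P := by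
        ext r
        simp only [hP, Finset.mem_filter]
        constructor
        · rintro ⟨h1, h2, h3, h4⟩
          refine ⟨h1, ?_, h3, h4⟩
          rcases lt_trichotomy r k with h5 | h5 | h5
          · exact h5
          · exfalso; rw [h5] at h3; omega
          · exact absurd ⟨by omega, h4⟩ (hmid r h1 h5 (by omega))
        · rintro ⟨h1, h2, h3, h4⟩
          exact ⟨h1, by omega, h3, h4⟩
      unfold cnt
      rw [hsplit, Finset.card_union_of_disjoint hdisj, hPeq]
    -- lower bound for v
    have hCv : cnt n v K m + P.card + 1 ≤ cnt n v K (v k) := by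
      have hsplit : (Finset.Icc 1 n).filter (fun r => r ≤ K ∧ v r ≤ v k) =
          (Finset.Icc 1 n).filter (fun r => r ≤ K ∧ v r ≤ m) ∪
          (Finset.Icc 1 n).filter (fun r => r ≤ K ∧ m < v r ∧ v r ≤ v k) := by
        ext r
        simp only [Finset.mem_union, Finset.mem_filter]
        constructor
        · rintro ⟨h1, h2, h3⟩
          rcases le_or_gt (v r) m with h4 | h4
          · exact Or.inl ⟨h1, h2, h4⟩
          · exact Or.inr ⟨h1, h2, h4, h3⟩
        · rintro (⟨h1, h2, h3⟩ | ⟨h1, h2, h3, h4⟩)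
          · exact ⟨h1, h2, by omega⟩
          · exact ⟨h1, h2, h4⟩
      have hdisj : Disjoint ((Finset.Icc 1 n).filter (fun r => r ≤ K ∧ v r ≤ m))
          ((Finset.Icc 1 n).filter (fun r => r ≤ K ∧ m < v r ∧ v r ≤ v k)) := by
        rw [Finset.disjoint_left]
        intro r h1 h2
        have := (Finset.mem_filter.1 h1).2.2
        have := (Finset.mem_filter.1 h2).2.2.1
        omega
      have hsub2 : insert k P ⊆
          (Finset.Icc 1 n).filter (fun r => r ≤ K ∧ m < v r ∧ v r ≤ v k) := by
        intro r hr
        rcases Finset.mem_insert.1 hr with rfl | hr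
        · exact Finset.mem_filter.2 ⟨hkmem, hKk, hmb, le_refl _⟩
        · obtain ⟨h1, h2, h3, h4⟩ := Finset.mem_filter.1 hr
          rw [hprefix r h1 h2] at h3 h4
          exact Finset.mem_filter.2 ⟨h1, by omega, h3, h4⟩
      have hkP : k ∉ P := by simp [hP]
      have hc2 : P.card + 1 ≤
          ((Finset.Icc 1 n).filter (fun r => r ≤ K ∧ m < v r ∧ v r ≤ v k)).card := by
        have := Finset.card_le_card hsub2
        rw [Finset.card_insert_of_notMem hkP] at this
        omega
      unfold cnt
      rw [hsplit, Finset.card_union_of_disjoint hdisj]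
      omega
    have := hdom K (v k)
    omega
  omega

lemma bruhat_of_dominance {n : ℕ} {u v : Equiv.Perm ℕ} (hu : IsPermOn n u) (hv : IsPermOn n v)
    (hdom : ∀ K m, cnt n v K m ≤ cnt n u K m) : BruhatLE n u v := by
  have main : ∀ d : ℕ, ∀ u : Equiv.Perm ℕ, IsPermOn n u → n * n ≤ invNum n u + d →
      (∀ K m, cnt n v K m ≤ cnt n u K m) → BruhatLE n u v := by
    intro d
    induction d with
    | zero =>
      intro u hu hd hdom
      by_cases hne : u = v
      · exact hne ▸ Relation.ReflTransGen.refl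
      · obtain ⟨k, l, hk1, hkl, hln, hlt, hperm, hdom'⟩ := exists_step hu hv hdom hne
        have := invNum_le_sq n (u * Equiv.swap k l)
        omega
    | succ d ih =>
      intro u hu hd hdom
      by_cases hne : u = v
      · exact hne ▸ Relation.ReflTransGen.refl
      · obtain ⟨k, l, hk1, hkl, hln, hlt, hperm, hdom'⟩ := exists_step hu hv hdom hne
        have hrec := ih (u * Equiv.swap k l) hperm (by omega) hdom'
        exact Relation.ReflTransGen.head ⟨hlt, k, l, hk1, hkl, hln, rfl⟩ hrec
  exact main (n * n) u hu (by omega) hdom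

-- ### consequences of MinReps
lemma minreps_mono {n i : ℕ} {w : Equiv.Perm ℕ} (hw : IsPermOn n w)
    (hw' : MinReps n {i - 2, i - 1, i} w) (hi : 3 ≤ i) :
    ∀ a b, i < a → a < b → b ≤ n → w⁻¹ a < w⁻¹ b := by
  have hsingle : ∀ e, i < e → e + 1 ≤ n → w⁻¹ e < w⁻¹ (e + 1) := by
    intro e he hen
    have hE : e ∉ ({i - 2, i - 1, i} : Set ℕ) := by
      simp only [Set.mem_insert_iff, Set.mem_singleton_iff]
      push_neg
      omega
    have h1 := hw' e (by omega) (by omega) hE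
    by_contra hcon
    push_neg at hcon
    have hne : w⁻¹ e ≠ w⁻¹ (e + 1) := fun hc => by
      have := w⁻¹.injective hc; omega
    have hlt : w⁻¹ (e + 1) < w⁻¹ e := by omega
    exact absurd (invNum_lmul_lt hw (by omega) hen hlt) (by omega)
  intro a b ha hab hb
  induction b with
  | zero => omega
  | succ b ihb =>
    rcases lt_trichotomy a b with h1 | h1 | h1
    · exact lt_trans (ihb (by omega) (by omega)) (hsingle b (by omega) hb)
    · rw [← h1]; exact hsingle a ha (by omega)
    · omega

-- ### initial segment lemma
lemma initseg {n i : ℕ} (S : Finset ℕ) (hS : S ⊆ Finset.Ioc i n)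
    (hd : ∀ z ∈ S, ∀ z', i < z' → z' < z → z' ∈ S) : S = Finset.Ioc i (i + S.card) := by
  have h1 : S ⊆ Finset.Ioc i (i + S.card) := by
    intro z hz
    have hz1 := Finset.mem_Ioc.1 (hS hz)
    refine Finset.mem_Ioc.2 ⟨hz1.1, ?_⟩
    by_contra hcon
    push_neg at hcon
    have hsub : insert z (Finset.Ioc i (z - 1)) ⊆ S := by
      intro z' hz'
      rcases Finset.mem_insert.1 hz' with rfl | hz'
      · exact hz
      · have := Finset.mem_Ioc.1 hz'
        exact hd z hz z' this.1 (by omega)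
    have hc := Finset.card_le_card hsub
    rw [Finset.card_insert_of_notMem (by simp only [Finset.mem_Ioc]; omega)] at hc
    rw [Nat.card_Ioc] at hc
    omega
  apply Finset.eq_of_subset_of_card_le h1
  rw [Nat.card_Ioc]
  omega

-- ### value-set structure for minimal coset representatives
lemma valset_eq {n i K : ℕ} {w : Equiv.Perm ℕ} (hw : IsPermOn n w)
    (hmono : ∀ a b, i < a → a < b → b ≤ n → w⁻¹ a < w⁻¹ b) (hK : K ≤ n) :
    ((Finset.Icc 1 K).filter (fun r => i < w r)).image w
      = Finset.Ioc i (i + ((Finset.Icc 1 K).filter (fun r => i < w r)).card) := by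
  set T := (Finset.Icc 1 K).filter (fun r => i < w r) with hT
  have hcard : (T.image w).card = T.card := Finset.card_image_of_injective _ w.injective
  rw [← hcard]
  apply initseg
  · intro z hz
    obtain ⟨r, hr, rfl⟩ := Finset.mem_image.1 hz
    obtain ⟨hr1, hr2⟩ := Finset.mem_filter.1 hr
    have hrn : r ∈ Finset.Icc 1 n := by
      have := Finset.mem_Icc.1 hr1; exact Finset.mem_Icc.2 ⟨this.1, by omega⟩
    have := Finset.mem_Icc.1 (permOn_apply_mem hw hrn)
    exact Finset.mem_Ioc.2 ⟨hr2, this.2⟩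
  · intro z hz z' hz'1 hz'2
    obtain ⟨r, hr, rfl⟩ := Finset.mem_image.1 hz
    obtain ⟨hr1, hr2⟩ := Finset.mem_filter.1 hr
    have hrn : r ∈ Finset.Icc 1 n := by
      have := Finset.mem_Icc.1 hr1; exact Finset.mem_Icc.2 ⟨this.1, by omega⟩
    have hwrn : w r ≤ n := (Finset.mem_Icc.1 (permOn_apply_mem hw hrn)).2
    have hlt : w⁻¹ z' < w⁻¹ (w r) := hmono z' (w r) hz'1 hz'2 hwrn
    rw [w.inv_apply_self] at hlt
    have hz'mem : z' ∈ Finset.Icc 1 n := Finset.mem_Icc.2 ⟨by omega, by omega⟩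
    have hz'pos : 1 ≤ w⁻¹ z' := (Finset.mem_Icc.1 (permOn_apply_mem (permOn_inv hw) hz'mem)).1
    refine Finset.mem_image.2 ⟨w⁻¹ z', Finset.mem_filter.2 ⟨?_, ?_⟩, w.apply_inv_self z'⟩
    · refine Finset.mem_Icc.2 ⟨hz'pos, ?_⟩
      have := Finset.mem_Icc.1 hr1
      omega
    · rw [w.apply_inv_self]; exact hz'1

-- cnt formula above threshold i
lemma cnt_above {n i K : ℕ} {w : Equiv.Perm ℕ} (hw : IsPermOn n w)
    (hmono : ∀ a b, i < a → a < b → b ≤ n → w⁻¹ a < w⁻¹ b) (hK : K ≤ n) {m : ℕ} (hm : i ≤ m) :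
    cnt n w K m = cnt n w K i +
      (min (i + ((Finset.Icc 1 K).filter (fun r => i < w r)).card) m - i) := by
  set T := (Finset.Icc 1 K).filter (fun r => i < w r) with hT
  have hval := valset_eq hw hmono hK
  rw [← hT] at hval
  rw [cnt_restrict w m hK, cnt_restrict w i hK]
  have hsplit : (Finset.Icc 1 K).filter (fun r => w r ≤ m) =
      (Finset.Icc 1 K).filter (fun r => w r ≤ i) ∪ T.filter (fun r => w r ≤ m) := by
    ext r
    simp only [hT, Finset.mem_union, Finset.mem_filter]
    constructor
    · rintro ⟨h1, h2⟩
      rcases le_or_gt (w r) i with h3 | h3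
      · exact Or.inl ⟨h1, h3⟩
      · exact Or.inr ⟨⟨h1, h3⟩, h2⟩
    · rintro (⟨h1, h2⟩ | ⟨⟨h1, h2⟩, h3⟩)
      · exact ⟨h1, by omega⟩
      · exact ⟨h1, h3⟩
  have hdisj : Disjoint ((Finset.Icc 1 K).filter (fun r => w r ≤ i))
      (T.filter (fun r => w r ≤ m)) := by
    rw [Finset.disjoint_left]
    intro r h1 h2
    have := (Finset.mem_filter.1 h1).2
    have := (Finset.mem_filter.1 (Finset.mem_filter.1 h2).1).2
    omega
  rw [hsplit, Finset.card_union_of_disjoint hdisj]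
  congr 1
  -- card of T.filter (w r ≤ m) = min (i + T.card) m - i
  have himg : (T.filter (fun r => w r ≤ m)).image w = (T.image w).filter (fun z => z ≤ m) := by
    ext z
    simp only [Finset.mem_image, Finset.mem_filter]
    constructor
    · rintro ⟨r, ⟨hr1, hr2⟩, rfl⟩
      exact ⟨⟨r, hr1, rfl⟩, hr2⟩
    · rintro ⟨⟨r, hr1, rfl⟩, hz⟩
      exact ⟨r, ⟨hr1, hz⟩, rfl⟩
  have hc : (T.filter (fun r => w r ≤ m)).card = ((T.image w).filter (fun z => z ≤ m)).card := by
    rw [← himg, Finset.card_image_of_injective _ w.injective]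
  rw [hc, hval]
  have : (Finset.Ioc i (i + T.card)).filter (fun z => z ≤ m) =
      Finset.Ioc i (min (i + T.card) m) := by
    ext z
    simp only [Finset.mem_filter, Finset.mem_Ioc, le_min_iff]
    omega
  rw [this, Nat.card_Ioc]

-- value at the last relevant position
lemma val_last {n i K : ℕ} {w : Equiv.Perm ℕ} (hw : IsPermOn n w)
    (hmono : ∀ a b, i < a → a < b → b ≤ n → w⁻¹ a < w⁻¹ b) (hK1 : 1 ≤ K) (hK : K ≤ n)
    (hval : i < w K) :
    w K = i + ((Finset.Icc 1 K).filter (fun r => i < w r)).card := by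
  set T := (Finset.Icc 1 K).filter (fun r => i < w r) with hT
  have hval2 := valset_eq hw hmono hK
  rw [← hT] at hval2
  have hKT : K ∈ T := Finset.mem_filter.2 ⟨Finset.mem_Icc.2 ⟨hK1, le_refl _⟩, hval⟩
  have h1 : w K ∈ T.image w := Finset.mem_image.2 ⟨K, hKT, rfl⟩
  rw [hval2] at h1
  have h2 := Finset.mem_Ioc.1 h1
  -- the other direction: i + T.card ∈ image, so its preimage position ≤ K forces value ≤ w K
  have h3 : i + T.card ∈ T.image w := by
    rw [hval2]
    refine Finset.mem_Ioc.2 ⟨?_, le_refl _⟩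
    have : 0 < T.card := Finset.card_pos.2 ⟨K, hKT⟩
    omega
  obtain ⟨r, hr, hr2⟩ := Finset.mem_image.1 h3
  obtain ⟨hr3, hr4⟩ := Finset.mem_filter.1 hr
  rcases le_or_gt (w r) (w K) with h4 | h4
  · omega
  · exfalso
    have hrn : r ∈ Finset.Icc 1 n := by
      have := Finset.mem_Icc.1 hr3; exact Finset.mem_Icc.2 ⟨this.1, by omega⟩
    have hwrn : w r ≤ n := (Finset.mem_Icc.1 (permOn_apply_mem hw hrn)).2
    have h5 := hmono (w K) (w r) hval h4 hwrn
    rw [w.inv_apply_self, w.inv_apply_self] at h5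
    have := (Finset.mem_Icc.1 hr3).2
    omega

lemma posLT_eq_cnt {n m K : ℕ} {w : Equiv.Perm ℕ} (hw : IsPermOn n w) :
    posLT n m (K + 1) w = cnt n w K m := by
  unfold posLT cnt
  congr 1
  apply Finset.filter_congr
  intro r hr
  have h1 := Finset.mem_Icc.1 (permOn_apply_mem hw hr)
  simp only [Finset.mem_Icc]
  constructor
  · rintro ⟨a, b, c⟩; exact ⟨by omega, c⟩
  · rintro ⟨a, c⟩; exact ⟨by omega, by omega, c⟩

/-- Key claim: if `s_j` is a right descent of `v` with `v j > i`, `v (j+1) = i`,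
`s_j` is not a right descent of `u`, `u j = i`, and `u s_j ≰ v s_j` in the Bruhat
order, then `b_(3,j+1)(u,v) = 1`. -/
theorem key_claim_b3 (n i j : ℕ) (hi1 : 3 ≤ i) (hi2 : i ≤ n - 1)
    (hj1 : 1 ≤ j) (hj2 : j ≤ n - 1)
    (u v : Equiv.Perm ℕ) (hu : IsPermOn n u) (hv : IsPermOn n v)
    (hu' : MinReps n {i - 2, i - 1, i} u) (hv' : MinReps n {i - 2, i - 1, i} v)
    (huv : BruhatLE n u v)
    (hvdesc : v (j + 1) < v j) (hvj : i < v j) (hvj1 : v (j + 1) = i)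
    (hudesc : u j < u (j + 1)) (huj : u j = i)
    (hns : ¬ BruhatLE n (u * sAdj j) (v * sAdj j)) :
    (posLT n i (j + 1) u : ℤ) - posLT n i (j + 1) v = 1 := by
  have hn2 : 2 ≤ n := by omega
  have hjn : j ≤ n := by omega
  have hj1n : j + 1 ≤ n := by omega
  have hjmem : j ∈ Finset.Icc 1 n := Finset.mem_Icc.2 ⟨hj1, hjn⟩
  have hj1mem : j + 1 ∈ Finset.Icc 1 n := Finset.mem_Icc.2 ⟨by omega, hj1n⟩
  have humono := minreps_mono hu hu' hi1
  have hvmono := minreps_mono hv hv' hi1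
  have hE := dominance_of_bruhat huv
  have hiu1 : i < u (j + 1) := by omega
  set tu := ((Finset.Icc 1 j).filter (fun r => i < u r)).card with htu
  set tv := ((Finset.Icc 1 j).filter (fun r => i < v r)).card with htv
  -- cardinality partitions
  have hAtu : cnt n u j i + tu = j := by
    rw [cnt_restrict u i hjn, htu]
    have hp := Finset.card_filter_add_card_filter_not
      (s := Finset.Icc 1 j) (p := fun r => u r ≤ i)
    have hneg : (Finset.Icc 1 j).filter (fun r => ¬ u r ≤ i)
        = (Finset.Icc 1 j).filter (fun r => i < u r) := by
      simp only [not_le]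
    rw [hneg] at hp
    rw [hp, Nat.card_Icc]
    omega
  have hBtv : cnt n v j i + tv = j := by
    rw [cnt_restrict v i hjn, htv]
    have hp := Finset.card_filter_add_card_filter_not
      (s := Finset.Icc 1 j) (p := fun r => v r ≤ i)
    have hneg : (Finset.Icc 1 j).filter (fun r => ¬ v r ≤ i)
        = (Finset.Icc 1 j).filter (fun r => i < v r) := by
      simp only [not_le]
    rw [hneg] at hp
    rw [hp, Nat.card_Icc]
    omega
  -- exact boundary values
  have hv1 : v j = i + tv := val_last hv hvmono hj1 hjn hvj
  have hu1 : u (j + 1) = i + (tu + 1) := by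
    have h1 := val_last hu humono (by omega : 1 ≤ j + 1) hj1n hiu1
    have hins : Finset.Icc 1 (j + 1) = insert (j + 1) (Finset.Icc 1 j) := by
      ext r; simp only [Finset.mem_insert, Finset.mem_Icc]; omega
    rw [hins, Finset.filter_insert, if_pos hiu1,
      Finset.card_insert_of_notMem (by simp [Finset.mem_Icc])] at h1
    rw [h1, htu]
  -- B + 1 ≤ A
  have hsu := cnt_succ u i hj1n
  have hsv := cnt_succ v i hj1n
  rw [if_neg (by omega : ¬ u (j + 1) ≤ i)] at hsu
  rw [if_pos (by omega : v (j + 1) ≤ i)] at hsv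
  have hE1 := hE (j + 1) i
  have hBA : cnt n v j i + 1 ≤ cnt n u j i := by omega
  -- A ≤ B + 1, using hns via the hard direction
  have hAB : cnt n u j i ≤ cnt n v j i + 1 := by
    by_contra hA2
    push_neg at hA2
    have hdom' : ∀ K m, cnt n (v * Equiv.swap j (j + 1)) K m
        ≤ cnt n (u * Equiv.swap j (j + 1)) K m := by
      intro K m
      rcases lt_or_ge K j with hK | hK
      · rw [cnt_mul_swap_out u m hj1 (by omega) hj1n (Or.inl hK),
          cnt_mul_swap_out v m hj1 (by omega) hj1n (Or.inl hK)]
        exact hE K m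
      rcases le_or_gt (j + 1) K with hK2 | hK2
      · rw [cnt_mul_swap_out u m hj1 (by omega) hj1n (Or.inr hK2),
          cnt_mul_swap_out v m hj1 (by omega) hj1n (Or.inr hK2)]
        exact hE K m
      have hKj : K = j := by omega
      subst hKj
      have e1 := cnt_mul_swap_mid u m hj1 (by omega) hj1n (le_refl K) (by omega)
      have e2 := cnt_mul_swap_mid v m hj1 (by omega) hj1n (le_refl K) (by omega)
      rw [huj] at e1
      rw [hvj1] at e2
      have hEm := hE K m
      by_cases him : i ≤ m
      · have fu : cnt n u K m = cnt n u K i + (min (i + tu) m - i) :=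
          cnt_above hu humono hjn him
        have fv : cnt n v K m = cnt n v K i + (min (i + tv) m - i) :=
          cnt_above hv hvmono hjn him
        rcases le_total (i + tu) m with h1 | h1
        · rw [min_eq_left h1] at fu
          rcases le_total (i + tv) m with h2 | h2
          · rw [min_eq_left h2] at fv
            split_ifs at e1 e2 <;> omega
          · rw [min_eq_right h2] at fv
            split_ifs at e1 e2 <;> omega
        · rw [min_eq_right h1] at fu
          rcases le_total (i + tv) m with h2 | h2
          · rw [min_eq_left h2] at fv
            split_ifs at e1 e2 <;> omega
          · rw [min_eq_right h2] at fv
            split_ifs at e1 e2 <;> omega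
      · push_neg at him
        split_ifs at e1 e2 <;> omega
    exact hns (bruhat_of_dominance (permOn_mul hu (permOn_swap hjmem hj1mem))
      (permOn_mul hv (permOn_swap hjmem hj1mem)) hdom')
  rw [posLT_eq_cnt hu, posLT_eq_cnt hv]
  omega
end
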